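/- arXiv:1604.05348 — 15 statements merged into one kernel-verified Lean document; each statement's English description precedes it below -/
import Mathlib

section
/- Let D be an integral domain. Then the polynomial ring D[X] is an IDF domain if and only if D is both an IDF domain and MCD-finite. -/
set_option linter.unusedSectionVars false
set_option maxHeartbeats 1000000

/-- An integral domain is an *IDF domain* if every nonzero element has only finitely
many irreducible divisors up to associates. -/
def IsIDFDomain (D : Type*) [CommMonoidWithZero D] : Prop :=
  ∀ a : D, a ≠ 0 → (Associates.mk '' {p : D | Irreducible p ∧ p ∣ a}).Finite

/-- `c` is a *maximal common divisor* (MCD) of the set `T`: it is a common divisor of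
`T` and every common divisor of `T` divisible by `c` is an associate of `c`. -/
def IsMCD {D : Type*} [CommMonoidWithZero D] (T : Set D) (c : D) : Prop :=
  (∀ t ∈ T, c ∣ t) ∧ ∀ d : D, (∀ t ∈ T, d ∣ t) → c ∣ d → Associated c d

/-- A domain is *MCD-finite* if every finite subset of its nonzero elements has only
finitely many maximal common divisors up to associates. -/
def MCDFinite (D : Type*) [CommMonoidWithZero D] : Prop :=
  ∀ T : Set D, T.Finite → (∀ t ∈ T, t ≠ 0) →
    (Associates.mk '' {c : D | IsMCD T c}).Finite

open Polynomial

section IDFAux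

/-- The set of submultisets of a multiset is finite. -/
theorem IDFAux.multiset_le_finite {β : Type*} (t : Multiset β) :
    {m : Multiset β | m ≤ t}.Finite := by
  classical
  apply Set.Finite.subset t.powerset.toFinset.finite_toSet
  intro m hm
  simp only [Finset.mem_coe, Multiset.mem_toFinset, Multiset.mem_powerset]
  exact hm

/-- In a unique factorization monoid, a nonzero element has only finitely many
divisors up to associates. -/
theorem IDFAux.finite_le_associates {α : Type*} [CommMonoidWithZero α]
    [UniqueFactorizationMonoid α] {a : Associates α} (h : a ≠ 0) :
    {y : Associates α | y ≤ a}.Finite := by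
  classical
  obtain ⟨s₀, hs₀⟩ := Associates.factors_eq_some_iff_ne_zero.mpr h
  have hinj : Set.InjOn Associates.factors {y : Associates α | y ≤ a} :=
    fun x _ y _ hxy => Associates.eq_of_factors_eq_factors hxy
  apply Set.Finite.of_finite_image _ hinj
  apply Set.Finite.subset (Set.Finite.image
    (fun m : Multiset {p : Associates α // Irreducible p} => (m : Associates.FactorSet α))
    (IDFAux.multiset_le_finite s₀))
  rintro _ ⟨y, hy, rfl⟩
  have hy0 : y ≠ 0 := by
    rintro rfl
    obtain ⟨c, hc⟩ := hy
    exact h (by rw [hc, zero_mul])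
  obtain ⟨m, hm⟩ := Associates.factors_eq_some_iff_ne_zero.mpr hy0
  have hle := Associates.factors_mono hy
  rw [hm, hs₀] at hle
  exact ⟨m, by exact_mod_cast hle, hm.symm⟩

/-- An MCD is preserved under association. -/
theorem IDFAux.isMCD_of_assoc {D : Type*} [CommMonoidWithZero D] {T : Set D} {c c' : D}
    (h : Associated c c') (hc : IsMCD T c) : IsMCD T c' := by
  refine ⟨fun t ht => h.symm.dvd.trans (hc.1 t ht), fun d hd hcd => ?_⟩
  exact h.symm.trans (hc.2 d hd (h.dvd.trans hcd))

variable {D : Type*} [CommRing D] [IsDomain D]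

theorem IDFAux.assocC_of_assoc {a b : D} (h : Associated a b) :
    Associated (Polynomial.C a) (Polynomial.C b) :=
  h.map (Polynomial.C : D →+* D[X]).toMonoidHom

theorem IDFAux.assoc_of_assocC {a b : D} (h : Associated (Polynomial.C a) (Polynomial.C b)) :
    Associated a b := by
  obtain ⟨u, hu⟩ := h
  obtain ⟨r, hr, hCr⟩ := Polynomial.isUnit_iff.mp u.isUnit
  refine ⟨hr.unit, ?_⟩
  have h1 : Polynomial.C (a * r) = Polynomial.C b := by
    rw [map_mul, hCr]; exact hu
  have h2 := Polynomial.C_injective h1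
  rw [IsUnit.unit_spec]; exact h2

theorem IDFAux.irreducible_C_iff {a : D} :
    Irreducible (Polynomial.C a) ↔ Irreducible a := by
  constructor
  · intro h
    refine ⟨fun hu => h.not_isUnit (Polynomial.isUnit_C.mpr hu), fun x y hxy => ?_⟩
    have := h.isUnit_or_isUnit (a := Polynomial.C x) (b := Polynomial.C y)
      (by rw [hxy, map_mul])
    simpa [Polynomial.isUnit_C] using this
  · intro h
    refine ⟨fun hu => h.not_isUnit (Polynomial.isUnit_C.mp hu), fun u v huv => ?_⟩
    have ha : a ≠ 0 := h.ne_zero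
    have hC : Polynomial.C a ≠ 0 := by simpa using ha
    have hu0 : u ≠ 0 := by rintro rfl; rw [zero_mul] at huv; exact hC huv
    have hv0 : v ≠ 0 := by rintro rfl; rw [mul_zero] at huv; exact hC huv
    have hdeg : u.natDegree = 0 ∧ v.natDegree = 0 := by
      have := Polynomial.natDegree_mul hu0 hv0
      rw [← huv, Polynomial.natDegree_C] at this
      omega
    obtain ⟨hu, hv⟩ := hdeg
    have hueq := Polynomial.eq_C_of_natDegree_eq_zero hu
    have hveq := Polynomial.eq_C_of_natDegree_eq_zero hv
    have : a = u.coeff 0 * v.coeff 0 := by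
      apply Polynomial.C_injective
      rw [map_mul, ← hueq, ← hveq, ← huv]
    rcases h.isUnit_or_isUnit this with h1 | h1
    · exact Or.inl (by rw [hueq]; exact Polynomial.isUnit_C.mpr h1)
    · exact Or.inr (by rw [hveq]; exact Polynomial.isUnit_C.mpr h1)

open Classical in
/-- The cofactor of a divisor: if `g ∣ f` then `f = g * cofac f g`. -/
noncomputable def IDFAux.cofac (f g : D[X]) : D[X] :=
  if h : g ∣ f then h.choose else 0

theorem IDFAux.cofac_spec {f g : D[X]} (h : g ∣ f) : f = g * IDFAux.cofac f g := by
  classical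
  rw [IDFAux.cofac]
  rw [dif_pos h]
  exact h.choose_spec

theorem IDFAux.natDegree_eq_of_assoc {p q : D[X]} (h : Associated p q) :
    p.natDegree = q.natDegree := by
  rcases eq_or_ne p 0 with rfl | hp
  · rw [(associated_zero_iff_eq_zero q).mp h.symm]
  obtain ⟨u, hu⟩ := h
  obtain ⟨r, hr, hCr⟩ := Polynomial.isUnit_iff.mp u.isUnit
  have hr0 : r ≠ 0 := hr.ne_zero
  rw [← hu, ← hCr, Polynomial.natDegree_mul hp (by simpa using hr0),
    Polynomial.natDegree_C, add_zero]

/-- A polynomial without nonunit constant divisors is, up to a unit, a product of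
at most `natDegree` many irreducible polynomials. -/
theorem IDFAux.exists_irreducible_multiset (g : D[X]) (hg : g ≠ 0)
    (hprim : ∀ d : D, Polynomial.C d ∣ g → IsUnit d) :
    ∃ s : Multiset D[X], (∀ q ∈ s, Irreducible q) ∧ Associated s.prod g ∧
      Multiset.card s ≤ g.natDegree := by
  suffices H : ∀ (n : ℕ) (g : D[X]), g.natDegree ≤ n → g ≠ 0 →
      (∀ d : D, Polynomial.C d ∣ g → IsUnit d) →
      ∃ s : Multiset D[X], (∀ q ∈ s, Irreducible q) ∧ Associated s.prod g ∧
        Multiset.card s ≤ g.natDegree from H g.natDegree g le_rfl hg hprim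
  intro n
  induction n with
  | zero =>
    intro g hdeg hg hprim
    have hgu : IsUnit g := by
      have := Polynomial.eq_C_of_natDegree_eq_zero (Nat.le_zero.mp hdeg)
      exact this ▸ Polynomial.isUnit_C.mpr (hprim _ (by rw [← this]))
    refine ⟨0, by simp, ?_, by simp⟩
    rw [Multiset.prod_zero]
    exact (associated_one_iff_isUnit.mpr hgu).symm
  | succ n ih =>
    intro g hdeg hg hprim
    by_cases hgu : IsUnit g
    · refine ⟨0, by simp, ?_, by simp⟩
      rw [Multiset.prod_zero]
      exact (associated_one_iff_isUnit.mpr hgu).symm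
    have hdpos : 0 < g.natDegree := by
      rcases Nat.eq_zero_or_pos g.natDegree with h0 | h
      · exact absurd (Polynomial.eq_C_of_natDegree_eq_zero h0 ▸
          Polynomial.isUnit_C.mpr (hprim _ (by rw [← Polynomial.eq_C_of_natDegree_eq_zero h0])))
          hgu
      · exact h
    by_cases hgi : Irreducible g
    · exact ⟨{g}, by simpa using hgi, by rw [Multiset.prod_singleton], by rw [Multiset.card_singleton]; exact hdpos⟩
    · rw [irreducible_iff] at hgi
      push_neg at hgi
      obtain ⟨u, v, huv, hu, hv⟩ := hgi hgu
      have hu0 : u ≠ 0 := by rintro rfl; exact hg (by rw [huv, zero_mul])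
      have hv0 : v ≠ 0 := by rintro rfl; exact hg (by rw [huv, mul_zero])
      have hmul : g.natDegree = u.natDegree + v.natDegree := by
        rw [huv]; exact Polynomial.natDegree_mul hu0 hv0
      have hupos : 0 < u.natDegree := by
        rcases Nat.eq_zero_or_pos u.natDegree with h0 | h
        · exact absurd (Polynomial.eq_C_of_natDegree_eq_zero h0 ▸
            Polynomial.isUnit_C.mpr (hprim _ (by
              rw [← Polynomial.eq_C_of_natDegree_eq_zero h0]; exact ⟨v, huv⟩))) hu
        · exact h
      have hvpos : 0 < v.natDegree := by
        rcases Nat.eq_zero_or_pos v.natDegree with h0 | h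
        · exact absurd (Polynomial.eq_C_of_natDegree_eq_zero h0 ▸
            Polynomial.isUnit_C.mpr (hprim _ (by
              rw [← Polynomial.eq_C_of_natDegree_eq_zero h0]
              exact ⟨u, by rw [huv, mul_comm]⟩))) hv
        · exact h
      have hprimu : ∀ d : D, Polynomial.C d ∣ u → IsUnit d :=
        fun d hd => hprim d (hd.trans ⟨v, huv⟩)
      have hprimv : ∀ d : D, Polynomial.C d ∣ v → IsUnit d :=
        fun d hd => hprim d (hd.trans ⟨u, by rw [huv, mul_comm]⟩)
      obtain ⟨su, hsu, hsup, hsuc⟩ := ih u (by omega) hu0 hprimu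
      obtain ⟨sv, hsv, hsvp, hsvc⟩ := ih v (by omega) hv0 hprimv
      refine ⟨su + sv, ?_, ?_, ?_⟩
      · intro q hq
        rcases Multiset.mem_add.mp hq with h | h
        · exact hsu q h
        · exact hsv q h
      · rw [Multiset.prod_add, huv]
        exact hsup.mul_mul hsvp
      · rw [Multiset.card_add, hmul]; omega

theorem IDFAux.coeff_sum_C_mul_X_pow (a : ℕ → D) (n k : ℕ) :
    (∑ i ∈ Finset.range n, Polynomial.C (a i) * X ^ i).coeff k =
      if k < n then a k else 0 := by
  rw [Polynomial.finset_sum_coeff]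
  simp only [Polynomial.coeff_C_mul, Polynomial.coeff_X_pow, mul_ite, mul_one, mul_zero]
  simp_rw [eq_comm (a := k)]
  rw [Finset.sum_ite_eq' (Finset.range n) k a]
  simp [Finset.mem_range]

/-- The map on associate classes induced by `C`. -/
noncomputable def IDFAux.PhiC (D : Type*) [CommRing D] [IsDomain D] :
    Associates D → Associates D[X] :=
  fun x => Associates.mk (Polynomial.C (Quot.out x))

theorem IDFAux.PhiC_mk (a : D) :
    IDFAux.PhiC D (Associates.mk a) = Associates.mk (Polynomial.C a) :=
  Associates.mk_eq_mk_iff_associated.mpr (IDFAux.assocC_of_assoc (Associates.mk_quot_out a))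

theorem IDFAux.PhiC_inj : Function.Injective (IDFAux.PhiC D) := by
  intro x y hxy
  have h := IDFAux.assoc_of_assocC (Associates.mk_eq_mk_iff_associated.mp hxy)
  rw [← Associates.quot_out x, ← Associates.quot_out y]
  exact Associates.mk_eq_mk_iff_associated.mpr h

/-- An irreducible polynomial of positive degree has no nonunit constant divisors. -/
theorem IDFAux.prim_of_irred {g : D[X]} (hgi : Irreducible g) (hpos : 0 < g.natDegree) :
    ∀ d : D, Polynomial.C d ∣ g → IsUnit d := by
  intro d hd
  obtain ⟨g', hg'⟩ := hd
  rcases hgi.isUnit_or_isUnit hg' with h | h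
  · exact Polynomial.isUnit_C.mp h
  · exfalso
    have hg0 : g ≠ 0 := hgi.ne_zero
    have hd0 : (Polynomial.C d : D[X]) ≠ 0 := by
      rintro h0; rw [h0, zero_mul] at hg'; exact hg0 hg'
    have hg'0 : g' ≠ 0 := by
      rintro rfl; rw [mul_zero] at hg'; exact hg0 hg'
    have hnd := Polynomial.natDegree_mul hd0 hg'0
    rw [← hg', Polynomial.natDegree_C, Polynomial.natDegree_eq_zero_of_isUnit h] at hnd
    omega

end IDFAux

section Forward

variable {D : Type*} [CommRing D] [IsDomain D]

theorem IDFAux.fwd_idf (h : IsIDFDomain (Polynomial D)) : IsIDFDomain D := by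
  intro a ha
  have hCa : (Polynomial.C a : D[X]) ≠ 0 := by simpa using ha
  have hfin := h (Polynomial.C a) hCa
  apply Set.Finite.of_finite_image (f := IDFAux.PhiC D) _ (IDFAux.PhiC_inj.injOn)
  apply hfin.subset
  rintro _ ⟨_, ⟨p, ⟨hpi, hpd⟩, rfl⟩, rfl⟩
  rw [IDFAux.PhiC_mk]
  exact ⟨Polynomial.C p, ⟨IDFAux.irreducible_C_iff.mpr hpi, map_dvd Polynomial.C hpd⟩, rfl⟩

theorem IDFAux.fwd_mcd (hIDF : IsIDFDomain (Polynomial D)) : MCDFinite D := by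
  classical
  intro T hTfin hT0
  rcases T.eq_empty_or_nonempty with rfl | hTne
  · have hsub : {c : D | IsMCD ∅ c} ⊆ {0} := by
      intro c hc
      have h1 := hc.2 0 (by simp) (dvd_zero c)
      have := (associated_zero_iff_eq_zero c).mp h1
      simpa using this
    exact ((Set.finite_singleton 0).subset hsub).image _
  · set l : List D := hTfin.toFinset.toList with hl
    have hmem : ∀ t : D, t ∈ T ↔ t ∈ l := by
      intro t; rw [hl, Finset.mem_toList, Set.Finite.mem_toFinset]
    have hlne : l ≠ [] := by
      obtain ⟨t, ht⟩ := hTne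
      intro h0
      have := (hmem t).mp ht
      rw [h0] at this
      simp at this
    set n := l.length with hn'
    have hn : 0 < n := List.length_pos_iff.mpr hlne
    set a : ℕ → D := fun i => l.getD i 0 with ha
    have hamem : ∀ i, i < n → a i ∈ T := by
      intro i hi
      rw [hmem, ha]
      simp only []
      rw [List.getD_eq_getElem l 0 hi]
      exact List.getElem_mem hi
    have hsurj : ∀ t ∈ T, ∃ i, i < n ∧ a i = t := by
      intro t ht
      obtain ⟨i, hi, hgt⟩ := List.mem_iff_getElem.mp ((hmem t).mp ht)
      exact ⟨i, hi, by rw [ha]; simp only []; rw [List.getD_eq_getElem l 0 hi]; exact hgt⟩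
    set f : D[X] := ∑ i ∈ Finset.range n, Polynomial.C (a i) * X ^ i with hf
    have hcoeff : ∀ k, f.coeff k = if k < n then a k else 0 := fun k =>
      IDFAux.coeff_sum_C_mul_X_pow a n k
    have hf0 : f ≠ 0 := by
      intro h0
      have h1 := hcoeff 0
      rw [h0, Polynomial.coeff_zero, if_pos hn] at h1
      exact (hT0 _ (hamem 0 hn)) h1.symm
    have hcd : ∀ c : D, (∀ t ∈ T, c ∣ t) ↔ Polynomial.C c ∣ f := by
      intro c
      rw [Polynomial.C_dvd_iff_dvd_coeff]
      constructor
      · intro h i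
        rw [hcoeff i]
        split
        · exact h _ (hamem i ‹_›)
        · exact dvd_zero c
      · intro h t ht
        obtain ⟨i, hi, rfl⟩ := hsurj t ht
        have := h i
        rwa [hcoeff i, if_pos hi] at this
    have hfinF := hIDF f hf0
    set SF : Multiset (Associates (Polynomial D)) := hfinF.toFinset.val with hSF
    set N := f.natDegree with hN
    set PF : Set (Associates (Polynomial D)) :=
      (fun m : Multiset (Associates (Polynomial D)) => m.prod) '' {m | m ≤ N • SF} with hPF'
    have hPFfin : PF.Finite := (IDFAux.multiset_le_finite _).image _
    have hkey : ∀ c : D, IsMCD T c →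
        Associates.mk (IDFAux.cofac f (Polynomial.C c)) ∈ PF := by
      intro c hc
      have hc0 : c ≠ 0 := by
        obtain ⟨t, ht⟩ := hTne
        rintro rfl
        exact hT0 t ht (zero_dvd_iff.mp (hc.1 t ht))
      have hdvd : Polynomial.C c ∣ f := (hcd c).mp hc.1
      set g := IDFAux.cofac f (Polynomial.C c) with hg
      have hfg : f = Polynomial.C c * g := IDFAux.cofac_spec hdvd
      have hg0 : g ≠ 0 := by rintro h0; rw [h0, mul_zero] at hfg; exact hf0 hfg
      have hprim : ∀ d : D, Polynomial.C d ∣ g → IsUnit d := by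
        intro d hd
        have hCd : Polynomial.C (c * d) ∣ f := by
          rw [map_mul, hfg]; exact mul_dvd_mul_left _ hd
        have hcdvd : ∀ t ∈ T, c * d ∣ t := (hcd (c * d)).mpr hCd
        obtain ⟨u, hu⟩ := hc.2 (c * d) hcdvd (Dvd.intro d rfl)
        have hud : (u : D) = d := mul_left_cancel₀ hc0 hu
        rw [← hud]; exact u.isUnit
      obtain ⟨s, hsirr, hsassoc, hscard⟩ := IDFAux.exists_irreducible_multiset g hg0 hprim
      have hdegg : g.natDegree ≤ N := by
        rw [hN, hfg, Polynomial.natDegree_mul (by simpa using hc0) hg0, Polynomial.natDegree_C]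
        omega
      refine ⟨s.map Associates.mk, ?_, ?_⟩
      · rw [Set.mem_setOf_eq, Multiset.le_iff_count]
        intro x
        rw [Multiset.count_nsmul]
        by_cases hx : x ∈ s.map Associates.mk
        · obtain ⟨q, hqs, rfl⟩ := Multiset.mem_map.mp hx
          have hqdvd : q ∣ f :=
            ((Multiset.dvd_prod hqs).trans hsassoc.dvd).trans ⟨Polynomial.C c, by
              rw [hfg, mul_comm]⟩
          have hmemSF : Associates.mk q ∈ SF := by
            rw [hSF, Finset.mem_val, Set.Finite.mem_toFinset]
            exact ⟨q, ⟨hsirr q hqs, hqdvd⟩, rfl⟩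
          have hpos : 0 < Multiset.count (Associates.mk q) SF := Multiset.count_pos.mpr hmemSF
          calc Multiset.count (Associates.mk q) (s.map Associates.mk)
              ≤ Multiset.card (s.map Associates.mk) := Multiset.count_le_card _ _
            _ = Multiset.card s := by rw [Multiset.card_map]
            _ ≤ N := le_trans hscard hdegg
            _ ≤ N * Multiset.count (Associates.mk q) SF := Nat.le_mul_of_pos_right N hpos
        · rw [Multiset.count_eq_zero_of_notMem hx]
          exact Nat.zero_le _
      · show Multiset.prod (s.map Associates.mk) = Associates.mk g
        rw [Associates.prod_mk]
        exact Associates.mk_eq_mk_iff_associated.mpr hsassoc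
    set Ψ : Associates D → Associates (Polynomial D) :=
      fun x => Associates.mk (IDFAux.cofac f (Polynomial.C (Quot.out x))) with hΨ
    have houtMCD : ∀ x ∈ Associates.mk '' {c : D | IsMCD T c}, IsMCD T (Quot.out x) := by
      rintro _ ⟨c, hc, rfl⟩
      exact IDFAux.isMCD_of_assoc (Associates.mk_quot_out c).symm hc
    have himg : Ψ '' (Associates.mk '' {c : D | IsMCD T c}) ⊆ PF := by
      rintro _ ⟨x, hx, rfl⟩
      exact hkey _ (houtMCD x hx)
    have hinj : Set.InjOn Ψ (Associates.mk '' {c : D | IsMCD T c}) := by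
      intro x hx y hy hxy
      have hcx := houtMCD x hx
      have hcy := houtMCD y hy
      obtain ⟨u, hu⟩ := Associates.mk_eq_mk_iff_associated.mp hxy
      have hdx : Polynomial.C (Quot.out x) ∣ f := (hcd _).mp hcx.1
      have hdy : Polynomial.C (Quot.out y) ∣ f := (hcd _).mp hcy.1
      have hfx := IDFAux.cofac_spec hdx
      have hfy := IDFAux.cofac_spec hdy
      have hgx0 : IDFAux.cofac f (Polynomial.C (Quot.out x)) ≠ 0 := by
        rintro h0; rw [h0, mul_zero] at hfx; exact hf0 hfx
      have heq : Polynomial.C (Quot.out x) * IDFAux.cofac f (Polynomial.C (Quot.out x)) =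
          (Polynomial.C (Quot.out y) * u) * IDFAux.cofac f (Polynomial.C (Quot.out x)) := by
        calc Polynomial.C (Quot.out x) * IDFAux.cofac f (Polynomial.C (Quot.out x)) = f :=
            hfx.symm
          _ = Polynomial.C (Quot.out y) *
              (IDFAux.cofac f (Polynomial.C (Quot.out x)) * u) := by rw [hu]; exact hfy
          _ = (Polynomial.C (Quot.out y) * u) *
              IDFAux.cofac f (Polynomial.C (Quot.out x)) := by ring
      have h2 : Polynomial.C (Quot.out x) = Polynomial.C (Quot.out y) * u :=
        mul_right_cancel₀ hgx0 heq
      have h3 : Associated (Quot.out y) (Quot.out x) :=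
        IDFAux.assoc_of_assocC ⟨u, h2.symm⟩
      rw [← Associates.quot_out x, ← Associates.quot_out y]
      exact (Associates.mk_eq_mk_iff_associated.mpr h3).symm
    exact Set.Finite.of_finite_image (hPFfin.subset himg) hinj

end Forward

section Backward

variable {D : Type*} [CommRing D] [IsDomain D]

theorem IDFAux.bwd (hIDF : IsIDFDomain D) (hMCD : MCDFinite D) :
    IsIDFDomain (Polynomial D) := by
  classical
  intro f hf
  set K := FractionRing D with hK
  have halginj : Function.Injective (algebraMap D K) := IsFractionRing.injective D K
  have hmapinj : Function.Injective (Polynomial.map (algebraMap D K)) :=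
    Polynomial.map_injective _ halginj
  have hmapassoc : ∀ p q : D[X], Associated p q →
      Associated (p.map (algebraMap D K)) (q.map (algebraMap D K)) := by
    intro p q h
    have := h.map (Polynomial.mapRingHom (algebraMap D K)).toMonoidHom
    simpa using this
  have hsplit : {p : D[X] | Irreducible p ∧ p ∣ f} =
      {p : D[X] | (Irreducible p ∧ p ∣ f) ∧ p.natDegree = 0} ∪
      {p : D[X] | (Irreducible p ∧ p ∣ f) ∧ 0 < p.natDegree} := by
    ext p
    simp only [Set.mem_setOf_eq, Set.mem_union]
    constructor
    · intro hp
      rcases Nat.eq_zero_or_pos p.natDegree with h0 | h0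
      · exact Or.inl ⟨hp, h0⟩
      · exact Or.inr ⟨hp, h0⟩
    · rintro (⟨hp, _⟩ | ⟨hp, _⟩) <;> exact hp
  rw [hsplit, Set.image_union]
  apply Set.Finite.union
  · -- constant irreducible divisors
    have hlc : f.coeff f.natDegree ≠ 0 := by
      rw [← Polynomial.leadingCoeff]
      exact Polynomial.leadingCoeff_ne_zero.mpr hf
    have hfin := (hIDF _ hlc).image (IDFAux.PhiC D)
    apply hfin.subset
    rintro _ ⟨p, ⟨⟨hpi, hpd⟩, hp0⟩, rfl⟩
    have hpC := Polynomial.eq_C_of_natDegree_eq_zero hp0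
    refine ⟨Associates.mk (p.coeff 0), ⟨p.coeff 0, ⟨?_, ?_⟩, rfl⟩, ?_⟩
    · exact IDFAux.irreducible_C_iff.mp (hpC ▸ hpi)
    · exact (Polynomial.C_dvd_iff_dvd_coeff _ f).mp (hpC ▸ hpd) f.natDegree
    · rw [IDFAux.PhiC_mk]
      exact congrArg Associates.mk hpC.symm
  · -- positive degree irreducible divisors
    set A : Set D[X] := {p : D[X] | (Irreducible p ∧ p ∣ f) ∧ 0 < p.natDegree} with hA
    have hMf : f.map (algebraMap D K) ≠ 0 := by
      intro h0
      exact hf (hmapinj (by rw [h0, Polynomial.map_zero]))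
    have hSK := IDFAux.finite_le_associates (Associates.mk_ne_zero.mpr hMf)
    set F : Associates D[X] → Associates (Polynomial K) :=
      fun x => Associates.mk ((Quot.out x).map (algebraMap D K)) with hF
    have hfib : ∀ y : Associates (Polynomial K),
        {x | x ∈ Associates.mk '' A ∧ F x = y}.Finite := by
      intro y
      rcases Set.eq_empty_or_nonempty {x | x ∈ Associates.mk '' A ∧ F x = y} with he | hne
      · rw [he]; exact Set.finite_empty
      obtain ⟨x₀, ⟨⟨g₀, hg₀A, hg₀mk⟩, hF₀⟩⟩ := hne
      obtain ⟨⟨hg₀i, hg₀d⟩, hg₀pos⟩ := hg₀A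
      have hg₀0 : g₀ ≠ 0 := hg₀i.ne_zero
      have houtx₀ : Associated (Quot.out x₀) g₀ := by
        rw [← Associates.mk_eq_mk_iff_associated, Associates.quot_out, ← hg₀mk]
      have hMg₀ : Associates.mk (g₀.map (algebraMap D K)) = y := by
        rw [← hF₀, hF]
        exact (Associates.mk_eq_mk_iff_associated.mpr
          (hmapassoc _ _ houtx₀)).symm
      set q₀ := IDFAux.cofac f g₀ with hq₀
      have hfq₀ : f = g₀ * q₀ := IDFAux.cofac_spec hg₀d
      have hq₀0 : q₀ ≠ 0 := by rintro h0; rw [h0, mul_zero] at hfq₀; exact hf hfq₀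
      set j₀ := q₀.natDegree with hj₀
      have hb₀ : q₀.coeff j₀ ≠ 0 := by
        rw [hj₀, ← Polynomial.leadingCoeff]
        exact Polynomial.leadingCoeff_ne_zero.mpr hq₀0
      set V : Set D := (fun i => g₀.coeff i * q₀.coeff j₀) '' ↑g₀.support with hV
      have hVfin : V.Finite := g₀.support.finite_toSet.image _
      have hV0 : ∀ v ∈ V, v ≠ 0 := by
        rintro _ ⟨i, hi, rfl⟩
        exact mul_ne_zero (Polynomial.mem_support_iff.mp (by exact_mod_cast hi)) hb₀
      have hW := hMCD V hVfin hV0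
      set Ψ : Associates D[X] → Associates D :=
        fun x => Associates.mk ((IDFAux.cofac f (Quot.out x)).coeff j₀) with hΨ
      -- main data for each member of the fiber
      have hmain : ∀ x, (x ∈ Associates.mk '' A ∧ F x = y) →
          (Quot.out x).natDegree ≠ 0 ∧ Irreducible (Quot.out x) ∧ Quot.out x ∣ f ∧
          ∃ μ : K, μ ≠ 0 ∧
            (Quot.out x).map (algebraMap D K) * Polynomial.C μ = g₀.map (algebraMap D K) ∧
            (IDFAux.cofac f (Quot.out x)).map (algebraMap D K) =
              Polynomial.C μ * q₀.map (algebraMap D K) := by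
        rintro x ⟨⟨p, ⟨⟨hpi, hpd⟩, hppos⟩, rfl⟩, hFx⟩
        have houtp : Associated (Quot.out (Associates.mk p)) p := Associates.mk_quot_out p
        have hgi : Irreducible (Quot.out (Associates.mk p)) := houtp.symm.irreducible hpi
        have hgd : Quot.out (Associates.mk p) ∣ f := houtp.dvd.trans hpd
        have hgdeg : (Quot.out (Associates.mk p)).natDegree ≠ 0 := by
          rw [IDFAux.natDegree_eq_of_assoc houtp]; omega
        refine ⟨hgdeg, hgi, hgd, ?_⟩
        have h1 : Associated ((Quot.out (Associates.mk p)).map (algebraMap D K))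
            (g₀.map (algebraMap D K)) := by
          rw [← Associates.mk_eq_mk_iff_associated, hMg₀, ← hFx, hF]
        obtain ⟨U, hU⟩ := h1
        obtain ⟨μ, hμu, hCμ⟩ := Polynomial.isUnit_iff.mp U.isUnit
        refine ⟨μ, hμu.ne_zero, by rw [hCμ]; exact hU, ?_⟩
        have hfq := IDFAux.cofac_spec hgd
        have hg0' : (Quot.out (Associates.mk p)).map (algebraMap D K) ≠ 0 := by
          intro h0
          exact hgi.ne_zero (hmapinj (by rw [h0, Polynomial.map_zero]))
        apply mul_left_cancel₀ hg0'
        calc (Quot.out (Associates.mk p)).map (algebraMap D K) *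
              (IDFAux.cofac f (Quot.out (Associates.mk p))).map (algebraMap D K)
            = f.map (algebraMap D K) := by rw [← Polynomial.map_mul, ← hfq]
          _ = g₀.map (algebraMap D K) * q₀.map (algebraMap D K) := by
              rw [hfq₀, Polynomial.map_mul]
          _ = (Quot.out (Associates.mk p)).map (algebraMap D K) *
              (Polynomial.C μ * q₀.map (algebraMap D K)) := by
              rw [← hU, hCμ]; ring
      -- coefficient identities
      have hcid : ∀ (g q : D[X]) (μ : K),
          g.map (algebraMap D K) * Polynomial.C μ = g₀.map (algebraMap D K) →
          q.map (algebraMap D K) = Polynomial.C μ * q₀.map (algebraMap D K) →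
          ∀ i, g.coeff i * q.coeff j₀ = g₀.coeff i * q₀.coeff j₀ := by
        intro g q μ h1 h2 i
        apply halginj
        have e2 : algebraMap D K (g₀.coeff i) = (g.map (algebraMap D K)).coeff i * μ := by
          rw [← Polynomial.coeff_map, ← h1, Polynomial.coeff_mul_C]
        have e3 : algebraMap D K (q.coeff j₀) = μ * algebraMap D K (q₀.coeff j₀) := by
          rw [← Polynomial.coeff_map, h2, Polynomial.coeff_C_mul, Polynomial.coeff_map]
        rw [map_mul, map_mul, e2, e3, Polynomial.coeff_map]
        ring
      have hqj : ∀ (q : D[X]) (μ : K), μ ≠ 0 →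
          q.map (algebraMap D K) = Polynomial.C μ * q₀.map (algebraMap D K) →
          q.coeff j₀ ≠ 0 := by
        intro q μ hμ h2 h0
        have e3 : algebraMap D K (q.coeff j₀) = μ * algebraMap D K (q₀.coeff j₀) := by
          rw [← Polynomial.coeff_map, h2, Polynomial.coeff_C_mul, Polynomial.coeff_map]
        rw [h0, map_zero] at e3
        rcases mul_eq_zero.mp e3.symm with h | h
        · exact hμ h
        · exact hb₀ (by apply halginj; rw [h, map_zero])
      -- each fiber member gives an MCD of V
      have hMCDmem : ∀ x, (x ∈ Associates.mk '' A ∧ F x = y) →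
          IsMCD V ((IDFAux.cofac f (Quot.out x)).coeff j₀) := by
        intro x hx
        obtain ⟨hgdeg, hgi, hgd, μ, hμ0, h1, h2⟩ := hmain x hx
        constructor
        · rintro _ ⟨i, hi, rfl⟩
          dsimp only
          rw [← hcid _ _ μ h1 h2 i]
          exact Dvd.intro_left _ rfl
        · intro d hd hqd
          obtain ⟨e, rfl⟩ := hqd
          have he : ∀ i, e ∣ (Quot.out x).coeff i := by
            intro i
            by_cases hi : i ∈ g₀.support
            · have hdd := hd _ ⟨i, by exact_mod_cast hi, rfl⟩
              dsimp only at hdd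
              rw [← hcid _ _ μ h1 h2 i, mul_comm ((Quot.out x).coeff i)] at hdd
              exact (mul_dvd_mul_iff_left (hqj _ μ hμ0 h2)).mp hdd
            · have hgi0 : (Quot.out x).coeff i = 0 := by
                have h00 : (Quot.out x).coeff i * (IDFAux.cofac f (Quot.out x)).coeff j₀ = 0 := by
                  rw [hcid _ _ μ h1 h2 i, Polynomial.notMem_support_iff.mp hi, zero_mul]
                exact (mul_eq_zero.mp h00).resolve_right (hqj _ μ hμ0 h2)
              rw [hgi0]; exact dvd_zero e
          have hCe : Polynomial.C e ∣ Quot.out x :=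
            (Polynomial.C_dvd_iff_dvd_coeff e (Quot.out x)).mpr he
          have heu : IsUnit e :=
            IDFAux.prim_of_irred hgi (Nat.pos_of_ne_zero hgdeg) e hCe
          obtain ⟨w, hw⟩ := heu
          exact ⟨w, by rw [hw]⟩
      apply Set.Finite.of_finite_image (f := Ψ) _ ?_
      · apply hW.subset
        rintro _ ⟨x, hx, rfl⟩
        exact ⟨_, hMCDmem x hx, rfl⟩
      · -- injectivity of Ψ on the fiber
        intro x hx x' hx' hxy
        obtain ⟨hgdeg, hgi, hgd, μ, hμ0, h1, h2⟩ := hmain x hx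
        obtain ⟨hgdeg', hgi', hgd', μ', hμ0', h1', h2'⟩ := hmain x' hx'
        obtain ⟨u, hu⟩ := Associates.mk_eq_mk_iff_associated.mp hxy
        -- in K: (μ * u) * b₀ = μ' * b₀
        have e3 : algebraMap D K ((IDFAux.cofac f (Quot.out x)).coeff j₀)
            = μ * algebraMap D K (q₀.coeff j₀) := by
          rw [← Polynomial.coeff_map, h2, Polynomial.coeff_C_mul, Polynomial.coeff_map]
        have e3' : algebraMap D K ((IDFAux.cofac f (Quot.out x')).coeff j₀)
            = μ' * algebraMap D K (q₀.coeff j₀) := by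
          rw [← Polynomial.coeff_map, h2', Polynomial.coeff_C_mul, Polynomial.coeff_map]
        have hbK : algebraMap D K (q₀.coeff j₀) ≠ 0 := by
          intro h0; exact hb₀ (by apply halginj; rw [h0, map_zero])
        have e4 : (μ * algebraMap D K (u : D)) * algebraMap D K (q₀.coeff j₀)
            = μ' * algebraMap D K (q₀.coeff j₀) := by
          rw [← e3', ← hu, map_mul, e3]; ring
        have e5 : μ * algebraMap D K (u : D) = μ' := mul_right_cancel₀ hbK e4
        -- transfer back to D[X]
        have hCμ0 : (Polynomial.C μ : Polynomial K) ≠ 0 := by simpa using hμ0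
        have e6 : (Quot.out x).map (algebraMap D K)
            = (Quot.out x').map (algebraMap D K) * Polynomial.C (algebraMap D K (u : D)) := by
          apply mul_right_cancel₀ hCμ0
          rw [h1, ← h1', ← e5, map_mul]
          ring
        have e7 : Quot.out x = Quot.out x' * Polynomial.C (u : D) := by
          apply hmapinj
          rw [Polynomial.map_mul, Polynomial.map_C, e6]
        have e8 : Associated (Quot.out x') (Quot.out x) := by
          obtain ⟨w, hw⟩ := Polynomial.isUnit_C.mpr u.isUnit
          exact ⟨w, by rw [hw]; exact e7.symm⟩
        rw [← Associates.quot_out x, ← Associates.quot_out x']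
        exact (Associates.mk_eq_mk_iff_associated.mpr e8).symm
    -- conclude by covering with fibers
    apply Set.Finite.subset (Set.Finite.biUnion hSK (fun y _ => hfib y))
    intro x hx
    have hx' := hx
    obtain ⟨p, ⟨⟨hpi, hpd⟩, hppos⟩, rfl⟩ := hx'
    have houtp : Associated (Quot.out (Associates.mk p)) p := Associates.mk_quot_out p
    have hdvd : (Quot.out (Associates.mk p)).map (algebraMap D K) ∣
        f.map (algebraMap D K) := by
      obtain ⟨c, hc⟩ := houtp.dvd.trans hpd
      exact ⟨c.map (algebraMap D K), by rw [hc, Polynomial.map_mul]⟩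
    exact Set.mem_biUnion (Associates.mk_le_mk_iff_dvd.mpr hdvd) ⟨hx, rfl⟩

end Backward

/-- For an integral domain `D`, the polynomial ring `D[X]` is an IDF domain if and only
if `D` is both an IDF domain and MCD-finite. -/
theorem polynomial_isIDF_iff_isIDF_and_mcdFinite (D : Type*) [CommRing D] [IsDomain D] :
    IsIDFDomain (Polynomial D) ↔ IsIDFDomain D ∧ MCDFinite D := by
  constructor
  · intro h
    exact ⟨IDFAux.fwd_idf h, IDFAux.fwd_mcd h⟩
  · rintro ⟨h1, h2⟩
    exact IDFAux.bwd h1 h2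
end

section
/- Let D be an integral domain that is both IDF and MCD-finite. Then for any set X̄ of indeterminates (of arbitrary cardinality), the polynomial ring D[X̄] (i.e., the multivariate polynomial ring MvPolynomial X̄ D) is an IDF domain. -/
namespace IDFAux
open MvPolynomial UniqueFactorizationMonoid

variable {R : Type*} [CommRing R] [IsDomain R]

lemma fin_eq_C : ∀ (n : ℕ) (p q : MvPolynomial (Fin n) R),
    p * q = 1 → ∃ r : R, p = C r := by
  intro n
  induction n with
  | zero =>
    intro p q _
    obtain ⟨r, hr⟩ := C_surjective (Fin 0) p
    exact ⟨r, hr.symm⟩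
  | succ n ih =>
    intro p q h
    set e := finSuccEquiv R n with he
    have h' : (e p) * (e q) = 1 := by rw [← map_mul, h, map_one]
    obtain ⟨r, hru, hrC⟩ := Polynomial.isUnit_iff.mp (IsUnit.of_mul_eq_one _ h')
    obtain ⟨r', hr'⟩ := hru.exists_right_inv
    obtain ⟨c, rfl⟩ := ih r r' hr'
    refine ⟨c, e.injective ?_⟩
    have h2 := RingHom.congr_fun (finSuccEquiv_comp_C_eq_C (R := R) n) c
    simp only [RingHom.comp_apply] at h2
    rw [← hrC]
    calc Polynomial.C (C c) = e (e.symm (Polynomial.C (C c))) := (e.apply_symm_apply _).symm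
    _ = e (C c) := by
        rw [show (e.symm (Polynomial.C (C c)) : MvPolynomial (Fin (n+1)) R) = C c from h2]

lemma exists_C_of_isUnit {σ : Type*} {p : MvPolynomial σ R} (hp : IsUnit p) :
    ∃ r : R, IsUnit r ∧ p = C r := by
  obtain ⟨q, hq⟩ := isUnit_iff_exists_inv.mp hp
  obtain ⟨s, p', q', rfl, rfl⟩ := exists_finset_rename₂ p q
  rw [← map_mul] at hq
  have h1 : p' * q' = 1 :=
    rename_injective (σ := {x // x ∈ s}) _ Subtype.val_injective (by rw [hq, map_one])
  obtain ⟨r, hr⟩ := fin_eq_C _ ((renameEquiv R (Fintype.equivFin {x // x ∈ s})) p')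
    ((renameEquiv R (Fintype.equivFin {x // x ∈ s})) q') (by rw [← map_mul, h1, map_one])
  have hp' : p' = C r := by
    apply (renameEquiv R (Fintype.equivFin {x // x ∈ s})).injective
    rw [hr, renameEquiv_apply, rename_C]
  have hpc : rename (Subtype.val) p' = (C r : MvPolynomial σ R) := by rw [hp', rename_C]
  have hu := hp.map constantCoeff
  rw [hpc, constantCoeff_C] at hu
  exact ⟨r, hu, hpc⟩

lemma isUnit_of_C_dvd {σ : Type*} {p : MvPolynomial σ R} (hirr : Irreducible p)
    (hnc : ∀ a : R, p ≠ C a) {e : R} (h : C e ∣ p) : IsUnit e := by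
  obtain ⟨q, hq⟩ := h
  rcases hirr.isUnit_or_isUnit hq with h1 | h1
  · have := h1.map constantCoeff
    rwa [constantCoeff_C] at this
  · obtain ⟨r, _, hrq⟩ := exists_C_of_isUnit h1
    exact absurd (by rw [hq, hrq, ← C_mul]) (hnc (e * r))

lemma finite_image_of_respects {α β : Type*} [CommMonoidWithZero α] [IsCancelMulZero α] (F : α → β) {T : Set α}
    (h : (Associates.mk '' T).Finite)
    (hF : ∀ x y : α, Associated x y → F x = F y) : (F '' T).Finite := by
  refine Set.Finite.subset (h.image (fun x => F (Quot.out x))) ?_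
  rintro _ ⟨a, ha, rfl⟩
  refine ⟨Associates.mk a, ⟨a, ha, rfl⟩, ?_⟩
  exact hF _ _
    (Associates.mk_eq_mk_iff_associated.mp (Associates.quot_out (Associates.mk a)).symm).symm

lemma finite_divisor_classes {α : Type*} [CommMonoidWithZero α] [IsCancelMulZero α]
    [UniqueFactorizationMonoid α] {y : α} (hy : y ≠ 0) :
    (Associates.mk '' {d | d ∣ y}).Finite := by
  classical
  letI : NormalizationMonoid α := UniqueFactorizationMonoid.normalizationMonoid.toNormalizationMonoid
  have key : ∀ d : α, d ∣ y → d ≠ 0 := fun d hd h0 => hy (by simpa [h0] using hd)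
  have hout : ∀ x ∈ Associates.mk '' {d | d ∣ y},
      (Quot.out x ∣ y) ∧ Quot.out x ≠ 0 := by
    rintro _ ⟨d, hd, rfl⟩
    have ha : Associated (Quot.out (Associates.mk d)) d :=
      Associates.mk_eq_mk_iff_associated.mp (Associates.quot_out (Associates.mk d))
    exact ⟨ha.dvd.trans hd, fun h0 => key d hd
      ((associated_zero_iff_eq_zero d).mp (by rw [h0] at ha; exact ha.symm))⟩
  refine Set.Finite.of_finite_image (f := fun x => normalizedFactors (Quot.out x)) ?_ ?_
  · refine Set.Finite.subset (Set.Finite.ofFinset ((normalizedFactors y).powerset.toFinset)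
      (fun s => (Multiset.mem_toFinset).trans (Multiset.mem_powerset))) ?_
    rintro _ ⟨x, hx, rfl⟩
    obtain ⟨hd, h0⟩ := hout x hx
    exact (dvd_iff_normalizedFactors_le_normalizedFactors h0 hy).mp hd
  · intro x hx x' hx' heq
    obtain ⟨hd, h0⟩ := hout x hx
    obtain ⟨hd', h0'⟩ := hout x' hx'
    have : Associated (Quot.out x) (Quot.out x') :=
      (associated_iff_normalizedFactors_eq_normalizedFactors h0 h0').mpr heq
    rw [← Associates.quot_out x, ← Associates.quot_out x']
    exact Associates.mk_eq_mk_iff_associated.mpr this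

lemma class_finite {σ : Type*} {K : Type*} [Field K] (fK : R →+* K)
    (hinj : Function.Injective fK) (hMCD : MCDFinite R)
    {f g₀ : MvPolynomial σ R} (hf : f ≠ 0) (hg₀ : g₀ ∣ f) :
    (Associates.mk '' {p : MvPolynomial σ R | Irreducible p ∧ p ∣ f ∧ (∀ a : R, p ≠ C a) ∧
      Associated (MvPolynomial.map fK p) (MvPolynomial.map fK g₀)}).Finite := by
  classical
  have hφinj : Function.Injective (MvPolynomial.map fK : MvPolynomial σ R →+* MvPolynomial σ K) :=
    MvPolynomial.map_injective _ hinj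
  obtain ⟨h₀, hh₀⟩ := hg₀
  have hg₀0 : g₀ ≠ 0 := by rintro rfl; exact hf (by simp [hh₀])
  have hh₀0 : h₀ ≠ 0 := by rintro rfl; exact hf (by simp [hh₀])
  obtain ⟨j₀, hj₀⟩ := ne_zero_iff.mp hh₀0
  set b := coeff j₀ h₀ with hbdef
  have hb0 : b ≠ 0 := hj₀
  set T : Set R := (fun i => b * coeff i g₀) '' (g₀.support : Set _) with hT
  have hTfin : T.Finite := (g₀.support.finite_toSet).image _
  have hT0 : ∀ t ∈ T, t ≠ 0 := by
    rintro _ ⟨i, hi, rfl⟩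
    exact mul_ne_zero hb0 (mem_support_iff.mp hi)
  have hMfin := hMCD T hTfin hT0
  have key : ∀ p : MvPolynomial σ R, (Irreducible p ∧ p ∣ f ∧ (∀ a : R, p ≠ C a) ∧
      Associated (MvPolynomial.map fK p) (MvPolynomial.map fK g₀)) →
      ∃ a : R, IsMCD T a ∧ C a * p = C b * g₀ := by
    rintro p ⟨hpirr, hpf, hpnc, hpas⟩
    obtain ⟨u, hu⟩ := hpas
    obtain ⟨κ, hκu, hκ⟩ := exists_C_of_isUnit u.isUnit
    obtain ⟨hp, hhp⟩ := hpf
    have hp0 : p ≠ 0 := hpirr.ne_zero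
    have hφp0 : MvPolynomial.map fK p ≠ 0 := fun h => hp0 (hφinj (by simpa using h))
    have hcan : MvPolynomial.map fK hp = C κ * MvPolynomial.map fK h₀ := by
      have h1 : MvPolynomial.map fK p * MvPolynomial.map fK hp =
          MvPolynomial.map fK p * (C κ * MvPolynomial.map fK h₀) := by
        rw [← map_mul, ← hhp, hh₀, map_mul, ← hκ, ← hu]; ring
      exact mul_left_cancel₀ hφp0 h1
    set a := coeff j₀ hp with hadef
    have haK : fK a = κ * fK b := by
      have h2 := congrArg (coeff j₀) hcan
      rwa [coeff_map, coeff_C_mul, coeff_map] at h2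
    have hmain : C a * p = C b * g₀ := by
      apply hφinj
      rw [map_mul, map_mul, MvPolynomial.map_C, MvPolynomial.map_C, haK, ← hu, hκ, C_mul]
      ring
    have hCbg : (C b : MvPolynomial σ R) * g₀ ≠ 0 :=
      mul_ne_zero (fun h => hb0 (C_eq_zero.mp h)) hg₀0
    have ha0 : a ≠ 0 := by
      intro h0
      rw [h0, map_zero, zero_mul] at hmain
      exact hCbg hmain.symm
    have hcoeff : ∀ i, a * coeff i p = b * coeff i g₀ := by
      intro i
      have h3 := congrArg (coeff i) hmain
      rwa [coeff_C_mul, coeff_C_mul] at h3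
    refine ⟨a, ⟨?_, ?_⟩, hmain⟩
    · rintro _ ⟨i, hi, rfl⟩
      exact ⟨coeff i p, (hcoeff i).symm⟩
    · intro d hd had
      obtain ⟨e, rfl⟩ := had
      have he : ∀ i, e ∣ coeff i p := by
        intro i
        by_cases hi : i ∈ g₀.support
        · have h4 : a * e ∣ a * coeff i p := by
            rw [hcoeff i]; exact hd _ ⟨i, hi, rfl⟩
          exact (mul_dvd_mul_iff_left ha0).mp h4
        · have h5 : coeff i g₀ = 0 := by simpa [mem_support_iff] using hi
          have h6 : a * coeff i p = 0 := by rw [hcoeff i, h5, mul_zero]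
          have h7 : coeff i p = 0 := by
            rcases mul_eq_zero.mp h6 with h | h
            · exact absurd h ha0
            · exact h
          simp [h7]
      exact associated_mul_unit_right a e
        (isUnit_of_C_dvd hpirr hpnc ((C_dvd_iff_dvd_coeff e p).mpr he))
  have hCbg : (C b : MvPolynomial σ R) * g₀ ≠ 0 :=
    mul_ne_zero (fun h => hb0 (C_eq_zero.mp h)) hg₀0
  refine Set.Finite.subset (Set.Finite.biUnion hMfin (fun y _ =>
    Set.Subsingleton.finite (s := {x : Associates (MvPolynomial σ R) |
      ∃ p a, x = Associates.mk p ∧ Associates.mk a = y ∧ C a * p = C b * g₀}) ?_)) ?_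
  · rintro x₁ ⟨p₁, a₁, rfl, hy₁, hm₁⟩ x₂ ⟨p₂, a₂, rfl, hy₂, hm₂⟩
    have haa : Associated a₁ a₂ := Associates.mk_eq_mk_iff_associated.mp (hy₁.trans hy₂.symm)
    obtain ⟨v, hv⟩ := haa
    have ha₁0 : (C a₁ : MvPolynomial σ R) ≠ 0 := fun h => hCbg (by rw [← hm₁, h, zero_mul])
    have h8 : C a₁ * p₁ = C a₁ * (C (v : R) * p₂) := by
      rw [hm₁, ← hm₂, ← hv, C_mul]; ring
    have h9 : p₁ = C (v : R) * p₂ := mul_left_cancel₀ ha₁0 h8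
    obtain ⟨w, hw⟩ := (v.isUnit.map (C : R →+* MvPolynomial σ R))
    refine (Associates.mk_eq_mk_iff_associated.mpr ⟨w, ?_⟩).symm
    rw [hw, h9]; ring
  · rintro _ ⟨p, hpS, rfl⟩
    obtain ⟨a, haM, hm⟩ := key p hpS
    exact Set.mem_biUnion (show (Associates.mk a) ∈ Associates.mk '' {c : R | IsMCD T c} from
      ⟨a, haM, rfl⟩) ⟨p, a, rfl, rfl, hm⟩

end IDFAux

open MvPolynomial in
/-- If an integral domain `D` is both IDF and MCD-finite, then for any set `σ` of
indeterminates the multivariate polynomial ring `D[σ]` is an IDF domain. -/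
theorem mvPolynomial_isIDF_of_isIDF_and_mcdFinite (D : Type*) [CommRing D] [IsDomain D]
    (hIDF : IsIDFDomain D) (hMCD : MCDFinite D) (σ : Type*) :
    IsIDFDomain (MvPolynomial σ D) := by
  classical
  intro f hf
  obtain ⟨m₀, hm₀⟩ := MvPolynomial.ne_zero_iff.mp hf
  have hinj : Function.Injective (algebraMap D (FractionRing D)) :=
    IsFractionRing.injective D (FractionRing D)
  have hφinj : Function.Injective (MvPolynomial.map (algebraMap D (FractionRing D)) :
      MvPolynomial σ D →+* MvPolynomial σ (FractionRing D)) :=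
    MvPolynomial.map_injective _ hinj
  have hφf : MvPolynomial.map (algebraMap D (FractionRing D)) f ≠ 0 := by
    intro h
    exact hf (hφinj (by simpa using h))
  -- Part A : constant irreducible divisors
  have hA : (Associates.mk '' {p : MvPolynomial σ D | Irreducible p ∧ p ∣ f ∧
      ∃ a : D, p = C a}).Finite := by
    refine Set.Finite.subset (IDFAux.finite_image_of_respects
      (fun a : D => Associates.mk (C a : MvPolynomial σ D)) (hIDF (coeff m₀ f) hm₀) ?_) ?_
    · intro x y hxy
      exact Associates.mk_eq_mk_iff_associated.mpr
        (hxy.map (C : D →+* MvPolynomial σ D).toMonoidHom)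
    · rintro _ ⟨p, ⟨hirr, hdvd, a, rfl⟩, rfl⟩
      refine ⟨a, ⟨?_, (C_dvd_iff_dvd_coeff a f).mp hdvd m₀⟩, rfl⟩
      constructor
      · exact fun h => hirr.not_isUnit (h.map (C : D →+* MvPolynomial σ D))
      · intro x y hxy
        rcases hirr.isUnit_or_isUnit (show (C a : MvPolynomial σ D) = C x * C y by
          rw [hxy, C_mul]) with h | h
        · left; have := h.map constantCoeff; rwa [constantCoeff_C] at this
        · right; have := h.map constantCoeff; rwa [constantCoeff_C] at this
  -- Part B : nonconstant irreducible divisors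
  have hB : (Associates.mk '' {p : MvPolynomial σ D | Irreducible p ∧ p ∣ f ∧
      ∀ a : D, p ≠ C a}).Finite := by
    have hCls : (Associates.mk ''
        {d : MvPolynomial σ (FractionRing D) |
          d ∣ MvPolynomial.map (algebraMap D (FractionRing D)) f}).Finite :=
      IDFAux.finite_divisor_classes hφf
    refine Set.Finite.subset (Set.Finite.biUnion (t := fun y =>
        Associates.mk '' {p : MvPolynomial σ D | Irreducible p ∧ p ∣ f ∧ (∀ a : D, p ≠ C a) ∧
          Associates.mk (MvPolynomial.map (algebraMap D (FractionRing D)) p) = y})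
        hCls (fun y _ => ?_)) ?_
    · -- for each class y, the corresponding set of irreducible divisors is finite
      by_cases hy : ∃ g₀ : MvPolynomial σ D, (Irreducible g₀ ∧ g₀ ∣ f ∧ (∀ a : D, g₀ ≠ C a)) ∧
          Associates.mk (MvPolynomial.map (algebraMap D (FractionRing D)) g₀) = y
      · obtain ⟨g₀, ⟨_, hg₀f, _⟩, hg₀y⟩ := hy
        refine Set.Finite.subset
          (IDFAux.class_finite (algebraMap D (FractionRing D)) hinj hMCD hf hg₀f) ?_
        rintro _ ⟨p, ⟨hp1, hp2, hp3, hp4⟩, rfl⟩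
        refine ⟨p, ⟨hp1, hp2, hp3, ?_⟩, rfl⟩
        exact Associates.mk_eq_mk_iff_associated.mp (hp4.trans hg₀y.symm)
      · convert Set.finite_empty
        rw [Set.image_eq_empty]
        ext p
        simp only [Set.mem_setOf_eq, Set.mem_empty_iff_false, iff_false]
        rintro ⟨h1, h2, h3, h4⟩
        exact hy ⟨p, ⟨h1, h2, h3⟩, h4⟩
    · rintro _ ⟨p, ⟨h1, h2, h3⟩, rfl⟩
      refine Set.mem_biUnion (show Associates.mk (MvPolynomial.map
          (algebraMap D (FractionRing D)) p) ∈ _ from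
        ⟨MvPolynomial.map (algebraMap D (FractionRing D)) p,
          (MvPolynomial.map (algebraMap D (FractionRing D))).map_dvd h2, rfl⟩) ?_
      exact ⟨p, ⟨h1, h2, h3, rfl⟩, rfl⟩
  refine Set.Finite.subset (hA.union hB) ?_
  rw [← Set.image_union]
  refine Set.image_mono ?_
  rintro p ⟨h1, h2⟩
  by_cases h : ∃ a : D, p = C a
  · exact Or.inl ⟨h1, h2, h⟩
  · exact Or.inr ⟨h1, h2, fun a ha => h ⟨a, ha⟩⟩
end

section
/- Let D be an integral domain and let f be a non-unit polynomial in D[X] such that every common divisor in D of the coefficients of f is a unit (equivalently, the only common divisors of the coefficients of f are units). Then f can be written as a finite product of irreducible elements of D[X]. -/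
/-- Let `D` be an integral domain and let `f ∈ D[X]` be a non-unit polynomial such that
every common divisor in `D` of the coefficients of `f` is a unit. Then `f` is a finite
product of irreducible elements of `D[X]`. -/
theorem exists_factorization_of_coeffs_coprime (D : Type*) [CommRing D] [IsDomain D]
    (f : Polynomial D) (hf : ¬ IsUnit f)
    (hcoeff : ∀ d : D, (∀ n : ℕ, d ∣ f.coeff n) → IsUnit d) :
    ∃ s : Multiset (Polynomial D), (∀ g ∈ s, Irreducible g) ∧ s.prod = f := by
  have key : ∀ n : ℕ, ∀ f : Polynomial D, f.natDegree ≤ n → ¬ IsUnit f →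
      (∀ d : D, (∀ m : ℕ, d ∣ f.coeff m) → IsUnit d) →
      ∃ s : Multiset (Polynomial D), (∀ g ∈ s, Irreducible g) ∧ s.prod = f := by
    intro n
    induction n with
    | zero =>
      intro f hdeg hf hcoeff
      exfalso
      apply hf
      have hfC : f = Polynomial.C (f.coeff 0) :=
        Polynomial.eq_C_of_natDegree_eq_zero (Nat.le_zero.mp hdeg)
      rw [hfC]
      rw [Polynomial.isUnit_C]
      apply hcoeff
      intro m
      rcases Nat.eq_zero_or_pos m with hm | hm
      · subst hm; exact dvd_refl _
      · have e : f.coeff m = 0 := by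
          rw [hfC, Polynomial.coeff_C, if_neg (Nat.pos_iff_ne_zero.mp hm)]
        rw [e]; exact dvd_zero _
    | succ n ih =>
      intro f hdeg hf hcoeff
      by_cases hirr : Irreducible f
      · exact ⟨{f}, by simpa using hirr, by simp⟩
      · -- f = g * h with both non-units
        rw [irreducible_iff] at hirr
        push_neg at hirr
        obtain ⟨g, h, hfe, hg, hh⟩ := hirr hf
        have hf0 : f ≠ 0 := by
          intro h0
          exact not_isUnit_zero (hcoeff 0 (fun m => by simp [h0]))
        have hg0 : g ≠ 0 := fun h0 => hf0 (by simp [hfe, h0])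
        have hh0 : h ≠ 0 := fun h0 => hf0 (by simp [hfe, h0])
        -- coefficient divisibility transfers through multiplication
        have dvd_mul_coeff : ∀ (d : D) (p q : Polynomial D),
            (∀ m : ℕ, d ∣ p.coeff m) → ∀ m : ℕ, d ∣ (p * q).coeff m := by
          intro d p q hd m
          rw [Polynomial.coeff_mul]
          exact Finset.dvd_sum fun x _ => dvd_mul_of_dvd_left (hd x.1) _
        -- g and h have positive degree
        have hgd : 0 < g.natDegree := by
          by_contra hc
          push_neg at hc
          have hgC : g = Polynomial.C (g.coeff 0) :=
            Polynomial.eq_C_of_natDegree_eq_zero (Nat.le_zero.mp hc)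
          apply hg
          rw [hgC, Polynomial.isUnit_C]
          apply hcoeff
          intro m
          have e : f.coeff m = g.coeff 0 * h.coeff m := by
            conv_lhs => rw [hfe, hgC]
            rw [Polynomial.coeff_C_mul]
          rw [e]; exact dvd_mul_right _ _
        have hhd : 0 < h.natDegree := by
          by_contra hc
          push_neg at hc
          have hhC : h = Polynomial.C (h.coeff 0) :=
            Polynomial.eq_C_of_natDegree_eq_zero (Nat.le_zero.mp hc)
          apply hh
          rw [hhC, Polynomial.isUnit_C]
          apply hcoeff
          intro m
          have e : f.coeff m = h.coeff 0 * g.coeff m := by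
            conv_lhs => rw [hfe, mul_comm, hhC]
            rw [Polynomial.coeff_C_mul]
          rw [e]; exact dvd_mul_right _ _
        have hdmul : f.natDegree = g.natDegree + h.natDegree := by
          rw [hfe, Polynomial.natDegree_mul hg0 hh0]
        have hgle : g.natDegree ≤ n := by omega
        have hhle : h.natDegree ≤ n := by omega
        have hgcoeff : ∀ d : D, (∀ m : ℕ, d ∣ g.coeff m) → IsUnit d := by
          intro d hd
          exact hcoeff d fun m => hfe ▸ dvd_mul_coeff d g h hd m
        have hhcoeff : ∀ d : D, (∀ m : ℕ, d ∣ h.coeff m) → IsUnit d := by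
          intro d hd
          refine hcoeff d fun m => ?_
          rw [hfe, mul_comm]
          exact dvd_mul_coeff d h g hd m
        obtain ⟨s₁, hs₁, hps₁⟩ := ih g hgle hg hgcoeff
        obtain ⟨s₂, hs₂, hps₂⟩ := ih h hhle hh hhcoeff
        refine ⟨s₁ + s₂, ?_, ?_⟩
        · intro p hp
          rcases Multiset.mem_add.mp hp with hp | hp
          · exact hs₁ p hp
          · exact hs₂ p hp
        · rw [Multiset.prod_add, hps₁, hps₂, hfe]
  exact key f.natDegree f le_rfl hf hcoeff
end

section
/- Let D be a pre-Schreier integral domain. Then every finite subset of the nonzero elements of D has at most one maximal common divisor up to associates; in particular, D is MCD-finite. -/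
/-- 2×2 Riesz interpolation from primality. -/
lemma preSchreier_interp {D : Type*} [CommRing D] [IsDomain D]
    (hps : ∀ a : D, a ≠ 0 → ∀ b c : D, a ∣ b * c →
      ∃ a₁ a₂ : D, a = a₁ * a₂ ∧ a₁ ∣ b ∧ a₂ ∣ c)
    {a₁ a₂ b₁ b₂ : D} (hb₁ : b₁ ≠ 0) (hb₂ : b₂ ≠ 0)
    (h11 : a₁ ∣ b₁) (h12 : a₁ ∣ b₂) (h21 : a₂ ∣ b₁) (h22 : a₂ ∣ b₂) :
    ∃ c : D, c ≠ 0 ∧ a₁ ∣ c ∧ a₂ ∣ c ∧ c ∣ b₁ ∧ c ∣ b₂ := by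
  have ha₁ : a₁ ≠ 0 := fun h => hb₁ (by simpa [h] using h11)
  have ha₂ : a₂ ≠ 0 := fun h => hb₁ (by simpa [h] using h21)
  obtain ⟨w, hw⟩ := h11
  obtain ⟨p, hp⟩ := h21
  obtain ⟨q, hq⟩ := h12
  obtain ⟨r, hr⟩ := h22
  have hw0 : w ≠ 0 := fun h => hb₁ (by simp [hw, h])
  have hwdvd : w ∣ p * q := by
    refine ⟨r, ?_⟩
    have key : a₁ * a₂ * (p * q) = a₁ * a₂ * (w * r) := by
      have : (a₂ * p) * (a₁ * q) = (a₁ * w) * (a₂ * r) := by rw [← hp, ← hq, ← hw, ← hr]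
      ring_nf
      ring_nf at this
      linear_combination this
    exact mul_left_cancel₀ (mul_ne_zero ha₁ ha₂) key
  obtain ⟨x, y, hxy, hx, hy⟩ := hps w hw0 p q hwdvd
  have hx0 : x ≠ 0 := fun h => hw0 (by simp [hxy, h])
  have hy0 : y ≠ 0 := fun h => hw0 (by simp [hxy, h])
  obtain ⟨p', hp'⟩ := hx
  refine ⟨a₁ * y, mul_ne_zero ha₁ hy0, ⟨y, rfl⟩, ⟨p', ?_⟩, ⟨x, by rw [hw, hxy]; ring⟩,
    ?_⟩
  · -- a₁ * y = a₂ * p'  from  a₁ * x * y = b₁ = a₂ * p = a₂ * x * p'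
    have key : x * (a₁ * y) = x * (a₂ * p') := by
      have : a₁ * (x * y) = a₂ * (x * p') := by rw [← hxy, ← hw, hp, hp']
      linear_combination this
    exact mul_left_cancel₀ hx0 key
  · obtain ⟨q', hq'⟩ := hy
    exact ⟨q', by rw [hq, hq']; ring⟩

/-- For a finite set of nonzero elements any two common divisors have a common
multiple which is still a common divisor. -/
lemma preSchreier_directed {D : Type*} [CommRing D] [IsDomain D]
    (hps : ∀ a : D, a ≠ 0 → ∀ b c : D, a ∣ b * c →
      ∃ a₁ a₂ : D, a = a₁ * a₂ ∧ a₁ ∣ b ∧ a₂ ∣ c)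
    (T : Set D) (hT : T.Finite) : (∀ t ∈ T, t ≠ 0) →
    ∀ a₁ a₂ : D, a₁ ≠ 0 → a₂ ≠ 0 → (∀ t ∈ T, a₁ ∣ t) → (∀ t ∈ T, a₂ ∣ t) →
      ∃ m : D, m ≠ 0 ∧ a₁ ∣ m ∧ a₂ ∣ m ∧ ∀ t ∈ T, m ∣ t := by
  refine Set.Finite.induction_on (motive := fun T _ => (∀ t ∈ T, t ≠ 0) →
    ∀ a₁ a₂ : D, a₁ ≠ 0 → a₂ ≠ 0 → (∀ t ∈ T, a₁ ∣ t) → (∀ t ∈ T, a₂ ∣ t) →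
      ∃ m : D, m ≠ 0 ∧ a₁ ∣ m ∧ a₂ ∣ m ∧ ∀ t ∈ T, m ∣ t) T hT ?_ ?_
  · intro _ a₁ a₂ h₁ h₂ _ _
    exact ⟨a₁ * a₂, mul_ne_zero h₁ h₂, ⟨a₂, rfl⟩, ⟨a₁, mul_comm _ _⟩, fun t ht => ht.elim⟩
  · intro s T' hs hT' ih hT0 a₁ a₂ h₁ h₂ hd₁ hd₂
    have hs0 : s ≠ 0 := hT0 s (Set.mem_insert _ _)
    obtain ⟨m, hm0, hm1, hm2, hmT⟩ := ih (fun t ht => hT0 t (Set.mem_insert_of_mem _ ht))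
      a₁ a₂ h₁ h₂ (fun t ht => hd₁ t (Set.mem_insert_of_mem _ ht))
      (fun t ht => hd₂ t (Set.mem_insert_of_mem _ ht))
    obtain ⟨c, hc0, hc1, hc2, hcm, hcs⟩ := preSchreier_interp hps hm0 hs0
      hm1 (hd₁ s (Set.mem_insert _ _)) hm2 (hd₂ s (Set.mem_insert _ _))
    exact ⟨c, hc0, hc1, hc2, fun t ht => by
      rcases Set.mem_insert_iff.mp ht with h | h
      · exact h ▸ hcs
      · exact hcm.trans (hmT t h)⟩

/-- In a pre-Schreier integral domain (every nonzero element is primal), every finite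
subset of nonzero elements has at most one maximal common divisor up to associates;
in particular the domain is MCD-finite. -/
theorem preSchreier_mcd_unique_and_mcdFinite (D : Type*) [CommRing D] [IsDomain D]
    (hps : ∀ a : D, a ≠ 0 → ∀ b c : D, a ∣ b * c →
      ∃ a₁ a₂ : D, a = a₁ * a₂ ∧ a₁ ∣ b ∧ a₂ ∣ c) :
    (∀ T : Set D, T.Finite → (∀ t ∈ T, t ≠ 0) →
      ∀ c d : D, IsMCD T c → IsMCD T d → Associated c d) ∧ MCDFinite D := by
  have main : ∀ T : Set D, T.Finite → (∀ t ∈ T, t ≠ 0) →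
      ∀ c d : D, IsMCD T c → IsMCD T d → Associated c d := by
    intro T hT hT0 c d hc hd
    rcases T.eq_empty_or_nonempty with rfl | ⟨t₀, ht₀⟩
    · -- for the empty set, only 0 is an MCD
      have hc0 : c = 0 := by
        have := hc.2 0 (fun t ht => ht.elim) (dvd_zero c)
        exact (associated_zero_iff_eq_zero c).mp this
      have hd0 : d = 0 := by
        have := hd.2 0 (fun t ht => ht.elim) (dvd_zero d)
        exact (associated_zero_iff_eq_zero d).mp this
      rw [hc0, hd0]
    · have ht₀0 : t₀ ≠ 0 := hT0 t₀ ht₀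
      have hc0 : c ≠ 0 := fun h => ht₀0 (by simpa [h] using hc.1 t₀ ht₀)
      have hd0 : d ≠ 0 := fun h => ht₀0 (by simpa [h] using hd.1 t₀ ht₀)
      obtain ⟨m, hm0, hcm, hdm, hmT⟩ :=
        preSchreier_directed hps T hT hT0 c d hc0 hd0 hc.1 hd.1
      exact (hc.2 m hmT hcm).trans (hd.2 m hmT hdm).symm
  refine ⟨main, fun T hT hT0 => Set.Subsingleton.finite ?_⟩
  rintro x ⟨c, hc, rfl⟩ y ⟨d, hd, rfl⟩
  exact Associates.mk_eq_mk_iff_associated.mpr (main T hT hT0 c d hc hd)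
end

section
/- Let D be an integral domain that is both pre-Schreier and IDF. Then the polynomial ring D[X] is an IDF domain. -/
open Polynomial

/-- Descent: if a map `h` is finite on `S` and identifies only associated elements,
then `S` is finite up to associates. -/
lemma aux_finite_mk_of_map {α β : Type*} [CommMonoidWithZero α] (S : Set α) (h : α → β)
    (hfin : (h '' S).Finite)
    (hinj : ∀ p ∈ S, ∀ q ∈ S, h p = h q → Associated p q) :
    (Associates.mk '' S).Finite := by
  classical
  refine Set.Finite.of_surjOn
    (fun b => if hb : ∃ p, p ∈ S ∧ h p = b then Associates.mk hb.choose else 1) ?_ hfin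
  rintro _ ⟨p, hp, rfl⟩
  have hb : ∃ q, q ∈ S ∧ h q = h p := ⟨p, hp, rfl⟩
  refine ⟨h p, ⟨p, hp, rfl⟩, ?_⟩
  simp only [dif_pos hb]
  exact Associates.mk_eq_mk_iff_associated.mpr (hinj _ hb.choose_spec.1 _ hp hb.choose_spec.2)

/-- In a UFM, a nonzero element has finitely many divisors up to associates. -/
lemma aux_ufm_finite_divisors {M : Type*} [CommMonoidWithZero M]
    [UniqueFactorizationMonoid M] (y : M) (hy : y ≠ 0) :
    (Associates.mk '' {x : M | x ∣ y}).Finite := by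
  classical
  haveI : Nontrivial M := ⟨⟨y, 0, hy⟩⟩
  haveI := UniqueFactorizationMonoid.normalizationMonoid (α := M)
  refine Set.Finite.subset (Set.Finite.image (fun s : Multiset M => Associates.mk s.prod)
    ((UniqueFactorizationMonoid.normalizedFactors y).powerset.toFinset.finite_toSet)) ?_
  rintro _ ⟨x, hx, rfl⟩
  have hx0 : x ≠ 0 := by rintro rfl; exact hy (zero_dvd_iff.mp hx)
  refine ⟨UniqueFactorizationMonoid.normalizedFactors x, ?_, ?_⟩
  · simp only [Finset.mem_coe, Multiset.mem_toFinset, Multiset.mem_powerset]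
    exact (UniqueFactorizationMonoid.dvd_iff_normalizedFactors_le_normalizedFactors
      hx0 hy).mp hx
  · exact Associates.mk_eq_mk_iff_associated.mpr
      (UniqueFactorizationMonoid.prod_normalizedFactors hx0)

/-- Riesz-type interpolation from pre-Schreier: if `b ∣ a * c` for every `c` in a list,
then `b = b₁ * b₂` with `b₁ ∣ a` and `b₂` dividing every element of the list. -/
lemma aux_riesz {D : Type*} [CommRing D] [IsDomain D]
    (hps : ∀ a : D, a ≠ 0 → ∀ b c : D, a ∣ b * c →
      ∃ a₁ a₂ : D, a = a₁ * a₂ ∧ a₁ ∣ b ∧ a₂ ∣ c)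
    (l : List D) : ∀ a b : D, b ≠ 0 → (∀ c ∈ l, b ∣ a * c) →
      ∃ b₁ b₂ : D, b = b₁ * b₂ ∧ b₁ ∣ a ∧ ∀ c ∈ l, b₂ ∣ c := by
  induction l with
  | nil => exact fun a b _ _ => ⟨1, b, (one_mul b).symm, one_dvd a, by simp⟩
  | cons c l ih =>
    intro a b hb h
    obtain ⟨b₁, b₂, hbe, hb₁, hb₂⟩ := ih a b hb (fun d hd => h d (List.mem_cons_of_mem _ hd))
    have hb₁0 : b₁ ≠ 0 := fun h0 => hb (by rw [hbe, h0, zero_mul])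
    have hb₂0 : b₂ ≠ 0 := fun h0 => hb (by rw [hbe, h0, mul_zero])
    obtain ⟨a', ha'⟩ := hb₁
    have hdvd : b₂ ∣ a' * c := by
      have := h c List.mem_cons_self
      rw [hbe, ha'] at this
      rw [mul_assoc] at this
      exact (mul_dvd_mul_iff_left hb₁0).mp this
    obtain ⟨e₁, e₂, he, he₁, he₂⟩ := hps b₂ hb₂0 a' c hdvd
    refine ⟨b₁ * e₁, e₂, by rw [hbe, he, mul_assoc], ?_, ?_⟩
    · rw [ha']; exact mul_dvd_mul_left b₁ he₁
    · intro d hd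
      rcases List.mem_cons.mp hd with rfl | hd
      · exact he₂
      · exact dvd_trans ⟨e₁, by rw [he, mul_comm]⟩ (hb₂ d hd)

/-- Key lemma: if `C a * q = C b * p` with `a, b ≠ 0`, `p, q` irreducible and
`p` of positive degree, then `p` and `q` are associated. -/
lemma aux_assoc {D : Type*} [CommRing D] [IsDomain D]
    (hps : ∀ a : D, a ≠ 0 → ∀ b c : D, a ∣ b * c →
      ∃ a₁ a₂ : D, a = a₁ * a₂ ∧ a₁ ∣ b ∧ a₂ ∣ c)
    {p q : Polynomial D} (hp : Irreducible p) (hq : Irreducible q)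
    (hpd : p.natDegree ≠ 0) {a b : D} (ha : a ≠ 0) (hb : b ≠ 0)
    (heq : C a * q = C b * p) : Associated p q := by
  -- a divides b * (every coefficient of p)
  have hcoeff : ∀ i, a ∣ b * p.coeff i := by
    intro i
    have : C a ∣ C b * p := heq ▸ Dvd.intro q rfl
    have := (C_dvd_iff_dvd_coeff a (C b * p)).mp this i
    rwa [coeff_C_mul] at this
  set l : List D := (List.range (p.natDegree + 1)).map p.coeff with hl
  obtain ⟨a₁, a₂, hae, ha₁, ha₂⟩ := aux_riesz hps l b a ha (by
    rintro c hc
    simp only [hl, List.mem_map, List.mem_range] at hc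
    obtain ⟨i, _, rfl⟩ := hc
    exact hcoeff i)
  have ha₂p : C a₂ ∣ p := by
    rw [C_dvd_iff_dvd_coeff]
    intro i
    by_cases hi : i ≤ p.natDegree
    · exact ha₂ _ (by simp [hl]; exact ⟨i, hi, rfl⟩)
    · rw [p.coeff_eq_zero_of_natDegree_lt (lt_of_not_ge hi)]; exact dvd_zero _
  obtain ⟨h, hh⟩ := ha₂p
  have ha₂u : IsUnit a₂ := by
    rcases hp.isUnit_or_isUnit hh with hu | hu
    · exact isUnit_C.mp hu
    · exfalso
      apply hpd
      have ha₂0 : a₂ ≠ 0 := fun h0 => ha (by rw [hae, h0, mul_zero])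
      have hh0 : h ≠ 0 := fun h0 => hp.ne_zero (by rw [hh, h0, mul_zero])
      rw [hh, natDegree_mul (C_ne_zero.mpr ha₂0) hh0, natDegree_C,
        natDegree_eq_zero_of_isUnit hu]
  -- b = a₁ * t
  obtain ⟨t, ht⟩ := ha₁
  have ha₁0 : a₁ ≠ 0 := fun h0 => ha (by rw [hae, h0, zero_mul])
  -- cancel C a₁ from C a * q = C b * p
  have key : C a₂ * q = C t * p := by
    have : C a₁ * (C a₂ * q) = C a₁ * (C t * p) := by
      rw [← mul_assoc, ← mul_assoc, ← C_mul, ← C_mul, ← hae, ← ht, heq]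
    exact mul_left_cancel₀ (C_ne_zero.mpr ha₁0) this
  have hpq : p ∣ q := by
    obtain ⟨u, hu⟩ := (isUnit_C.mpr ha₂u)
    refine ⟨↑u⁻¹ * C t, ?_⟩
    have := congrArg (fun r => (↑u⁻¹ : Polynomial D) * r) key
    simp only [← hu] at this ⊢
    rw [← mul_assoc, ← mul_assoc] at this
    rw [Units.inv_mul] at this
    rw [one_mul] at this
    rw [this]; ring
  exact hp.associated_of_dvd hq hpq

/-- If an integral domain `D` is both pre-Schreier (every nonzero element is primal)
and IDF, then the polynomial ring `D[X]` is an IDF domain. -/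
theorem polynomial_isIDF_of_preSchreier_and_isIDF (D : Type*) [CommRing D] [IsDomain D]
    (hps : ∀ a : D, a ≠ 0 → ∀ b c : D, a ∣ b * c →
      ∃ a₁ a₂ : D, a = a₁ * a₂ ∧ a₁ ∣ b ∧ a₂ ∣ c)
    (hIDF : IsIDFDomain D) :
    IsIDFDomain (Polynomial D) := by
  intro g hg
  classical
  set S₀ : Set (Polynomial D) := {p | (Irreducible p ∧ p ∣ g) ∧ p.natDegree = 0} with hS₀
  set S₁ : Set (Polynomial D) := {p | (Irreducible p ∧ p ∣ g) ∧ p.natDegree ≠ 0} with hS₁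
  have hsplit : {p : Polynomial D | Irreducible p ∧ p ∣ g} = S₀ ∪ S₁ := by
    ext p; by_cases hd : p.natDegree = 0 <;> simp [hS₀, hS₁, hd]
  rw [hsplit, Set.image_union]
  refine Set.Finite.union ?_ ?_
  · -- degree-0 irreducible divisors
    refine aux_finite_mk_of_map S₀ (fun p => Associates.mk (p.coeff 0)) ?_ ?_
    · refine Set.Finite.subset (hIDF g.leadingCoeff (leadingCoeff_ne_zero.mpr hg)) ?_
      rintro _ ⟨p, ⟨⟨hirr, hdvd⟩, hdeg⟩, rfl⟩
      refine ⟨p.coeff 0, ⟨?_, ?_⟩, rfl⟩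
      · -- p.coeff 0 is irreducible in D
        have hpC : p = C (p.coeff 0) := p.eq_C_of_natDegree_eq_zero hdeg
        constructor
        · exact fun hu => hirr.not_isUnit (hpC ▸ isUnit_C.mpr hu)
        · intro x y hxy
          have : p = C x * C y := by rw [hpC, hxy, C_mul]
          rcases hirr.isUnit_or_isUnit this with hu | hu
          · exact Or.inl (isUnit_C.mp hu)
          · exact Or.inr (isUnit_C.mp hu)
      · -- p.coeff 0 divides the leading coefficient of g
        have hpC : p = C (p.coeff 0) := p.eq_C_of_natDegree_eq_zero hdeg
        have : C (p.coeff 0) ∣ g := hpC ▸ hdvd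
        exact (C_dvd_iff_dvd_coeff _ _).mp this g.natDegree
    · rintro p ⟨⟨hp, _⟩, hpd⟩ q ⟨⟨hq, _⟩, hqd⟩ h
      have hac : Associated (p.coeff 0) (q.coeff 0) := Associates.mk_eq_mk_iff_associated.mp h
      obtain ⟨u, hu⟩ := hac
      rw [p.eq_C_of_natDegree_eq_zero hpd, q.eq_C_of_natDegree_eq_zero hqd]
      obtain ⟨v, hv⟩ := isUnit_C.mpr u.isUnit
      exact ⟨v, by rw [hv, ← C_mul, hu]⟩
  · -- positive-degree irreducible divisors: map to the fraction field
    set K := FractionRing D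
    set φ : Polynomial D →+* Polynomial K := Polynomial.mapRingHom (algebraMap D K) with hφ
    have hinj : Function.Injective φ :=
      Polynomial.map_injective _ (IsFractionRing.injective D K)
    have hφg : φ g ≠ 0 := fun h0 => hg (hinj (by rw [h0, map_zero]))
    refine aux_finite_mk_of_map S₁ (fun p => Associates.mk (φ p)) ?_ ?_
    · refine Set.Finite.subset (aux_ufm_finite_divisors (φ g) hφg) ?_
      rintro _ ⟨p, ⟨⟨_, hdvd⟩, _⟩, rfl⟩
      exact ⟨φ p, map_dvd φ hdvd, rfl⟩
    · rintro p ⟨⟨hp, _⟩, hpd⟩ q ⟨⟨hq, _⟩, _⟩ h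
      have hassoc : Associated (φ p) (φ q) := Associates.mk_eq_mk_iff_associated.mp h
      obtain ⟨u, hu⟩ := hassoc
      -- u is a nonzero constant of K[X]
      obtain ⟨k, hk, hku⟩ := Polynomial.isUnit_iff.mp u.isUnit
      -- write k = a / b with a b : D
      obtain ⟨⟨a, b⟩, hab⟩ := IsLocalization.surj (nonZeroDivisors D) k
      have hb0 : (b : D) ≠ 0 := nonZeroDivisors.ne_zero b.2
      have hp0 : p ≠ 0 := hp.ne_zero
      -- φ (C b * q) = φ (C a * p)
      have heqK : φ (C (b : D) * q) = φ (C a * p) := by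
        have h1 : φ p * C k = φ q := by rw [hku, hu]
        have h2 : φ p * C k * C (algebraMap D K (b : D)) = φ q * C (algebraMap D K (b : D)) :=
          by rw [h1]
        rw [mul_assoc, ← C_mul, hab] at h2
        simp only [hφ, coe_mapRingHom] at h2
        simp only [hφ, coe_mapRingHom, Polynomial.map_mul, Polynomial.map_C]
        linear_combination -h2
      have heqD : C (b : D) * q = C a * p := hinj heqK
      have ha0 : a ≠ 0 := by
        rintro rfl
        rw [C_0, zero_mul, mul_eq_zero] at heqD
        rcases heqD with h | h
        · exact hb0 (C_eq_zero.mp h)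
        · exact hq.ne_zero h
      exact aux_assoc hps hp hq hpd hb0 ha0 heqD
end

section
/- Let D be a GCD domain that is also an IDF domain. Then the polynomial ring D[X] is an IDF domain. -/
open Polynomial

section Aux

theorem Associated.mapHom {M N : Type*} [Monoid M] [Monoid N] (f : M →* N) {a b : M}
    (h : Associated a b) : Associated (f a) (f b) := by
  obtain ⟨u, rfl⟩ := h
  exact ⟨Units.map f u, by simp⟩

theorem Associates.mk_quotOut {M : Type*} [CommMonoid M] (a : Associates M) :
    Associates.mk (Quotient.out a) = a := by
  rw [← Associates.quotient_mk_eq_mk, Quotient.out_eq]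

theorem Associates.quotOut_associated {M : Type*} [CommMonoid M] (r : M) :
    Associated (Quotient.out (Associates.mk r)) r :=
  Associates.mk_eq_mk_iff_associated.mp (by rw [Associates.mk_quotOut])

variable {D : Type*} [CommMonoidWithZero D] [GCDMonoid D]

/-- gcd of a list of elements. -/
noncomputable def lgcd : List D → D
  | [] => 0
  | a :: l => gcd a (lgcd l)

theorem lgcd_dvd : ∀ (l : List D), ∀ x ∈ l, lgcd l ∣ x
  | a :: l, x, hx => by
    rcases List.mem_cons.1 hx with rfl | hx
    · exact gcd_dvd_left _ _
    · exact (gcd_dvd_right _ _).trans (lgcd_dvd l x hx)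

theorem dvd_lgcd {d : D} : ∀ (l : List D), (∀ x ∈ l, d ∣ x) → d ∣ lgcd l
  | [], _ => dvd_zero d
  | a :: l, h =>
    dvd_gcd (h a List.mem_cons_self)
      (dvd_lgcd l fun x hx => h x (List.mem_cons_of_mem a hx))

theorem gcd_congr_right {a x y : D} (h : Associated x y) :
    Associated (gcd a x) (gcd a y) :=
  associated_of_dvd_dvd
    (dvd_gcd (gcd_dvd_left _ _) ((gcd_dvd_right a x).trans h.dvd))
    (dvd_gcd (gcd_dvd_left _ _) ((gcd_dvd_right a y).trans h.symm.dvd))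

theorem lgcd_map_mul (a : D) : ∀ l : List D, Associated (lgcd (l.map (a * ·))) (a * lgcd l)
  | [] => by simp [lgcd]
  | b :: l => by
    simp only [List.map_cons]
    show Associated (gcd (a * b) (lgcd (l.map (a * ·)))) (a * gcd b (lgcd l))
    exact (gcd_congr_right (lgcd_map_mul a l)).trans (gcd_mul_left' a b (lgcd l))

end Aux

section Content

variable {D : Type*} [CommRing D] [IsDomain D] [GCDMonoid D]

/-- A "content" of a polynomial: gcd of its coefficients. -/
noncomputable def pcont (p : D[X]) : D :=
  lgcd ((List.range (p.natDegree + 1)).map p.coeff)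

theorem dvd_pcont_iff (d : D) (p : D[X]) : d ∣ pcont p ↔ C d ∣ p := by
  rw [C_dvd_iff_dvd_coeff]
  constructor
  · intro h i
    by_cases hi : i ≤ p.natDegree
    · refine h.trans (lgcd_dvd _ _ ?_)
      exact List.mem_map_of_mem (List.mem_range.mpr (Nat.lt_succ_of_le hi))
    · rw [p.coeff_eq_zero_of_natDegree_lt (lt_of_not_ge hi)]
      exact dvd_zero d
  · intro h
    refine dvd_lgcd _ ?_
    intro x hx
    obtain ⟨i, -, rfl⟩ := List.mem_map.mp hx
    exact h i

theorem pcont_C_mul {a : D} (ha : a ≠ 0) (p : D[X]) :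
    Associated (pcont (C a * p)) (a * pcont p) := by
  have hdeg : (C a * p).natDegree = p.natDegree := by
    rcases eq_or_ne p 0 with rfl | hp
    · simp
    · exact natDegree_C_mul ha
  have hlist : (List.range ((C a * p).natDegree + 1)).map (C a * p).coeff =
      ((List.range (p.natDegree + 1)).map p.coeff).map (a * ·) := by
    rw [hdeg, List.map_map]
    refine List.map_congr_left ?_
    intro i _
    simp [coeff_C_mul]
  rw [pcont, hlist]
  exact lgcd_map_mul a _

theorem isUnit_pcont_of_irreducible {p : D[X]} (hp : Irreducible p)
    (hd : 0 < p.natDegree) : IsUnit (pcont p) := by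
  obtain ⟨r, hr⟩ := (dvd_pcont_iff (pcont p) p).mp dvd_rfl
  rcases hp.isUnit_or_isUnit hr with h | h
  · exact isUnit_C.mp h
  · exfalso
    obtain ⟨k, hk, hCk⟩ := Polynomial.isUnit_iff.mp h
    rw [← hCk, ← C_mul] at hr
    rw [hr, natDegree_C] at hd
    exact absurd hd (lt_irrefl 0)

/-- descent of associatedness from the fraction field. -/
theorem associated_of_map_associated {K : Type*} [Field K] [Algebra D K] [IsFractionRing D K]
    {p q : D[X]} (hp : Irreducible p) (hq : Irreducible q)
    (hpd : 0 < p.natDegree) (hqd : 0 < q.natDegree)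
    (h : Associated (p.map (algebraMap D K)) (q.map (algebraMap D K))) :
    Associated p q := by
  have hinj : Function.Injective (algebraMap D K) := IsFractionRing.injective D K
  have hmapinj : Function.Injective (Polynomial.map (algebraMap D K)) :=
    Polynomial.map_injective _ hinj
  obtain ⟨u, hu⟩ := h
  obtain ⟨k, hk, hCk⟩ := Polynomial.isUnit_iff.mp u.isUnit
  obtain ⟨s, t, ht, hst⟩ := IsFractionRing.div_surjective (A := D) k
  have ht0 : (t : D) ≠ 0 := fun h0 => by
    exact absurd (h0 ▸ ht) (fun hh => zero_notMem_nonZeroDivisors hh)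
  have htK : algebraMap D K t ≠ 0 := fun h0 => ht0 (hinj (by simpa using h0))
  -- from hu : p.map * u = q.map
  have key : q * C t = p * C s := by
    apply hmapinj
    rw [Polynomial.map_mul, Polynomial.map_mul, map_C, map_C]
    have : k * algebraMap D K t = algebraMap D K s := by
      rw [← hst, div_mul_cancel₀ _ htK]
    rw [← hu, ← hCk, mul_assoc, ← C_mul, this]
  have hs0 : s ≠ 0 := by
    intro h0
    rw [h0, C_0, mul_zero, mul_eq_zero] at key
    rcases key with h1 | h1
    · exact hq.ne_zero h1
    · exact ht0 (C_eq_zero.mp h1)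
  -- contents
  have hcq : Associated (pcont (q * C t)) ((t : D) * pcont q) := by
    rw [mul_comm]; exact pcont_C_mul ht0 q
  have hcp : Associated (pcont (p * C s)) (s * pcont p) := by
    rw [mul_comm]; exact pcont_C_mul hs0 p
  have hts : Associated (t : D) s := by
    have h1 : Associated ((t : D) * pcont q) (t : D) :=
      associated_mul_unit_left _ _ (isUnit_pcont_of_irreducible hq hqd)
    have h2 : Associated (s * pcont p) s :=
      associated_mul_unit_left _ _ (isUnit_pcont_of_irreducible hp hpd)
    have hmid : Associated (pcont (q * C t)) s := by
      rw [key]; exact hcp.trans h2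
    exact h1.symm.trans (hcq.symm.trans hmid)
  obtain ⟨w, hw⟩ := hts
  have key2 : q * C t = p * C (w : D) * C t := by
    rw [key, ← hw, C_mul]; ring
  have hq_eq : q = p * C (w : D) :=
    mul_right_cancel₀ (by simpa using ht0) key2
  exact ⟨Units.map (C : D →+* D[X]).toMonoidHom w, by simpa using hq_eq.symm⟩

end Content

/-- In a UFD, a nonzero element has finitely many divisors up to associates. -/
theorem finite_divisors_of_ufd {A : Type*} [CommMonoidWithZero A]
    [UniqueFactorizationMonoid A] {g : A} (hg : g ≠ 0) :
    (Associates.mk '' {d : A | d ∣ g}).Finite := by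
  classical
  haveI : Nontrivial A := nontrivial_of_ne g 0 hg
  set s₀ := Associates.factors' g with hs₀
  have hsub : Associates.mk '' {d : A | d ∣ g} ⊆
      (fun s : Multiset {a : Associates A // Irreducible a} =>
        Associates.FactorSet.prod (s : Associates.FactorSet A)) '' {s | s ∈ s₀.powerset} := by
    rintro _ ⟨d, hd, rfl⟩
    have hd0 : d ≠ 0 := fun h0 => hg (by simpa [h0] using hd)
    have hle : (Associates.mk d).factors ≤ (Associates.mk g).factors :=
      Associates.factors_mono (Associates.mk_le_mk_iff_dvd.mpr hd)
    rw [Associates.factors_mk d hd0, Associates.factors_mk g hg] at hle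
    have hle' : Associates.factors' d ≤ s₀ := WithTop.coe_le_coe.mp hle
    refine ⟨Associates.factors' d, Multiset.mem_powerset.mpr hle', ?_⟩
    have := Associates.factors_prod (Associates.mk d)
    rw [Associates.factors_mk d hd0] at this
    exact this
  exact ((s₀.powerset.finite_toSet).image _).subset hsub

/-- If `D` is a GCD domain that is also an IDF domain, then the polynomial ring `D[X]`
is an IDF domain. -/
theorem polynomial_isIDF_of_gcd_and_isIDF (D : Type*) [CommRing D] [IsDomain D]
    [GCDMonoid D] (hIDF : IsIDFDomain D) :
    IsIDFDomain (Polynomial D) := by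
  classical
  intro f hf
  set K := FractionRing D with hK
  have hinj : Function.Injective (algebraMap D K) := IsFractionRing.injective D K
  have hmapinj : Function.Injective (Polynomial.map (algebraMap D K)) :=
    Polynomial.map_injective _ hinj
  have hFf : f.map (algebraMap D K) ≠ 0 := fun h => hf (hmapinj (by simpa using h))
  have hlead : f.leadingCoeff ≠ 0 := leadingCoeff_ne_zero.mpr hf
  -- split into constant and positive-degree irreducible divisors
  have hsplit : {p : D[X] | Irreducible p ∧ p ∣ f} ⊆
      {p : D[X] | Irreducible p ∧ p ∣ f ∧ p.natDegree = 0} ∪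
      {p : D[X] | Irreducible p ∧ p ∣ f ∧ 0 < p.natDegree} := by
    rintro p ⟨h1, h2⟩
    rcases Nat.eq_zero_or_pos p.natDegree with h | h
    · exact Or.inl ⟨h1, h2, h⟩
    · exact Or.inr ⟨h1, h2, h⟩
  refine Set.Finite.subset ?_ ((Set.image_mono hsplit).trans
    (Set.image_union _ _ _).le)
  refine Set.Finite.union ?_ ?_
  -- constant part
  · set G : Associates D → Associates D[X] :=
      fun a => Associates.mk (C (Quotient.out a)) with hG
    have hGmk : ∀ c : D, G (Associates.mk c) = Associates.mk (C c) := by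
      intro c
      apply Associates.mk_eq_mk_iff_associated.mpr
      exact (Associates.quotOut_associated c).mapHom (C : D →+* D[X]).toMonoidHom
    refine Set.Finite.subset ((hIDF _ hlead).image G) ?_
    rintro _ ⟨p, ⟨hp, hdvd, hdeg⟩, rfl⟩
    set c := p.coeff 0 with hc
    have hpc : p = C c := p.eq_C_of_natDegree_eq_zero hdeg
    have hcirr : Irreducible c := by
      constructor
      · intro h; exact hp.not_isUnit (by rw [hpc]; exact isUnit_C.mpr h)
      · intro a b hab
        have : p = C a * C b := by rw [hpc, hab, C_mul]
        rcases hp.isUnit_or_isUnit this with h | h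
        · exact Or.inl (isUnit_C.mp h)
        · exact Or.inr (isUnit_C.mp h)
    have hcdvd : c ∣ f.leadingCoeff := by
      have : C c ∣ f := hpc ▸ hdvd
      exact (C_dvd_iff_dvd_coeff c f).mp this f.natDegree
    refine ⟨Associates.mk c, ⟨c, ⟨hcirr, hcdvd⟩, rfl⟩, ?_⟩
    rw [hGmk c, hpc]
  -- positive-degree part
  · set Ψ : Associates D[X] → Associates (K[X]) :=
      fun a => Associates.mk ((Quotient.out a).map (algebraMap D K)) with hΨ
    have hΨmk : ∀ r : D[X], Ψ (Associates.mk r) =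
        Associates.mk (r.map (algebraMap D K)) := by
      intro r
      apply Associates.mk_eq_mk_iff_associated.mpr
      exact (Associates.quotOut_associated r).mapHom (mapRingHom (algebraMap D K)).toMonoidHom
    refine Set.Finite.of_finite_image ?_ ?_ (f := Ψ)
    · refine Set.Finite.subset (finite_divisors_of_ufd hFf) ?_
      rintro _ ⟨_, ⟨p, ⟨hp, hdvd, hdeg⟩, rfl⟩, rfl⟩
      rw [hΨmk p]
      exact ⟨p.map (algebraMap D K), Polynomial.map_dvd _ hdvd, rfl⟩
    · rintro _ ⟨p, ⟨hp, hpdvd, hpdeg⟩, rfl⟩ _ ⟨q, ⟨hq, hqdvd, hqdeg⟩, rfl⟩ heq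
      rw [hΨmk p, hΨmk q] at heq
      have hass := Associates.mk_eq_mk_iff_associated.mp heq
      exact Associates.mk_eq_mk_iff_associated.mpr
        (associated_of_map_associated hp hq hpdeg hqdeg hass)
end

section
/- The additive monoid C = {x ∈ ℚ : 1 ≤ x} ∪ {0} (a submonoid of (ℚ, +)) is not MCD-finite: there exists a finite subset of its nonzero elements having infinitely many maximal common divisors (which here are automatically pairwise non-associate since C has no nontrivial units). -/
/-- Divisibility in an additively-written commutative monoid: `a` divides `b` if
`b = a + c` for some `c`. -/
def AddDvd {M : Type*} [AddCommMonoid M] (a b : M) : Prop :=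
  ∃ c : M, b = a + c

/-- Two elements of an additively-written commutative monoid are associates if they
differ by an additive unit of the monoid. -/
def AddAssociated {M : Type*} [AddCommMonoid M] (a b : M) : Prop :=
  ∃ u : AddUnits M, a + u = b

/-- `c` is a *maximal common divisor* (MCD) of the set `T` in an additively-written
commutative monoid. -/
def IsAddMCD {M : Type*} [AddCommMonoid M] (T : Set M) (c : M) : Prop :=
  (∀ t ∈ T, AddDvd c t) ∧ ∀ d : M, (∀ t ∈ T, AddDvd d t) → AddDvd c d → AddAssociated c d

/-- An additively-written commutative monoid is *MCD-finite* if every finite subset of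
its nonzero (i.e. non-identity) elements has only finitely many maximal common divisors
up to associates. -/
def AddMCDFinite (M : Type*) [AddCommMonoid M] : Prop :=
  ∀ T : Set M, T.Finite → (∀ t ∈ T, t ≠ 0) →
    ∃ F : Set M, F.Finite ∧ ∀ c : M, IsAddMCD T c → ∃ f ∈ F, AddAssociated c f

/-- The additive submonoid `C = {x ∈ ℚ : 1 ≤ x} ∪ {0}` of `(ℚ, +)`. -/
def ratGEOneMonoid : AddSubmonoid ℚ where
  carrier := {x : ℚ | 1 ≤ x} ∪ {0}
  zero_mem' := Or.inr rfl
  add_mem' := by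
    rintro a b (ha | ha) (hb | hb)
    · exact Or.inl (by simp only [Set.mem_setOf_eq] at *; linarith)
    · rw [Set.mem_singleton_iff] at hb; subst hb; rw [add_zero]; exact Or.inl ha
    · rw [Set.mem_singleton_iff] at ha; subst ha; rw [zero_add]; exact Or.inl hb
    · rw [Set.mem_singleton_iff] at ha hb; subst ha; subst hb
      exact Or.inr (by simp)

lemma memC {x : ℚ} : x ∈ ratGEOneMonoid ↔ 1 ≤ x ∨ x = 0 := by
  change x ∈ {x : ℚ | 1 ≤ x} ∪ {0} ↔ _
  simp [Set.mem_union, or_comm]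

lemma triv_assoc : ∀ a b : ratGEOneMonoid, AddAssociated a b → a = b := by
  rintro a b ⟨u, hu⟩
  have h0 : ((u : ratGEOneMonoid) : ℚ) + (((-u : AddUnits ratGEOneMonoid) : ratGEOneMonoid) : ℚ) = 0 := by
    have h := congrArg (fun z : ratGEOneMonoid => (z : ℚ)) u.add_neg
    push_cast at h; exact h
  have hx := memC.mp (u : ratGEOneMonoid).2
  have hy := memC.mp ((-u : AddUnits ratGEOneMonoid) : ratGEOneMonoid).2
  have hu0 : ((u : ratGEOneMonoid) : ℚ) = 0 := by
    rcases hx with hx | hx <;> rcases hy with hy | hy <;> linarith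
  rw [← hu]
  apply Subtype.ext
  push_cast
  simp [hu0]

lemma coe_add_val (a b : ratGEOneMonoid) (h : AddDvd a b) :
    (b : ℚ) = a ∨ 1 ≤ (b : ℚ) - a := by
  obtain ⟨c, hc⟩ := h
  have hv := congrArg (fun z : ratGEOneMonoid => (z : ℚ)) hc
  push_cast at hv
  rcases memC.mp c.2 with h1 | h0
  · right; linarith
  · left; rw [hv, h0, add_zero]

lemma dvd_of (a b : ratGEOneMonoid) (h : (b : ℚ) - a ∈ ratGEOneMonoid) : AddDvd a b :=
  ⟨⟨(b : ℚ) - a, h⟩, Subtype.ext (by push_cast; ring)⟩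

def t3 : ratGEOneMonoid := ⟨3, memC.mpr (Or.inl (by norm_num))⟩
def t7 : ratGEOneMonoid := ⟨7/2, memC.mpr (Or.inl (by norm_num))⟩
def Tset : Set ratGEOneMonoid := {t3, t7}

lemma t3_val : (t3 : ℚ) = 3 := rfl
lemma t7_val : (t7 : ℚ) = 7/2 := rfl

lemma mcd_of (c : ratGEOneMonoid) (h1 : 1 < (c : ℚ)) (h2 : (c : ℚ) ≤ 2) :
    IsAddMCD Tset c := by
  constructor
  · rintro t ht
    rcases ht with rfl | rfl
    · exact dvd_of c t3 (memC.mpr (Or.inl (by rw [t3_val]; linarith)))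
    · exact dvd_of c t7 (memC.mpr (Or.inl (by rw [t7_val]; linarith)))
  · intro d hd hcd
    obtain ⟨e, he⟩ := hcd
    have hv := congrArg (fun z : ratGEOneMonoid => (z : ℚ)) he
    push_cast at hv
    rcases memC.mp e.2 with he1 | he0
    · exfalso
      have hd3 := coe_add_val d t3 (hd t3 (Or.inl rfl))
      have hd7 := coe_add_val d t7 (hd t7 (Or.inr rfl))
      rw [t3_val] at hd3
      rw [t7_val] at hd7
      rcases hd3 with h3 | h3 <;> rcases hd7 with h7 | h7 <;> linarith
    · refine ⟨0, ?_⟩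
      have he' : e = 0 := Subtype.ext he0
      rw [he', add_zero] at he
      rw [he]
      simp

lemma half_le (n : ℕ) : (1:ℚ)/((n:ℚ)+2) ≤ 1/2 := by
  rw [div_le_div_iff₀ (by positivity) (by norm_num)]
  push_cast; linarith

lemma mcd_infinite : {c : ratGEOneMonoid | IsAddMCD Tset c}.Infinite := by
  apply Set.infinite_of_injective_forall_mem
    (f := fun n : ℕ => (⟨2 - 1/(n+2), memC.mpr (Or.inl (by
      have h2 := half_le n
      linarith))⟩ : ratGEOneMonoid))
  case hi =>
    intro m n hmn
    have hv := congrArg (fun z : ratGEOneMonoid => (z : ℚ)) hmn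
    push_cast at hv
    have hm : (0:ℚ) < (m:ℚ) + 2 := by positivity
    have hn : (0:ℚ) < (n:ℚ) + 2 := by positivity
    have h : (1:ℚ)/((m:ℚ)+2) = 1/((n:ℚ)+2) := by linarith
    field_simp at h
    have hmn' : (m:ℚ) = n := by linarith
    exact_mod_cast hmn'
  case hf =>
    intro n
    have h2 := half_le n
    have h3 : (0:ℚ) < 1/((n:ℚ)+2) := by positivity
    exact mcd_of _ (by simp only; push_cast; linarith) (by simp only; push_cast; linarith)

/-- The additive monoid `C = {x ∈ ℚ : 1 ≤ x} ∪ {0}` has no nontrivial units (so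
associates coincide with equality), and it is not MCD-finite: there is a finite subset
of its nonzero elements having infinitely many maximal common divisors. -/
theorem ratGEOneMonoid_not_addMCDFinite :
    (∀ a b : ratGEOneMonoid, AddAssociated a b → a = b) ∧
    (∃ T : Set ratGEOneMonoid, T.Finite ∧ (∀ t ∈ T, t ≠ 0) ∧
      {c : ratGEOneMonoid | IsAddMCD T c}.Infinite) ∧
    ¬ AddMCDFinite ratGEOneMonoid := by
  have hT0 : ∀ t ∈ Tset, t ≠ 0 := by
    rintro t (rfl | rfl) h <;>
    · have := congrArg (fun z : ratGEOneMonoid => (z : ℚ)) h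
      simp [t3, t7] at this
  have hTfin : Tset.Finite := (Set.finite_singleton t7).insert t3
  refine ⟨triv_assoc, ⟨Tset, hTfin, hT0, mcd_infinite⟩, ?_⟩
  intro h
  obtain ⟨F, hFfin, hF⟩ := h Tset hTfin hT0
  refine mcd_infinite (hFfin.subset ?_)
  intro c hc
  obtain ⟨f, hfF, hcf⟩ := hF c hc
  rwa [triv_assoc c f hcf]
end

section
/- Let S be a commutative cancellative torsion-free reduced monoid and suppose there exist s, t ∈ S such that the set of maximal common divisors of {s, t} contains two distinct (hence non-associate) elements b and d. Then the direct product monoid T = ∏_{i ∈ ℕ} S is cancellative, torsion-free, and reduced, but T is not MCD-finite: the elements s' and t' of T all of whose components equal s (respectively t) have infinitely many pairwise distinct maximal common divisors, namely the elements c_i having b in the i-th place and d in all other places. -/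
/-- Let `S` be a commutative cancellative torsion-free reduced (additive) monoid in
which some pair `{s, t}` has two distinct maximal common divisors `b` and `d`. Then the
direct product `T = ∏_{i ∈ ℕ} S` is cancellative, torsion-free and reduced, and the
constant tuples `s'`, `t'` (with all components `s`, resp. `t`) admit the infinitely
many pairwise distinct maximal common divisors `c i` (having `b` in the `i`-th place
and `d` elsewhere); in particular `T` is not MCD-finite. -/
theorem pi_monoid_not_addMCDFinite (S : Type*) [AddCancelCommMonoid S]
    (htf : ∀ n : ℕ, n ≠ 0 → ∀ a b : S, n • a = n • b → a = b)
    (hred : ∀ a b : S, a + b = 0 → a = 0 ∧ b = 0)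
    (s t b d : S)
    (hb : IsAddMCD ({s, t} : Set S) b) (hd : IsAddMCD ({s, t} : Set S) d)
    (hbd : b ≠ d) :
    (∀ x y z : ℕ → S, x + y = x + z → y = z) ∧
    (∀ n : ℕ, n ≠ 0 → ∀ x y : ℕ → S, n • x = n • y → x = y) ∧
    (∀ x y : ℕ → S, x + y = 0 → x = 0 ∧ y = 0) ∧
    (∀ i : ℕ, IsAddMCD ({fun _ => s, fun _ => t} : Set (ℕ → S))
      (fun j => if j = i then b else d)) ∧
    Function.Injective (fun i : ℕ => (fun j => if j = i then b else d : ℕ → S)) ∧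
    ¬ AddMCDFinite (ℕ → S) := by

  have assoc_eq : ∀ a c : S, AddAssociated a c → a = c := by
    rintro a c ⟨u, hu⟩
    have : (u : S) = 0 := (hred u.val u.neg u.val_neg).1
    rw [this, add_zero] at hu; exact hu
  have assoc_eq_T : ∀ a c : ℕ → S, AddAssociated a c → a = c := by
    rintro a c ⟨u, hu⟩
    have : (u : ℕ → S) = 0 := by
      funext j
      exact (hred (u.val j) (u.neg j) (congrFun u.val_neg j)).1
    rw [this, add_zero] at hu; exact hu
  obtain ⟨ubs, hubs⟩ := hb.1 s (Set.mem_insert _ _)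
  obtain ⟨ubt, hubt⟩ := hb.1 t (Set.mem_insert_of_mem _ rfl)
  obtain ⟨uds, huds⟩ := hd.1 s (Set.mem_insert _ _)
  obtain ⟨udt, hudt⟩ := hd.1 t (Set.mem_insert_of_mem _ rfl)
  have hs0 : s ≠ 0 := by
    intro h
    apply hbd
    rw [(hred b ubs (h ▸ hubs.symm)).1, (hred d uds (h ▸ huds.symm)).1]
  have hMCD : ∀ i : ℕ, IsAddMCD ({fun _ => s, fun _ => t} : Set (ℕ → S))
      (fun j => if j = i then b else d) := by
    intro i
    constructor
    · rintro x (rfl | rfl)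
      · exact ⟨fun j => if j = i then ubs else uds, funext fun j => by
          by_cases h : j = i <;> simp [h, ← hubs, ← huds]⟩
      · exact ⟨fun j => if j = i then ubt else udt, funext fun j => by
          by_cases h : j = i <;> simp [h, ← hubt, ← hudt]⟩
    · intro e he hce
      obtain ⟨ws, hws⟩ := he _ (Set.mem_insert _ _)
      obtain ⟨wt, hwt⟩ := he _ (Set.mem_insert_of_mem _ rfl)
      obtain ⟨wc, hwc⟩ := hce
      have heq : (fun j => if j = i then b else d) = e := by
        funext j
        have h1 : AddDvd (e j) s := ⟨ws j, congrFun hws j⟩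
        have h2 : AddDvd (e j) t := ⟨wt j, congrFun hwt j⟩
        have h3 : AddDvd (if j = i then b else d) (e j) := ⟨wc j, congrFun hwc j⟩
        have hcom : ∀ x ∈ ({s, t} : Set S), AddDvd (e j) x := by
          rintro x (rfl | rfl); exacts [h1, h2]
        by_cases h : j = i
        · rw [if_pos h] at h3 ⊢
          exact assoc_eq _ _ (hb.2 (e j) hcom h3)
        · rw [if_neg h] at h3 ⊢
          exact assoc_eq _ _ (hd.2 (e j) hcom h3)
      exact ⟨0, by rw [heq]; simp⟩
  have hinj : Function.Injective
      (fun i : ℕ => (fun j => if j = i then b else d : ℕ → S)) := by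
    intro i j h
    by_contra hne
    have := congrFun h i
    simp only [if_pos rfl, if_neg hne] at this
    exact hbd this
  refine ⟨fun x y z h => funext fun j => add_left_cancel (congrFun h j),
    fun n hn x y h => funext fun j => htf n hn (x j) (y j) (congrFun h j),
    fun x y h => ⟨funext fun j => (hred (x j) (y j) (congrFun h j)).1,
      funext fun j => (hred (x j) (y j) (congrFun h j)).2⟩,
    hMCD, hinj, ?_⟩
  intro hfin
  have ht0 : t ≠ 0 := by
    intro h
    apply hbd
    rw [(hred b ubt (h ▸ hubt.symm)).1, (hred d udt (h ▸ hudt.symm)).1]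
  obtain ⟨F, hFfin, hFcov⟩ := hfin ({fun _ => s, fun _ => t} : Set (ℕ → S))
    (Set.Finite.insert _ (Set.finite_singleton _))
    (by rintro x (rfl | rfl)
        · exact fun h => hs0 (congrFun h 0)
        · exact fun h => ht0 (congrFun h 0))
  have hsub : Set.range (fun i : ℕ => (fun j => if j = i then b else d : ℕ → S)) ⊆ F := by
    rintro _ ⟨i, rfl⟩
    obtain ⟨f, hf, hassoc⟩ := hFcov _ (hMCD i)
    show (fun j => if j = i then b else d) ∈ F
    rwa [assoc_eq_T _ _ hassoc]
  exact (Set.infinite_range_of_injective hinj) (hFfin.subset hsub)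
end

section
/- Let D be an integral domain and let S be a torsion-free cancellative commutative monoid that is not MCD-finite. Then the monoid ring R = D[X; S] is an integral domain that is not MCD-finite. -/
set_option linter.unusedSectionVars false

namespace MCDAux

variable {M : Type*} [AddCancelCommMonoid M]

def GrRel (p q : M × M) : Prop := p.1 + q.2 = q.1 + p.2

theorem grRel_equiv : Equivalence (GrRel (M := M)) where
  refl _ := rfl
  symm h := h.symm
  trans {p q r} h1 h2 := by
    have key : p.1 + r.2 + q.2 = r.1 + p.2 + q.2 := by
      calc p.1 + r.2 + q.2 = (p.1 + q.2) + r.2 := by abel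
        _ = (q.1 + p.2) + r.2 := by rw [h1]
        _ = (q.1 + r.2) + p.2 := by abel
        _ = (r.1 + q.2) + p.2 := by rw [h2]
        _ = r.1 + p.2 + q.2 := by abel
    exact add_right_cancel key

instance grSetoid (M : Type*) [AddCancelCommMonoid M] : Setoid (M × M) :=
  ⟨GrRel, grRel_equiv⟩

abbrev Gr (M : Type*) [AddCancelCommMonoid M] := Quotient (grSetoid M)

theorem gr_add_wd : ∀ (p p' : M × M), p ≈ p' → ∀ (q q' : M × M), q ≈ q' → (p + q) ≈ (p' + q') := by
  rintro ⟨a1, a2⟩ ⟨c1, c2⟩ hp ⟨b1, b2⟩ ⟨d1, d2⟩ hq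
  have hp' : a1 + c2 = c1 + a2 := hp
  have hq' : b1 + d2 = d1 + b2 := hq
  show (a1 + b1) + (c2 + d2) = (c1 + d1) + (a2 + b2)
  calc (a1 + b1) + (c2 + d2) = (a1 + c2) + (b1 + d2) := by abel
    _ = (c1 + a2) + (d1 + b2) := by rw [hp', hq']
    _ = (c1 + d1) + (a2 + b2) := by abel

instance : Add (Gr M) := ⟨Quotient.map₂ (· + ·) gr_add_wd⟩
instance : Zero (Gr M) := ⟨⟦((0 : M), (0 : M))⟧⟩
instance : Neg (Gr M) :=
  ⟨Quotient.map Prod.swap (by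
    rintro ⟨a1, a2⟩ ⟨b1, b2⟩ h
    have h' : a1 + b2 = b1 + a2 := h
    show a2 + b1 = b2 + a1
    rw [add_comm a2, add_comm b2]
    exact h'.symm)⟩

theorem gr_add_mk (p q : M × M) : (⟦p⟧ + ⟦q⟧ : Gr M) = ⟦p + q⟧ := rfl

instance : AddCommGroup (Gr M) where
  add_assoc := by rintro ⟨a⟩ ⟨b⟩ ⟨c⟩; exact congrArg (Quotient.mk _) (add_assoc a b c)
  zero_add := by rintro ⟨a⟩; exact congrArg (Quotient.mk _) (zero_add a)
  add_zero := by rintro ⟨a⟩; exact congrArg (Quotient.mk _) (add_zero a)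
  add_comm := by rintro ⟨a⟩ ⟨b⟩; exact congrArg (Quotient.mk _) (add_comm a b)
  neg_add_cancel := by
    rintro ⟨⟨a1, a2⟩⟩
    apply Quotient.sound
    show (a2 + a1) + 0 = 0 + (a1 + a2)
    rw [add_zero, zero_add, add_comm]
  nsmul := nsmulRec
  zsmul := zsmulRec

def toGr : M → Gr M := fun a => ⟦(a, 0)⟧

theorem toGr_add (a b : M) : toGr (a + b) = toGr a + toGr b := by
  apply Quotient.sound
  show (a + b) + (0 + 0) = (a + b) + 0
  rw [zero_add]

theorem toGr_injective : Function.Injective (toGr (M := M)) := by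
  intro a b h
  have h' : a + 0 = b + 0 := Quotient.exact h
  simpa using h'

theorem gr_nsmul_mk (n : ℕ) (p : M × M) : n • (⟦p⟧ : Gr M) = ⟦(n • p.1, n • p.2)⟧ := by
  induction n with
  | zero =>
    rw [zero_nsmul, zero_nsmul, zero_nsmul]
    rfl
  | succ n ih =>
    rw [succ_nsmul, ih, gr_add_mk]
    exact congrArg (Quotient.mk _) (by rw [succ_nsmul, succ_nsmul]; rfl)

theorem gr_nsmul_cancel (htf : ∀ n : ℕ, n ≠ 0 → ∀ a b : M, n • a = n • b → a = b)
    {n : ℕ} (hn : n ≠ 0) {x y : Gr M} (h : n • x = n • y) : x = y := by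
  obtain ⟨p, rfl⟩ := Quotient.exists_rep x
  obtain ⟨q, rfl⟩ := Quotient.exists_rep y
  rw [gr_nsmul_mk, gr_nsmul_mk] at h
  have h' : n • p.1 + n • q.2 = n • q.1 + n • p.2 := Quotient.exact h
  rw [← smul_add, ← smul_add] at h'
  exact Quotient.sound (htf n hn _ _ h')

theorem gr_zsmul_cancel (htf : ∀ n : ℕ, n ≠ 0 → ∀ a b : M, n • a = n • b → a = b)
    {n : ℤ} (hn : n ≠ 0) {x y : Gr M} (h : n • x = n • y) : x = y := by
  rcases le_or_gt 0 n with h0 | h0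
  · lift n to ℕ using h0
    rw [natCast_zsmul, natCast_zsmul] at h
    exact gr_nsmul_cancel htf (by exact_mod_cast hn) h
  · have h2 : (-n) • x = (-n) • y := by rw [neg_zsmul, neg_zsmul, h]
    obtain ⟨m, hm⟩ : ∃ m : ℕ, (m : ℤ) = -n := ⟨(-n).toNat, Int.toNat_of_nonneg (by omega)⟩
    rw [← hm, natCast_zsmul, natCast_zsmul] at h2
    exact gr_nsmul_cancel htf (n := m) (by omega) h2

theorem twoUniqueSums_of_torsionFree (M : Type*) [AddCancelCommMonoid M]
    (htf : ∀ n : ℕ, n ≠ 0 → ∀ a b : M, n • a = n • b → a = b) : TwoUniqueSums M := by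
  classical
  set K := FractionRing ℤ with hK
  set V := LocalizedModule (nonZeroDivisors ℤ) (Gr M) with hV
  haveI : CharZero K := ⟨fun m n h => by
    have h2 : algebraMap ℤ K (m : ℤ) = algebraMap ℤ K (n : ℤ) := by
      rw [map_natCast, map_natCast]; exact h
    exact_mod_cast IsFractionRing.injective ℤ K h2⟩
  letI : Module K V := inferInstanceAs (Module (Localization (nonZeroDivisors ℤ)) V)
  letI : Module ℚ V := Module.compHom V (algebraMap ℚ K)
  haveI hVu : TwoUniqueSums V := inferInstance
  have hadd : ∀ a b : M, (LocalizedModule.mk (toGr (a + b)) 1 : V)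
      = LocalizedModule.mk (toGr a) 1 + LocalizedModule.mk (toGr b) 1 := fun a b => by
    rw [toGr_add, LocalizedModule.mk_add_mk]
    simp
  have hinj : Function.Injective (fun a : M => (LocalizedModule.mk (toGr a) 1 : V)) := by
    intro a b h
    simp only at h
    rw [LocalizedModule.mk_eq] at h
    obtain ⟨u, hu⟩ := h
    simp only [one_smul] at hu
    rw [Submonoid.smul_def, Submonoid.smul_def] at hu
    exact toGr_injective (gr_zsmul_cancel htf (nonZeroDivisors.ne_zero u.2) hu)
  exact TwoUniqueSums.of_injective_addHom ⟨_, hadd⟩ hinj hVu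

section MA

open AddMonoidAlgebra

variable {D : Type*} [CommRing D] [IsDomain D] {S : Type*} [AddCancelCommMonoid S]
  [TwoUniqueSums S]

theorem ma_single_eq_single_iff (a₁ a₂ : S) (b₁ b₂ : D) :
    (single a₁ b₁ : AddMonoidAlgebra D S) = single a₂ b₂ ↔
      a₁ = a₂ ∧ b₁ = b₂ ∨ b₁ = 0 ∧ b₂ = 0 :=
  AddMonoidAlgebra.single_inj

theorem ma_card_support_eq_one {f : AddMonoidAlgebra D S} :
    f.coeff.support.card = 1 ↔ ∃ a, ∃ b ≠ 0, f = single a b := by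
  rw [Finsupp.card_support_eq_one']
  simp only [← AddMonoidAlgebra.coeff_inj, AddMonoidAlgebra.coeff_single]

theorem ma_single_eq_zero {a : S} {b : D} : (single a b : AddMonoidAlgebra D S) = 0 ↔ b = 0 :=
  AddMonoidAlgebra.single_eq_zero

theorem prod_eq_single {f g : AddMonoidAlgebra D S} {t : S} {u : D} (hu : u ≠ 0)
    (h : f * g = single t u) :
    ∃ a v b w, v ≠ 0 ∧ w ≠ 0 ∧ f = single a v ∧ g = single b w ∧
      a + b = t ∧ v * w = u := by
  classical
  have hf : f ≠ 0 := by
    rintro rfl; rw [zero_mul] at h; exact hu (ma_single_eq_zero.mp h.symm)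
  have hg : g ≠ 0 := by
    rintro rfl; rw [mul_zero] at h; exact hu (ma_single_eq_zero.mp h.symm)
  have hcard : ¬ 1 < f.coeff.support.card * g.coeff.support.card := by
    intro hc
    obtain ⟨p1, hp1, p2, hp2, hne, h1, h2⟩ := TwoUniqueSums.uniqueAdd_of_one_lt_card hc
    rw [Finset.mem_product] at hp1 hp2
    have e1 : (f * g).coeff (p1.1 + p1.2) ≠ 0 := by
      rw [AddMonoidAlgebra.coeff_mul_add_of_uniqueAdd h1]
      exact mul_ne_zero (Finsupp.mem_support_iff.mp hp1.1) (Finsupp.mem_support_iff.mp hp1.2)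
    have e2 : (f * g).coeff (p2.1 + p2.2) ≠ 0 := by
      rw [AddMonoidAlgebra.coeff_mul_add_of_uniqueAdd h2]
      exact mul_ne_zero (Finsupp.mem_support_iff.mp hp2.1) (Finsupp.mem_support_iff.mp hp2.2)
    rw [h] at e1 e2
    have ht1 : p1.1 + p1.2 = t := by
      by_contra hx; exact e1 (Finsupp.single_eq_of_ne' (Ne.symm hx))
    have ht2 : p2.1 + p2.2 = t := by
      by_contra hx; exact e2 (Finsupp.single_eq_of_ne' (Ne.symm hx))
    have heq := (h1 hp2.1 hp2.2 (ht2.trans ht1.symm))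
    exact hne (Prod.ext heq.1 heq.2).symm
  have hfc : 1 ≤ f.coeff.support.card :=
    Finset.card_pos.mpr (Finsupp.support_nonempty_iff.mpr (AddMonoidAlgebra.coeff_eq_zero.not.mpr hf))
  have hgc : 1 ≤ g.coeff.support.card :=
    Finset.card_pos.mpr (Finsupp.support_nonempty_iff.mpr (AddMonoidAlgebra.coeff_eq_zero.not.mpr hg))
  have hle := not_lt.mp hcard
  have hfc1 : f.coeff.support.card = 1 :=
    le_antisymm (le_trans (Nat.le_mul_of_pos_right _ hgc) hle) hfc
  have hgc1 : g.coeff.support.card = 1 :=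
    le_antisymm (le_trans (Nat.le_mul_of_pos_left _ hfc) hle) hgc
  obtain ⟨a, v, hv, rfl⟩ := ma_card_support_eq_one.mp hfc1
  obtain ⟨b, w, hw, rfl⟩ := ma_card_support_eq_one.mp hgc1
  rw [AddMonoidAlgebra.single_mul_single] at h
  rcases (ma_single_eq_single_iff _ _ _ _).mp h with ⟨h1, h2⟩ | ⟨h1, h2⟩
  · exact ⟨a, v, b, w, hv, hw, rfl, rfl, h1, h2⟩
  · exact absurd h2 hu

theorem single_dvd_single_iff {a b : S} {v w : D} (hv : v ≠ 0) (hw : w ≠ 0) :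
    (single a v : AddMonoidAlgebra D S) ∣ single b w ↔
      AddDvd a b ∧ v ∣ w := by
  constructor
  · rintro ⟨h, hh⟩
    obtain ⟨a', v', b', w', hv', hw', he1, he2, he3, he4⟩ := prod_eq_single hw hh.symm
    obtain ⟨rfl, rfl⟩ := ((ma_single_eq_single_iff _ _ _ _).mp he1).resolve_right
      (fun hx => hv hx.1)
    exact ⟨⟨b', he3.symm⟩, ⟨w', he4.symm⟩⟩
  · rintro ⟨⟨c, rfl⟩, x, rfl⟩
    exact ⟨single c x, (AddMonoidAlgebra.single_mul_single ..).symm⟩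

theorem isUnit_single (u : AddUnits S) (v : Dˣ) :
    IsUnit (single (u : S) (v : D) : AddMonoidAlgebra D S) := by
  refine ⟨⟨single (u : S) (v : D), single ((-u : AddUnits S) : S) ((v⁻¹ : Dˣ) : D), ?_, ?_⟩, rfl⟩
  · rw [AddMonoidAlgebra.single_mul_single]
    rw [AddMonoidAlgebra.one_def]
    apply (ma_single_eq_single_iff _ _ _ _).mpr
    exact Or.inl ⟨by simp, by simp⟩
  · rw [AddMonoidAlgebra.single_mul_single]
    rw [AddMonoidAlgebra.one_def]
    apply (ma_single_eq_single_iff _ _ _ _).mpr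
    exact Or.inl ⟨by simp, by simp⟩

end MA

end MCDAux

/-- Let `D` be an integral domain and `S` a torsion-free cancellative commutative
(additive) monoid that is not MCD-finite. Then the monoid ring `D[X; S]` is an
integral domain that is not MCD-finite. -/
theorem addMonoidAlgebra_not_mcdFinite (D : Type*) [CommRing D] [IsDomain D]
    (S : Type*) [AddCancelCommMonoid S]
    (htf : ∀ n : ℕ, n ≠ 0 → ∀ a b : S, n • a = n • b → a = b)
    (hS : ¬ AddMCDFinite S) :
    IsDomain (AddMonoidAlgebra D S) ∧ ¬ MCDFinite (AddMonoidAlgebra D S) := by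
  classical
  haveI : TwoUniqueSums S := MCDAux.twoUniqueSums_of_torsionFree S htf
  haveI : UniqueSums S := inferInstance
  haveI hnt : Nontrivial (AddMonoidAlgebra D S) := inferInstance
  haveI hdom : IsDomain (AddMonoidAlgebra D S) := NoZeroDivisors.to_isDomain _
  refine ⟨hdom, ?_⟩
  intro hM
  rw [AddMCDFinite] at hS
  push_neg at hS
  obtain ⟨T, hTfin, hTne, hbad⟩ := hS
  -- symmetry of AddAssociated
  have hsymm : ∀ a b : S, AddAssociated a b → AddAssociated b a := by
    rintro a b ⟨u, hu⟩
    refine ⟨-u, ?_⟩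
    rw [← hu, add_assoc]
    simp
  by_cases hTe : T = ∅
  · subst hTe
    obtain ⟨c, hc, hcbad⟩ := hbad {0} (Set.finite_singleton 0)
    have hunit : ∀ e : S, ∃ u : AddUnits S, (u : S) = e := by
      intro e
      obtain ⟨u, hu⟩ := hc.2 (c + e) (fun t ht => absurd ht (Set.notMem_empty t)) ⟨e, rfl⟩
      exact ⟨u, add_left_cancel hu⟩
    obtain ⟨u, hu⟩ := hunit c
    refine hcbad 0 (Set.mem_singleton 0) ⟨-u, ?_⟩
    rw [← hu]
    simp
  · obtain ⟨t₀, ht₀⟩ := Set.nonempty_iff_ne_empty.mpr hTe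
    set T' : Set (AddMonoidAlgebra D S) := (fun t => AddMonoidAlgebra.single t (1 : D)) '' T
      with hT'
    have hT'ne : ∀ x ∈ T', x ≠ 0 := by
      rintro x ⟨t, ht, rfl⟩ hx
      exact one_ne_zero (MCDAux.ma_single_eq_zero.mp hx)
    have hMCD : ∀ c : S, IsAddMCD T c →
        IsMCD T' (AddMonoidAlgebra.single c (1 : D)) := by
      intro c hc
      constructor
      · rintro x ⟨t, ht, rfl⟩
        exact (MCDAux.single_dvd_single_iff one_ne_zero one_ne_zero).mpr
          ⟨hc.1 t ht, dvd_refl 1⟩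
      · intro d hd hcd
        obtain ⟨h, hh⟩ := hd (AddMonoidAlgebra.single t₀ 1) ⟨t₀, ht₀, rfl⟩
        obtain ⟨s, v, b', w', hv, hw, rfl, _, hsum, hprod⟩ :=
          MCDAux.prod_eq_single one_ne_zero hh.symm
        have hvu : IsUnit v := IsUnit.of_mul_eq_one w' hprod
        have hs : ∀ t ∈ T, AddDvd s t := fun t ht =>
          ((MCDAux.single_dvd_single_iff hv one_ne_zero).mp (hd _ ⟨t, ht, rfl⟩)).1
        have hcs : AddDvd c s :=
          ((MCDAux.single_dvd_single_iff one_ne_zero hv).mp hcd).1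
        obtain ⟨u, hu⟩ := hc.2 s hs hcs
        obtain ⟨vu, rfl⟩ := hvu
        refine ⟨(MCDAux.isUnit_single u vu).unit, ?_⟩
        rw [IsUnit.unit_spec, AddMonoidAlgebra.single_mul_single, one_mul, hu]
    have hAssoc : ∀ c c' : S,
        Associated (AddMonoidAlgebra.single c (1 : D) : AddMonoidAlgebra D S)
          (AddMonoidAlgebra.single c' (1 : D)) → AddAssociated c c' := by
      intro c c' hA
      obtain ⟨e, he⟩ :=
        ((MCDAux.single_dvd_single_iff one_ne_zero one_ne_zero).mp hA.dvd).1
      obtain ⟨e', he'⟩ :=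
        ((MCDAux.single_dvd_single_iff one_ne_zero one_ne_zero).mp hA.symm.dvd).1
      have hz : e + e' = 0 := by
        apply add_left_cancel (a := c)
        rw [← add_assoc, ← he, ← he', add_zero]
      exact ⟨⟨e, e', hz, by rw [add_comm]; exact hz⟩, he.symm⟩
    have hfin := hM T' (hTfin.image _) hT'ne
    set A : Set (Associates (AddMonoidAlgebra D S)) :=
      (fun c => Associates.mk (AddMonoidAlgebra.single c (1 : D))) '' {c | IsAddMCD T c}
      with hA
    have hAfin : A.Finite := hfin.subset (by
      rintro x ⟨c, hc, rfl⟩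
      exact ⟨AddMonoidAlgebra.single c 1, hMCD c hc, rfl⟩)
    have spec : ∀ x ∈ A, ∃ c, IsAddMCD T c ∧
        Associates.mk (AddMonoidAlgebra.single c (1 : D)) = x := by
      rintro x ⟨c, hc, rfl⟩
      exact ⟨c, hc, rfl⟩
    set F : Set S := {y | ∃ x, ∃ hx : x ∈ A, (spec x hx).choose = y} with hF
    obtain ⟨c, hc, hcbad⟩ := hbad F (hAfin.dependent_image _)
    have hxA : Associates.mk (AddMonoidAlgebra.single c (1 : D)) ∈ A := ⟨c, hc, rfl⟩
    refine hcbad ((spec _ hxA).choose) ⟨_, hxA, rfl⟩ ?_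
    obtain ⟨hc', hmk⟩ := (spec _ hxA).choose_spec
    exact hsymm _ _ (hAssoc _ _ (Associates.mk_eq_mk_iff_associated.mp hmk))
end

section
/- Let D be an integral domain and let S be a torsion-free cancellative commutative monoid, and set R = D[X; S]. Then: (i) the extension D ⊆ R is division-preserving, i.e., for nonzero x, y ∈ D, if x divides y in R then x divides y in D; (ii) every irreducible element of D remains irreducible in R; and (iii) if moreover S is reduced, then the units of R are exactly the (images of the) units of D. -/
open AddMonoidAlgebra Finsupp

section Groth
variable (S : Type*) [AddCancelCommMonoid S]

private def grothSetoid : Setoid (S × S) where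
  r p q := p.1 + q.2 = q.1 + p.2
  iseqv := by
    refine ⟨fun p => rfl, fun h => h.symm, ?_⟩
    intro p q r h1 h2
    have key : (p.1 + r.2) + (q.1 + q.2) = (r.1 + p.2) + (q.1 + q.2) := by
      calc (p.1 + r.2) + (q.1 + q.2) = (p.1 + q.2) + (q.1 + r.2) := by abel
        _ = (q.1 + p.2) + (r.1 + q.2) := by rw [h1, h2]
        _ = (r.1 + p.2) + (q.1 + q.2) := by abel
    exact add_right_cancel key

private def Groth := Quotient (grothSetoid S)

variable {S}

private def grothMk (a b : S) : Groth S := Quotient.mk (grothSetoid S) (a, b)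

private lemma grothMk_eq {a b c d : S} : grothMk a b = grothMk c d ↔ a + d = c + b :=
  Quotient.eq

private instance : Add (Groth S) where
  add := Quotient.map₂ (fun p q => (p.1 + q.1, p.2 + q.2)) (by
    rintro ⟨a, b⟩ ⟨a', b'⟩ (h1 : a + b' = a' + b) ⟨c, d⟩ ⟨c', d'⟩ (h2 : c + d' = c' + d)
    show (a + c) + (b' + d') = (a' + c') + (b + d)
    calc (a + c) + (b' + d') = (a + b') + (c + d') := by abel
      _ = (a' + b) + (c' + d) := by rw [h1, h2]
      _ = (a' + c') + (b + d) := by abel)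

private instance : Zero (Groth S) where
  zero := grothMk 0 0

private instance : Neg (Groth S) where
  neg := Quotient.map (fun p => (p.2, p.1)) (by
    rintro ⟨a, b⟩ ⟨a', b'⟩ (h : a + b' = a' + b)
    show b + a' = b' + a
    rw [add_comm, add_comm b' a, ← h])

private instance : AddCommGroup (Groth S) where
  add_assoc := by
    rintro ⟨⟨a,b⟩⟩ ⟨⟨c,d⟩⟩ ⟨⟨e,f⟩⟩
    show grothMk ((a+c)+e) ((b+d)+f) = grothMk (a+(c+e)) (b+(d+f))
    rw [grothMk_eq]; abel
  zero_add := by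
    rintro ⟨⟨a,b⟩⟩
    show grothMk (0+a) (0+b) = grothMk a b
    rw [grothMk_eq]; abel
  add_zero := by
    rintro ⟨⟨a,b⟩⟩
    show grothMk (a+0) (b+0) = grothMk a b
    rw [grothMk_eq]; abel
  add_comm := by
    rintro ⟨⟨a,b⟩⟩ ⟨⟨c,d⟩⟩
    show grothMk (a+c) (b+d) = grothMk (c+a) (d+b)
    rw [grothMk_eq]; abel
  neg_add_cancel := by
    rintro ⟨⟨a,b⟩⟩
    show grothMk (b+a) (a+b) = grothMk (0:S) (0:S)
    rw [grothMk_eq]; abel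
  nsmul := nsmulRec
  nsmul_zero := fun _ => rfl
  nsmul_succ := fun _ _ => rfl
  zsmul := zsmulRec
  zsmul_zero' := fun _ => rfl
  zsmul_succ' := fun _ _ => rfl
  zsmul_neg' := fun _ _ => rfl

private lemma grothMk_add (a b c d : S) :
    grothMk a b + grothMk c d = grothMk (a + c) (b + d) := rfl

private lemma groth_nsmul (n : ℕ) (a b : S) :
    n • grothMk a b = grothMk (n • a) (n • b) := by
  induction n with
  | zero => simp only [zero_smul, zero_nsmul]; rfl
  | succ k ih =>
      rw [succ_nsmul, ih, grothMk_add, succ_nsmul, succ_nsmul]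

variable (htf : ∀ n : ℕ, n ≠ 0 → ∀ a b : S, n • a = n • b → a = b)
include htf

private lemma groth_torsionfree_nat (n : ℕ) (hn : n ≠ 0) (x y : Groth S)
    (h : n • x = n • y) : x = y := by
  obtain ⟨⟨a, b⟩⟩ := x
  obtain ⟨⟨c, d⟩⟩ := y
  have h' : grothMk (n • a) (n • b) = grothMk (n • c) (n • d) := by
    rw [← groth_nsmul, ← groth_nsmul]; exact h
  show grothMk a b = grothMk c d
  rw [grothMk_eq] at h' ⊢
  rw [← smul_add, ← smul_add] at h'
  exact htf n hn _ _ h'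

private lemma groth_torsionfree_int (z : ℤ) (hz : z ≠ 0) (x y : Groth S)
    (h : z • x = z • y) : x = y := by
  obtain ⟨n, hn | hn⟩ := z.eq_nat_or_neg
  · subst hn
    rw [natCast_zsmul, natCast_zsmul] at h
    exact groth_torsionfree_nat htf n (by exact_mod_cast fun h0 => hz (by simp [h0])) x y h
  · subst hn
    rw [neg_zsmul, neg_zsmul, natCast_zsmul, natCast_zsmul, neg_inj] at h
    exact groth_torsionfree_nat htf n (by rintro rfl; simp at hz) x y h

omit htf in
private lemma groth_emb_injective :
    Function.Injective (fun a : S => grothMk a 0) := by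
  intro a b h
  have := grothMk_eq.mp h
  simpa using this

end Groth

section TUS

private theorem tus_of_torsionfree (S : Type*) [AddCancelCommMonoid S]
    (htf : ∀ n : ℕ, n ≠ 0 → ∀ a b : S, n • a = n • b → a = b) :
    TwoUniqueSums S := by
  classical
  set K := Groth S
  letI : Module ℚ (LocalizedModule (nonZeroDivisors ℤ) K) := LocalizedModule.moduleOfIsLocalization
  have hj : Function.Injective
      (fun x : K => LocalizedModule.mk x (1 : nonZeroDivisors ℤ)) := by
    intro x y h
    obtain ⟨u, hu⟩ := LocalizedModule.mk_eq.mp h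
    rw [one_smul, one_smul, Submonoid.smul_def, Submonoid.smul_def] at hu
    exact groth_torsionfree_int htf (u : ℤ)
      (nonZeroDivisors.coe_ne_zero u) x y hu
  refine TwoUniqueSums.of_injective_addHom
    (AddHom.mk (fun a : S => LocalizedModule.mk (grothMk a 0) (1 : nonZeroDivisors ℤ)) ?_)
    ?_ inferInstance
  · intro a b
    show LocalizedModule.mk (grothMk (a+b) 0) _ =
      LocalizedModule.mk (grothMk a 0) _ + LocalizedModule.mk (grothMk b 0) _
    simp [LocalizedModule.mk_add_mk, grothMk_add]
  · intro a b h
    exact groth_emb_injective (hj h)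

end TUS

section Key

private lemma key_single {D : Type*} [CommRing D] [IsDomain D] {S : Type*}
    [AddCancelCommMonoid S] [TwoUniqueSums S]
    {p q : AddMonoidAlgebra D S} {s0 : S} {c : D} (hc : c ≠ 0)
    (h : p * q = AddMonoidAlgebra.single s0 c) :
    ∃ (a b : S) (cp cq : D), cp ≠ 0 ∧ cq ≠ 0 ∧ p = AddMonoidAlgebra.single a cp ∧
      q = AddMonoidAlgebra.single b cq ∧ a + b = s0 ∧ cp * cq = c := by
  classical
  have hp : p ≠ 0 := by
    rintro rfl
    rw [zero_mul] at h
    exact hc (AddMonoidAlgebra.single_eq_zero.mp h.symm)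
  have hq : q ≠ 0 := by
    rintro rfl
    rw [mul_zero] at h
    exact hc (AddMonoidAlgebra.single_eq_zero.mp h.symm)
  have hpn : p.coeff.support.Nonempty :=
    Finsupp.support_nonempty_iff.mpr (fun h0 => hp (AddMonoidAlgebra.coeff_eq_zero.mp h0))
  have hqn : q.coeff.support.Nonempty :=
    Finsupp.support_nonempty_iff.mpr (fun h0 => hq (AddMonoidAlgebra.coeff_eq_zero.mp h0))
  have hmem : ∀ x : S × S, x.1 ∈ p.coeff.support → x.2 ∈ q.coeff.support →
      UniqueAdd p.coeff.support q.coeff.support x.1 x.2 → x.1 + x.2 = s0 := by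
    intro x hx1 hx2 hu
    have e1 : (p * q).coeff (x.1 + x.2) = p.coeff x.1 * q.coeff x.2 :=
      AddMonoidAlgebra.coeff_mul_add_of_uniqueAdd hu
    have hne : (p * q).coeff (x.1 + x.2) ≠ 0 := by
      rw [e1]
      exact mul_ne_zero (Finsupp.mem_support_iff.mp hx1) (Finsupp.mem_support_iff.mp hx2)
    by_contra hxs
    rw [h, AddMonoidAlgebra.coeff_single, Finsupp.single_eq_of_ne' (fun hh => hxs hh.symm)] at hne
    exact hne rfl
  have hcard : ¬ (1 < p.coeff.support.card * q.coeff.support.card) := by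
    intro hlt
    obtain ⟨p1, hp1, p2, hp2, hne12, hu1, hu2⟩ :=
      TwoUniqueSums.uniqueAdd_of_one_lt_card hlt
    rw [Finset.mem_product] at hp1 hp2
    have m1 := hmem p1 hp1.1 hp1.2 hu1
    have m2 := hmem p2 hp2.1 hp2.2 hu2
    have := hu1 hp2.1 hp2.2 (m2.trans m1.symm)
    exact hne12 (Prod.ext this.1.symm this.2.symm).symm.symm
  have hc1 : p.coeff.support.card = 1 := by
    have h1 : 1 ≤ p.coeff.support.card := Finset.card_pos.mpr hpn
    have h2 : 1 ≤ q.coeff.support.card := Finset.card_pos.mpr hqn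
    nlinarith [not_lt.mp hcard]
  have hc2 : q.coeff.support.card = 1 := by
    have h1 : 1 ≤ p.coeff.support.card := Finset.card_pos.mpr hpn
    have h2 : 1 ≤ q.coeff.support.card := Finset.card_pos.mpr hqn
    nlinarith [not_lt.mp hcard]
  obtain ⟨a, ha⟩ := Finset.card_eq_one.mp hc1
  obtain ⟨b, hb⟩ := Finset.card_eq_one.mp hc2
  obtain ⟨hpa, hpe⟩ := Finsupp.support_eq_singleton.mp ha
  obtain ⟨hqb, hqe⟩ := Finsupp.support_eq_singleton.mp hb
  refine ⟨a, b, p.coeff a, q.coeff b, hpa, hqb, AddMonoidAlgebra.coeff_injective hpe,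
    AddMonoidAlgebra.coeff_injective hqe, ?_⟩
  have hprod : (AddMonoidAlgebra.single (a + b) (p.coeff a * q.coeff b) : AddMonoidAlgebra D S) =
      AddMonoidAlgebra.single s0 c := by
    have hs := AddMonoidAlgebra.single_mul_single (R := D) a b (p.coeff a) (q.coeff b)
    have hpe' : p = AddMonoidAlgebra.single a (p.coeff a) := AddMonoidAlgebra.coeff_injective hpe
    have hqe' : q = AddMonoidAlgebra.single b (q.coeff b) := AddMonoidAlgebra.coeff_injective hqe
    rw [← hs, ← hpe', ← hqe', h]
  rcases AddMonoidAlgebra.single_inj.mp hprod with ⟨h1, h2⟩ | ⟨h1, h2⟩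
  · exact ⟨h1, h2⟩
  · exact absurd h1 (mul_ne_zero hpa hqb)

end Key

/-- Let `D` be an integral domain and `S` a torsion-free cancellative commutative
(additive) monoid, and let `R = D[X; S]` be the monoid ring. Then (i) the extension
`D ⊆ R` is division-preserving, (ii) irreducible elements of `D` remain irreducible in
`R`, and (iii) if moreover `S` is reduced (its only additive unit is `0`), the units of
`R` are exactly the images of the units of `D`. -/
theorem addMonoidAlgebra_division_preserving_atoms_units
    (D : Type*) [CommRing D] [IsDomain D]
    (S : Type*) [AddCancelCommMonoid S]
    (htf : ∀ n : ℕ, n ≠ 0 → ∀ a b : S, n • a = n • b → a = b) :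
    (∀ x y : D, x ≠ 0 → y ≠ 0 →
      ((AddMonoidAlgebra.singleZeroRingHom : D →+* AddMonoidAlgebra D S) x ∣
        (AddMonoidAlgebra.singleZeroRingHom : D →+* AddMonoidAlgebra D S) y) → x ∣ y) ∧
    (∀ a : D, Irreducible a →
      Irreducible ((AddMonoidAlgebra.singleZeroRingHom : D →+* AddMonoidAlgebra D S) a)) ∧
    ((∀ u : S, IsAddUnit u → u = 0) →
      ∀ r : AddMonoidAlgebra D S, IsUnit r ↔
        ∃ v : D, IsUnit v ∧
          (AddMonoidAlgebra.singleZeroRingHom : D →+* AddMonoidAlgebra D S) v = r) := by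
  classical
  haveI : TwoUniqueSums S := tus_of_torsionfree S htf
  have hs : ∀ x : D, (AddMonoidAlgebra.singleZeroRingHom : D →+* AddMonoidAlgebra D S) x
      = AddMonoidAlgebra.single 0 x := fun x => rfl
  have hone : (1 : AddMonoidAlgebra D S) = AddMonoidAlgebra.single (0 : S) (1 : D) := rfl
  -- helper: from single 0 x = single a cp with x ≠ 0, get a = 0 and cp = x
  have hsing : ∀ (x cp : D) (a : S), x ≠ 0 →
      (AddMonoidAlgebra.single (0 : S) x : AddMonoidAlgebra D S) = AddMonoidAlgebra.single a cp →
      a = 0 ∧ cp = x := by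
    intro x cp a hx he
    rcases AddMonoidAlgebra.single_inj.mp he with ⟨h1, h2⟩ | ⟨h1, h2⟩
    · exact ⟨h1.symm, h2.symm⟩
    · exact absurd h1 hx
  refine ⟨?_, ?_, ?_⟩
  · -- division-preserving
    rintro x y hx hy ⟨r, hr⟩
    rw [hs, hs] at hr
    obtain ⟨a, b, cp, cq, hcp, hcq, hpe, hqe, hab, hmul⟩ := key_single hy hr.symm
    obtain ⟨ha0, hcpx⟩ := hsing x cp a hx hpe
    exact ⟨cq, by rw [← hmul, hcpx]⟩
  · -- irreducible
    intro a ha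
    rw [hs]
    constructor
    · intro hu
      obtain ⟨w, hw⟩ := hu.exists_right_inv
      rw [hone] at hw
      obtain ⟨s, t, cp, cq, hcp, hcq, hpe, hqe, hst, hmul⟩ :=
        key_single (one_ne_zero (α := D)) hw
      obtain ⟨hs0, hcpa⟩ := hsing a cp s ha.ne_zero hpe
      exact ha.not_isUnit (hcpa ▸ IsUnit.of_mul_eq_one (a := cp) cq hmul)
    · intro p q hpq
      obtain ⟨s, t, cp, cq, hcp, hcq, hpe, hqe, hst, hmul⟩ :=
        key_single ha.ne_zero hpq.symm
      rcases ha.isUnit_or_isUnit hmul.symm with hu | hu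
      · left
        obtain ⟨d, hd⟩ := hu.exists_right_inv
        refine IsUnit.of_mul_eq_one (a := p) (AddMonoidAlgebra.single t d) ?_
        have hss := AddMonoidAlgebra.single_mul_single (R := D) s t cp d
        rw [hpe, hss, hst, hd, hone]
      · right
        obtain ⟨d, hd⟩ := hu.exists_right_inv
        refine IsUnit.of_mul_eq_one (a := q) (AddMonoidAlgebra.single s d) ?_
        have hss := AddMonoidAlgebra.single_mul_single (R := D) t s cq d
        rw [hqe, hss, add_comm t s, hst, hd, hone]
  · -- units
    intro hred r
    constructor
    · intro hr
      obtain ⟨w, hw⟩ := hr.exists_right_inv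
      rw [hone] at hw
      obtain ⟨s, t, cp, cq, hcp, hcq, hpe, hqe, hst, hmul⟩ :=
        key_single (one_ne_zero (α := D)) hw
      have hs0 : s = 0 := hred s (IsAddUnit.of_add_eq_zero (a := s) t hst)
      exact ⟨cp, IsUnit.of_mul_eq_one (a := cp) cq hmul, by rw [hs, hpe, hs0]⟩
    · rintro ⟨v, hv, rfl⟩
      exact hv.map _
end

section
/- Let T be an integral domain of the form T = K + M, where K is a subfield of T, M is a nonzero maximal ideal of T, and every element of T is uniquely the sum of an element of K and an element of M. Let D be a subfield of K and let R be the subring D + M of T. Suppose M contains an irreducible element of T. If R is MCD-finite, then the quotient group K*/D* is finite and T is MCD-finite. -/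
/-- The subring `D + M` of `T`, for a subring `D` and an ideal `M` of `T`. -/
def dPlusM {T : Type*} [CommRing T] (D : Subring T) (M : Ideal T) : Subring T where
  carrier := {x : T | ∃ d ∈ D, ∃ m ∈ M, x = d + m}
  zero_mem' := ⟨0, D.zero_mem, 0, M.zero_mem, by ring⟩
  one_mem' := ⟨1, D.one_mem, 0, M.zero_mem, by ring⟩
  add_mem' := by
    rintro a b ⟨d1, hd1, m1, hm1, rfl⟩ ⟨d2, hd2, m2, hm2, rfl⟩
    exact ⟨d1 + d2, D.add_mem hd1 hd2, m1 + m2, M.add_mem hm1 hm2, by ring⟩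
  neg_mem' := by
    rintro a ⟨d1, hd1, m1, hm1, rfl⟩
    exact ⟨-d1, D.neg_mem hd1, -m1, M.neg_mem hm1, by ring⟩
  mul_mem' := by
    rintro a b ⟨d1, hd1, m1, hm1, rfl⟩ ⟨d2, hd2, m2, hm2, rfl⟩
    refine ⟨d1 * d2, D.mul_mem hd1 hd2, d1 * m2 + m1 * d2 + m1 * m2, ?_, by ring⟩
    exact M.add_mem (M.add_mem (M.mul_mem_left d1 hm2) (M.mul_mem_right d2 hm1))
      (M.mul_mem_left m1 hm2)

theorem mem_dPlusM_of_mem_ideal {T : Type*} [CommRing T] (D : Subring T) (M : Ideal T)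
    {m : T} (hm : m ∈ M) : m ∈ dPlusM D M :=
  ⟨0, D.zero_mem, m, hm, (zero_add m).symm⟩

theorem one_add_mem_dPlusM {T : Type*} [CommRing T] (D : Subring T) (M : Ideal T)
    {m : T} (hm : m ∈ M) (k : T) : 1 + k * m ∈ dPlusM D M :=
  ⟨1, D.one_mem, k * m, M.mul_mem_left k hm, rfl⟩

/-- From an `Associated` in a subring, extract a unit of the big ring lying in the subring. -/
theorem assoc_val {T : Type*} [CommRing T] {R : Subring T} {a b : R}
    (h : Associated a b) : ∃ v : Tˣ, ((v : T) ∈ R) ∧ (b : T) = (a : T) * v := by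
  obtain ⟨u, hu⟩ := h
  refine ⟨⟨((u : R) : T), (((u⁻¹ : Rˣ) : R) : T), ?_, ?_⟩, (u : R).2, ?_⟩
  · exact_mod_cast congrArg Subtype.val u.mul_inv
  · exact_mod_cast congrArg Subtype.val u.inv_mul
  · show (b : T) = (a : T) * (((u : R) : T))
    exact_mod_cast (congrArg Subtype.val hu).symm

/-- D + M construction: `T = K + M` with `K` a subfield of `T`, `M` a nonzero maximal
ideal, every element of `T` uniquely a sum of an element of `K` and an element of `M`,
`D` a subfield of `K`, and `R = D + M`. If `M` contains an irreducible element of `T`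
and `R` is MCD-finite, then the quotient group `K*/D*` is finite (there is a finite set
of coset representatives) and `T` is MCD-finite. -/
theorem quot_finite_and_mcdFinite_of_dPlusM_mcdFinite
    {T : Type*} [CommRing T] [IsDomain T]
    (K : Subring T) (hK : ∀ x ∈ K, x ≠ 0 → ∃ y ∈ K, x * y = 1)
    (M : Ideal T) (hMmax : M.IsMaximal) (hMne : M ≠ ⊥)
    (hsum : ∀ t : T, ∃ k ∈ K, ∃ m ∈ M, t = k + m)
    (hKM : ∀ x : T, x ∈ K → x ∈ M → x = 0)
    (D : Subring T) (hDK : D ≤ K) (hD : ∀ x ∈ D, x ≠ 0 → ∃ y ∈ D, x * y = 1)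
    (hatom : ∃ m ∈ M, Irreducible m)
    (hR : MCDFinite (dPlusM D M)) :
    (∃ F : Set T, F.Finite ∧ (∀ c ∈ F, c ∈ K ∧ c ≠ 0) ∧
      ∀ k ∈ K, k ≠ 0 → ∃ c ∈ F, ∃ d ∈ D, k = c * d) ∧
    MCDFinite T := by
  classical
  obtain ⟨m₀, hm₀M, hm₀irr⟩ := hatom
  have hm₀0 : m₀ ≠ 0 := hm₀irr.ne_zero
  -- units are not in M
  have hunitM : ∀ u : T, IsUnit u → u ∉ M := fun u hu hm =>
    hMmax.ne_top (M.eq_top_of_isUnit_mem hm hu)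
  -- uniqueness of the K + M decomposition
  have huniq : ∀ k₁ ∈ K, ∀ k₂ ∈ K, ∀ m₁ ∈ M, ∀ m₂ ∈ M, k₁ + m₁ = k₂ + m₂ → k₁ = k₂ := by
    intro k₁ hk₁ k₂ hk₂ m₁ hm₁ m₂ hm₂ h
    have h1 : k₁ - k₂ ∈ K := K.sub_mem hk₁ hk₂
    have h2 : k₁ - k₂ ∈ M := by
      have : k₁ - k₂ = m₂ - m₁ := by linear_combination h
      rw [this]; exact M.sub_mem hm₂ hm₁
    exact sub_eq_zero.mp (hKM _ h1 h2)
  -- K ∩ R ⊆ D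
  have hKD : ∀ x ∈ K, x ∈ dPlusM D M → x ∈ D := by
    rintro x hxK ⟨d, hdD, m, hmM, rfl⟩
    have hm0 : m = 0 := by
      refine hKM m ?_ hmM
      have : m = (d + m) - d := by ring
      rw [this]; exact K.sub_mem hxK (hDK hdD)
    rw [hm0, add_zero]; exact hdD
  -- decomposition of a unit of T
  have hKpart : ∀ u : T, IsUnit u → ∃ c ∈ K, c ≠ 0 ∧ ∃ n ∈ M, u = c + n := by
    intro u hu
    obtain ⟨c, hcK, n, hnM, hdec⟩ := hsum u
    refine ⟨c, hcK, ?_, n, hnM, hdec⟩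
    intro h0
    exact hunitM u hu (by rw [hdec, h0, zero_add]; exact hnM)
  -- a unit of T lying in R is a unit of R
  have hunitR : ∀ (x : T) (hx : x ∈ dPlusM D M), IsUnit x →
      IsUnit (⟨x, hx⟩ : dPlusM D M) := by
    intro x hx hux
    obtain ⟨d, hdD, m, hmM, hdec⟩ := hx
    obtain ⟨u, hu⟩ := hux
    have hyx : x * ((u⁻¹ : Tˣ) : T) = 1 := by rw [← hu]; exact u.mul_inv
    obtain ⟨k', hk'K, n', hn'M, hy⟩ := hsum ((u⁻¹ : Tˣ) : T)
    have hd0 : d ≠ 0 := by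
      intro h0
      exact hunitM x ⟨u, hu⟩ (by rw [hdec, h0, zero_add]; exact hmM)
    have hdk' : d * k' = 1 := by
      refine huniq (d * k') (K.mul_mem (hDK hdD) hk'K) 1 K.one_mem
        (d * n' + m * k' + m * n') ?_ 0 M.zero_mem ?_
      · exact M.add_mem (M.add_mem (M.mul_mem_left d hn'M) (M.mul_mem_right k' hmM))
          (M.mul_mem_left m hn'M)
      · rw [add_zero]; linear_combination hyx - (k' + n') * hdec - x * hy
    obtain ⟨z, hzD, hdz⟩ := hD d hdD hd0
    have hk'z : k' = z := by
      have := mul_left_cancel₀ hd0 (hdk'.trans hdz.symm)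
      exact this
    have hyR : ((u⁻¹ : Tˣ) : T) ∈ dPlusM D M := ⟨k', by rw [hk'z]; exact hzD, n', hn'M, hy⟩
    rw [isUnit_iff_exists_inv]
    exact ⟨⟨((u⁻¹ : Tˣ) : T), hyR⟩, Subtype.ext (by simpa using hyx)⟩
  -- membership of k * m₀ in R
  have hkm₀R : ∀ k : T, k * m₀ ∈ dPlusM D M :=
    fun k => mem_dPlusM_of_mem_ideal D M (M.mul_mem_left k hm₀M)
  ---------------------------------------------------------------------------
  -- PART 1
  ---------------------------------------------------------------------------
  have part1 : ∃ F : Set T, F.Finite ∧ (∀ c ∈ F, c ∈ K ∧ c ≠ 0) ∧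
      ∀ k ∈ K, k ≠ 0 → ∃ c ∈ F, ∃ d ∈ D, k = c * d := by
    by_cases hc : ∀ α ∈ K, α ≠ 0 → ∀ β ∈ K, β ≠ 0 → ∃ d ∈ D, α = β * d
    · refine ⟨{1}, Set.finite_singleton 1, ?_, ?_⟩
      · rintro c rfl
        exact ⟨K.one_mem, one_ne_zero⟩
      · intro k hkK hk0
        obtain ⟨d, hdD, hkd⟩ := hc k hkK hk0 1 K.one_mem one_ne_zero
        exact ⟨1, rfl, d, hdD, hkd⟩
    · push_neg at hc
      obtain ⟨α, hαK, hα0, β, hβK, hβ0, hnd⟩ := hc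
      have hαm : α + m₀ ≠ 0 := by
        intro h
        refine hα0 (hKM α hαK ?_)
        have hα : α = 0 - m₀ := by linear_combination h
        rw [hα]; exact M.sub_mem M.zero_mem hm₀M
      have hβm : β + m₀ ≠ 0 := by
        intro h
        refine hβ0 (hKM β hβK ?_)
        have hβ : β = 0 - m₀ := by linear_combination h
        rw [hβ]; exact M.sub_mem M.zero_mem hm₀M
      set E₁ : dPlusM D M := ⟨m₀ * (m₀ * (α + m₀)),
        mem_dPlusM_of_mem_ideal D M (M.mul_mem_right _ hm₀M)⟩ with hE₁
      set E₂ : dPlusM D M := ⟨m₀ * (m₀ * (β + m₀)),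
        mem_dPlusM_of_mem_ideal D M (M.mul_mem_right _ hm₀M)⟩ with hE₂
      set S : Set (dPlusM D M) := {E₁, E₂} with hSdef
      have hSfin : S.Finite := (Set.finite_singleton E₂).insert E₁
      have hSne : ∀ t ∈ S, t ≠ 0 := by
        intro t ht h0
        simp only [hSdef, Set.mem_insert_iff, Set.mem_singleton_iff] at ht
        rcases ht with rfl | rfl
        · have h1 : m₀ * (m₀ * (α + m₀)) = 0 := by
            have := congrArg Subtype.val h0; simpa [hE₁] using this
          exact (mul_ne_zero hm₀0 (mul_ne_zero hm₀0 hαm)) h1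
        · have h1 : m₀ * (m₀ * (β + m₀)) = 0 := by
            have := congrArg Subtype.val h0; simpa [hE₂] using this
          exact (mul_ne_zero hm₀0 (mul_ne_zero hm₀0 hβm)) h1
      have hMCDk : ∀ k ∈ K, k ≠ 0 → IsMCD S (⟨k * m₀, hkm₀R k⟩ : dPlusM D M) := by
        intro k hkK hk0
        obtain ⟨k', hk'K, hkk'⟩ := hK k hkK hk0
        constructor
        · intro t ht
          simp only [hSdef, Set.mem_insert_iff, Set.mem_singleton_iff] at ht
          rcases ht with rfl | rfl
          · refine ⟨⟨k' * (m₀ * (α + m₀)),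
              mem_dPlusM_of_mem_ideal D M (M.mul_mem_left k' (M.mul_mem_right _ hm₀M))⟩,
              Subtype.ext ?_⟩
            show m₀ * (m₀ * (α + m₀)) = (k * m₀) * (k' * (m₀ * (α + m₀)))
            linear_combination (-(m₀ * (m₀ * (α + m₀)))) * hkk'
          · refine ⟨⟨k' * (m₀ * (β + m₀)),
              mem_dPlusM_of_mem_ideal D M (M.mul_mem_left k' (M.mul_mem_right _ hm₀M))⟩,
              Subtype.ext ?_⟩
            show m₀ * (m₀ * (β + m₀)) = (k * m₀) * (k' * (m₀ * (β + m₀)))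
            linear_combination (-(m₀ * (m₀ * (β + m₀)))) * hkk'
        · intro e he hce
          obtain ⟨w, hw⟩ := hce
          obtain ⟨s₁, hs₁⟩ := he E₁ (Set.mem_insert _ _)
          obtain ⟨s₂, hs₂⟩ := he E₂ (Set.mem_insert_of_mem _ rfl)
          have hwv : (e : T) = k * m₀ * (w : T) := by
            have := congrArg Subtype.val hw; push_cast at this; exact this
          have hs₁v : m₀ * (m₀ * (α + m₀)) = (e : T) * (s₁ : T) := by
            have := congrArg Subtype.val hs₁; push_cast at this; exact this
          have hs₂v : m₀ * (m₀ * (β + m₀)) = (e : T) * (s₂ : T) := by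
            have := congrArg Subtype.val hs₂; push_cast at this; exact this
          have E1 : k * ((w : T) * (s₁ : T)) = m₀ * (α + m₀) :=
            mul_left_cancel₀ hm₀0 (by linear_combination (-1 : T) * hs₁v - (s₁ : T) * hwv)
          have E2 : k * ((w : T) * (s₂ : T)) = m₀ * (β + m₀) :=
            mul_left_cancel₀ hm₀0 (by linear_combination (-1 : T) * hs₂v - (s₂ : T) * hwv)
          have hαβ : α - β ≠ 0 :=
            sub_ne_zero.mpr (fun h => hnd 1 D.one_mem (by rw [mul_one]; exact h))
          obtain ⟨i, hiK, hi⟩ := hK (α - β) (K.sub_mem hαK hβK) hαβ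
          have hαβu : IsUnit (α - β) := IsUnit.of_mul_eq_one _ hi
          have hirr2 : Irreducible (m₀ * (α - β)) := (irreducible_mul_isUnit hαβu).mpr hm₀irr
          have hfac : m₀ * (α - β) = (w : T) * (k * ((s₁ : T) - (s₂ : T))) := by
            linear_combination E2 - E1
          rcases hirr2.isUnit_or_isUnit hfac with hur | hus
          · have hwu : IsUnit w := hunitR _ w.2 hur
            exact ⟨hwu.unit, by rw [IsUnit.unit_spec]; exact hw.symm⟩
          · obtain ⟨U, hU⟩ := hus
            have hrU : (w : T) * (U : T) = m₀ * (α - β) := by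
              rw [hU]; linear_combination -hfac
            have hstar1 : k * ((α - β) * (s₁ : T)) = (α + m₀) * (U : T) :=
              mul_left_cancel₀ hm₀0
                (by linear_combination (-(k * (s₁ : T))) * hrU + (U : T) * E1)
            have hstar2 : k * ((α - β) * (s₂ : T)) = (β + m₀) * (U : T) :=
              mul_left_cancel₀ hm₀0
                (by linear_combination (-(k * (s₂ : T))) * hrU + (U : T) * E2)
            obtain ⟨c, hcK, hc0, n, hnM, hUdec⟩ := hKpart (U : T) U.isUnit
            obtain ⟨δ₁, hδ₁D, μ₁, hμ₁M, hs₁dec⟩ := s₁.2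
            obtain ⟨δ₂, hδ₂D, μ₂, hμ₂M, hs₂dec⟩ := s₂.2
            have d₁eq : k * ((α - β) * δ₁) = α * c := by
              refine huniq _ ?_ _ ?_ (k * ((α - β) * μ₁)) ?_ (α * n + m₀ * c + m₀ * n) ?_ ?_
              · exact K.mul_mem hkK (K.mul_mem (K.sub_mem hαK hβK) (hDK hδ₁D))
              · exact K.mul_mem hαK hcK
              · exact M.mul_mem_left k (M.mul_mem_left _ hμ₁M)
              · exact M.add_mem (M.add_mem (M.mul_mem_left α hnM)
                  (M.mul_mem_right c hm₀M)) (M.mul_mem_left m₀ hnM)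
              · linear_combination hstar1 - (k * (α - β)) * hs₁dec + (α + m₀) * hUdec
            have d₂eq : k * ((α - β) * δ₂) = β * c := by
              refine huniq _ ?_ _ ?_ (k * ((α - β) * μ₂)) ?_ (β * n + m₀ * c + m₀ * n) ?_ ?_
              · exact K.mul_mem hkK (K.mul_mem (K.sub_mem hαK hβK) (hDK hδ₂D))
              · exact K.mul_mem hβK hcK
              · exact M.mul_mem_left k (M.mul_mem_left _ hμ₂M)
              · exact M.add_mem (M.add_mem (M.mul_mem_left β hnM)
                  (M.mul_mem_right c hm₀M)) (M.mul_mem_left m₀ hnM)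
              · linear_combination hstar2 - (k * (α - β)) * hs₂dec + (β + m₀) * hUdec
            have hδ₂0 : δ₂ ≠ 0 := by
              intro h0
              exact (mul_ne_zero hβ0 hc0) (by rw [← d₂eq, h0, mul_zero, mul_zero])
            obtain ⟨y, hyD, hy⟩ := hD δ₂ hδ₂D hδ₂0
            have h5 : α * δ₂ = β * δ₁ :=
              mul_left_cancel₀ (mul_ne_zero hk0 hαβ)
                (by linear_combination α * d₂eq - β * d₁eq)
            exact absurd (by linear_combination (-α) * hy + y * h5 :
              α = β * (δ₁ * y)) (hnd (δ₁ * y) (D.mul_mem hδ₁D hyD))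
      have hfin := hR S hSfin hSne
      set pick : Associates (dPlusM D M) → T := fun g =>
        if h : ∃ k, k ∈ K ∧ k ≠ 0 ∧
            Associates.mk (⟨k * m₀, hkm₀R k⟩ : dPlusM D M) = g then h.choose else 1
        with hpick
      refine ⟨pick '' (Associates.mk '' {c | IsMCD S c}), hfin.image pick, ?_, ?_⟩
      · rintro c ⟨g, hg, rfl⟩
        by_cases h : ∃ k, k ∈ K ∧ k ≠ 0 ∧
            Associates.mk (⟨k * m₀, hkm₀R k⟩ : dPlusM D M) = g
        · have hspec := h.choose_spec
          simp only [hpick]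
          rw [dif_pos h]
          exact ⟨hspec.1, hspec.2.1⟩
        · simp only [hpick]
          rw [dif_neg h]
          exact ⟨K.one_mem, one_ne_zero⟩
      · intro k hkK hk0
        have hg : Associates.mk (⟨k * m₀, hkm₀R k⟩ : dPlusM D M) ∈
            Associates.mk '' {c | IsMCD S c} := ⟨_, hMCDk k hkK hk0, rfl⟩
        have hex : ∃ k', k' ∈ K ∧ k' ≠ 0 ∧
            Associates.mk (⟨k' * m₀, hkm₀R k'⟩ : dPlusM D M) =
            Associates.mk (⟨k * m₀, hkm₀R k⟩ : dPlusM D M) := ⟨k, hkK, hk0, rfl⟩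
        obtain ⟨hk₀K, hk₀0, hmk⟩ := hex.choose_spec
        have hassoc : Associated (⟨hex.choose * m₀, hkm₀R hex.choose⟩ : dPlusM D M)
            ⟨k * m₀, hkm₀R k⟩ := Associates.mk_eq_mk_iff_associated.mp hmk
        obtain ⟨v, hvR, hveq⟩ := assoc_val hassoc
        have hkv : k = hex.choose * (v : T) :=
          mul_right_cancel₀ hm₀0 (by linear_combination hveq)
        obtain ⟨k₀', hk₀'K, hk₀k₀'⟩ := hK hex.choose hk₀K hk₀0
        have hvK : (v : T) ∈ K := by
          have hveq2 : (v : T) = k * k₀' := by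
            refine mul_left_cancel₀ hk₀0 ?_
            linear_combination (-1 : T) * hkv - k * hk₀k₀'
          rw [hveq2]; exact K.mul_mem hkK hk₀'K
        have hvD := hKD _ hvK hvR
        refine ⟨pick (Associates.mk (⟨k * m₀, hkm₀R k⟩ : dPlusM D M)),
          ⟨_, hg, rfl⟩, (v : T), hvD, ?_⟩
        simp only [hpick]
        rw [dif_pos hex]
        exact hkv
  ---------------------------------------------------------------------------
  -- PART 2
  ---------------------------------------------------------------------------
  refine ⟨part1, ?_⟩
  obtain ⟨F, hFfin, hFmem, hFrep⟩ := part1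
  intro S hSfin hSne
  rcases S.eq_empty_or_nonempty with rfl | ⟨t₀, ht₀⟩
  · refine (Set.finite_singleton (Associates.mk (0 : T))).subset ?_
    rintro x ⟨c, hc, rfl⟩
    have hc0 : c = 0 := (associated_zero_iff_eq_zero c).mp (hc.2 0 (by simp) (dvd_zero c))
    simp [hc0]
  · have ht₀0 := hSne t₀ ht₀
    set Fone : Set T := insert (1 : T) F with hFonedef
    have hFonefin : Fone.Finite := hFfin.insert 1
    have hFonemem : ∀ c ∈ Fone, c ∈ K ∧ c ≠ 0 := by
      intro c hc
      rcases Set.mem_insert_iff.mp hc with rfl | hcF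
      · exact ⟨K.one_mem, one_ne_zero⟩
      · exact hFmem c hcF
    set inv : T → T := fun c => if h : ∃ c', c * c' = 1 then h.choose else 1 with hinvdef
    have hinv : ∀ c ∈ Fone, c * inv c = 1 := by
      intro c hc
      obtain ⟨hcK, hc0⟩ := hFonemem c hc
      obtain ⟨c', hc'K, hcc'⟩ := hK c hcK hc0
      have hex : ∃ c'', c * c'' = 1 := ⟨c', hcc'⟩
      simp only [hinvdef]; rw [dif_pos hex]; exact hex.choose_spec
    have hinvne : ∀ c ∈ Fone, inv c ≠ 0 := fun c hc h0 =>
      one_ne_zero (α := T) (by rw [← hinv c hc, h0, mul_zero])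
    have hdec : ∀ q : T, ∃ c ∈ Fone, ∃ r ∈ dPlusM D M, q = c * r := by
      intro q
      obtain ⟨k, hkK, m, hmM, hq⟩ := hsum q
      by_cases hk0 : k = 0
      · refine ⟨1, Set.mem_insert _ _, q, ?_, (one_mul q).symm⟩
        rw [hq, hk0, zero_add]; exact mem_dPlusM_of_mem_ideal D M hmM
      · obtain ⟨c, hcF, d, hdD, hkcd⟩ := hFrep k hkK hk0
        obtain ⟨hcK, hc0⟩ := hFmem c hcF
        obtain ⟨c', hc'K, hcc'⟩ := hK c hcK hc0
        refine ⟨c, Set.mem_insert_of_mem _ hcF,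
          d + c' * m, ⟨d, hdD, c' * m, M.mul_mem_left c' hmM, rfl⟩, ?_⟩
        linear_combination hq + hkcd - m * hcc'
    have hmemg : ∀ x : T, m₀ * x ∈ dPlusM D M :=
      fun x => mem_dPlusM_of_mem_ideal D M (M.mul_mem_right x hm₀M)
    set g : (T → T) → T → dPlusM D M := fun σ t => ⟨m₀ * (inv (σ t) * t), hmemg _⟩ with hgdef
    set Sgm : Set (T → T) := {σ | (∀ t ∈ S, σ t ∈ Fone) ∧ ∀ t ∉ S, σ t = 1} with hSgmdef
    have hSgmfin : Sgm.Finite := by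
      haveI := hSfin.to_subtype
      haveI := hFonefin.to_subtype
      have hinj : Function.Injective
          (fun (σ : Sgm) (x : S) => (⟨σ.1 x.1, σ.2.1 x.1 x.2⟩ : Fone)) := by
        intro σ τ hfe
        apply Subtype.ext; funext t
        by_cases ht : t ∈ S
        · exact congrArg Subtype.val (congrFun hfe ⟨t, ht⟩)
        · rw [σ.2.2 t ht, τ.2.2 t ht]
      haveI : Finite Sgm := Finite.of_injective _ hinj
      exact Sgm.toFinite
    set B : Set (Associates (dPlusM D M)) :=
      ⋃ σ ∈ Sgm, Associates.mk '' {c | IsMCD ((g σ) '' S) c} with hBdef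
    have hBfin : B.Finite := by
      refine hSgmfin.biUnion ?_
      intro σ hσ
      refine hR _ (hSfin.image _) ?_
      rintro x ⟨t, ht, rfl⟩ h0
      have h1 : m₀ * (inv (σ t) * t) = 0 := by
        have := congrArg Subtype.val h0; simpa [hgdef] using this
      exact mul_ne_zero hm₀0 (mul_ne_zero (hinvne _ (hσ.1 t ht)) (hSne t ht)) h1
    have hmain : ∀ d : T, IsMCD S d →
        Associates.mk (⟨m₀ * d, hmemg d⟩ : dPlusM D M) ∈ B := by
      intro d hd
      have hd0 : d ≠ 0 := by
        intro h0
        obtain ⟨q, hq⟩ := hd.1 t₀ ht₀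
        exact ht₀0 (by rw [hq, h0, zero_mul])
      have hkey : ∀ t, t ∈ S → ∃ c, c ∈ Fone ∧ ∃ r ∈ dPlusM D M, t = d * (c * r) := by
        intro t ht
        obtain ⟨q, hq⟩ := hd.1 t ht
        obtain ⟨c, hcF, r, hrR, hqcr⟩ := hdec q
        exact ⟨c, hcF, r, hrR, by rw [hq, hqcr]⟩
      set σd : T → T := fun t => if ht : t ∈ S then (hkey t ht).choose else 1 with hσddef
      have hσdt : ∀ t (ht : t ∈ S), σd t = (hkey t ht).choose := by
        intro t ht; simp only [hσddef]; rw [dif_pos ht]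
      have hsdS : σd ∈ Sgm := by
        constructor
        · intro t ht; rw [hσdt t ht]; exact (hkey t ht).choose_spec.1
        · intro t ht; simp only [hσddef]; rw [dif_neg ht]
      have hvalid : ∀ t (ht : t ∈ S), ∀ r, r ∈ dPlusM D M →
          t = d * ((hkey t ht).choose * r) →
          m₀ * (inv (σd t) * t) = (m₀ * d) * r := by
        intro t ht r hrR htd
        have hcF := (hkey t ht).choose_spec.1
        have hinvc := hinv _ hcF
        rw [hσdt t ht]
        linear_combination (m₀ * inv (hkey t ht).choose) * htd + (m₀ * d * r) * hinvc
      have hMCD2 : IsMCD ((g σd) '' S) (⟨m₀ * d, hmemg d⟩ : dPlusM D M) := by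
        constructor
        · rintro x ⟨t, ht, rfl⟩
          obtain ⟨hcF, r, hrR, htd⟩ := (hkey t ht).choose_spec
          exact ⟨⟨r, hrR⟩, Subtype.ext (hvalid t ht r hrR htd)⟩
        · intro e he hdvd
          obtain ⟨w, hw⟩ := hdvd
          have hwv : (e : T) = m₀ * d * (w : T) := by
            have := congrArg Subtype.val hw; push_cast at this; exact this
          have hwu : IsUnit (w : T) := by
            have hdr : ∀ t ∈ S, d * (w : T) ∣ t := by
              intro t ht
              obtain ⟨hcF, r, hrR, htd⟩ := (hkey t ht).choose_spec
              obtain ⟨s, hs⟩ := he (g σd t) ⟨t, ht, rfl⟩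
              have hsv : m₀ * (inv (σd t) * t) = (e : T) * (s : T) := by
                have := congrArg Subtype.val hs; push_cast at this
                simpa [hgdef] using this
              have hrws : r = (w : T) * (s : T) :=
                mul_left_cancel₀ (mul_ne_zero hm₀0 hd0)
                  (by linear_combination hsv + (s : T) * hwv - hvalid t ht r hrR htd)
              exact ⟨(hkey t ht).choose * (s : T),
                by linear_combination htd + d * (hkey t ht).choose * hrws⟩
            have hassoc := hd.2 (d * (w : T)) hdr ⟨(w : T), rfl⟩
            obtain ⟨u, hu⟩ := hassoc
            have huw : ((u : T)) = (w : T) := mul_left_cancel₀ hd0 hu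
            rw [← huw]; exact u.isUnit
          have hwu2 := hunitR _ w.2 hwu
          exact ⟨hwu2.unit, by rw [IsUnit.unit_spec]; exact hw.symm⟩
      exact Set.mem_biUnion hsdS ⟨_, hMCD2, rfl⟩
    set hfun : Associates (dPlusM D M) → Associates T := fun eA =>
      if hh : ∃ d, IsMCD S d ∧ Associates.mk (⟨m₀ * d, hmemg d⟩ : dPlusM D M) = eA
      then Associates.mk hh.choose else Associates.mk 0 with hhdef
    refine (hBfin.image hfun).subset ?_
    rintro x ⟨d, hd, rfl⟩
    refine ⟨Associates.mk (⟨m₀ * d, hmemg d⟩ : dPlusM D M), hmain d hd, ?_⟩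
    have hex : ∃ d', IsMCD S d' ∧ Associates.mk (⟨m₀ * d', hmemg d'⟩ : dPlusM D M) =
        Associates.mk (⟨m₀ * d, hmemg d⟩ : dPlusM D M) := ⟨d, hd, rfl⟩
    obtain ⟨hd₁, hmk⟩ := hex.choose_spec
    simp only [hhdef]
    rw [dif_pos hex]
    obtain ⟨v, hvR, hveq⟩ := assoc_val (Associates.mk_eq_mk_iff_associated.mp hmk)
    have hdv : d = hex.choose * (v : T) :=
      mul_left_cancel₀ hm₀0 (by linear_combination hveq)
    exact Associates.mk_eq_mk_iff_associated.mpr ⟨v, hdv.symm⟩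
end

section
/- Let T be an integral domain of the form T = K + M, where K is a subfield of T, M is a nonzero maximal ideal of T, and every element of T is uniquely the sum of an element of K and an element of M. Let D be a subfield of K and let R be the subring D + M of T. Suppose that every element of M has, up to associates in T, only finitely many irreducible divisors lying in M. If T is MCD-finite and the quotient group K*/D* is finite, then R is MCD-finite. -/
/-- D + M construction: `T = K + M` with `K` a subfield of `T`, `M` a nonzero maximal
ideal, every element of `T` uniquely a sum of an element of `K` and an element of `M`,
`D` a subfield of `K`, and `R = D + M`. Suppose every element of `M` has, up to
associates in `T`, only finitely many irreducible divisors lying in `M`. If `T` is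
MCD-finite and the quotient group `K*/D*` is finite (there is a finite set of coset
representatives), then `R` is MCD-finite. -/
theorem dPlusM_mcdFinite_of_mcdFinite_of_quot_finite
    {T : Type*} [CommRing T] [IsDomain T]
    (K : Subring T) (hK : ∀ x ∈ K, x ≠ 0 → ∃ y ∈ K, x * y = 1)
    (M : Ideal T) (hMmax : M.IsMaximal) (hMne : M ≠ ⊥)
    (hsum : ∀ t : T, ∃ k ∈ K, ∃ m ∈ M, t = k + m)
    (hKM : ∀ x : T, x ∈ K → x ∈ M → x = 0)
    (D : Subring T) (hDK : D ≤ K) (hD : ∀ x ∈ D, x ≠ 0 → ∃ y ∈ D, x * y = 1)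
    (hfin : ∀ m ∈ M, (Associates.mk '' {p : T | p ∈ M ∧ Irreducible p ∧ p ∣ m}).Finite)
    (hT : MCDFinite T)
    (hquot : ∃ F : Set T, F.Finite ∧ (∀ c ∈ F, c ∈ K ∧ c ≠ 0) ∧
      ∀ k ∈ K, k ≠ 0 → ∃ c ∈ F, ∃ d ∈ D, k = c * d) :
    MCDFinite (dPlusM D M) := by
  classical
  obtain ⟨F, hFfin, hFK, hFrep⟩ := hquot
  set R := dPlusM D M with hRdef
  -- the projection π : T → K with kernel M
  choose π hπK m' hm' hdecomp using hsum
  have hπM : ∀ t, t - π t ∈ M := by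
    intro t
    have e : t - π t = m' t := by linear_combination hdecomp t
    rw [e]; exact hm' t
  have huniq : ∀ t k, k ∈ K → t - k ∈ M → k = π t := by
    intro t k hk hm
    have h1 : k - π t ∈ K := K.sub_mem hk (hπK t)
    have h2 : k - π t ∈ M := by
      have h := M.sub_mem (hπM t) hm
      have e : (t - π t) - (t - k) = k - π t := by ring
      rwa [e] at h
    exact sub_eq_zero.mp (hKM _ h1 h2)
  have hπmul : ∀ a b : T, π (a * b) = π a * π b := by
    intro a b
    refine (huniq (a * b) _ (K.mul_mem (hπK a) (hπK b)) ?_).symm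
    have h := M.add_mem (M.mul_mem_right b (hπM a)) (M.mul_mem_left (π a) (hπM b))
    have e : (a - π a) * b + π a * (b - π b) = a * b - π a * π b := by ring
    rwa [e] at h
  have hπ1 : π 1 = 1 := (huniq 1 1 K.one_mem (by simpa using M.zero_mem)).symm
  have hπmemK : ∀ k, k ∈ K → π k = k := fun k hk =>
    (huniq k k hk (by simpa using M.zero_mem)).symm
  have hπzero : ∀ t, t ∈ M ↔ π t = 0 := by
    intro t
    constructor
    · intro h; exact (huniq t 0 K.zero_mem (by simpa using h)).symm
    · intro h; have := hπM t; rwa [h, sub_zero] at this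
  have hmemR : ∀ t : T, t ∈ R ↔ π t ∈ D := by
    intro t
    constructor
    · rintro ⟨d, hd, m, hm, rfl⟩
      have : d = π (d + m) := huniq (d + m) d (hDK hd) (by simpa using hm)
      rw [← this]; exact hd
    · intro h; exact ⟨π t, h, t - π t, hπM t, by ring⟩
  have hπu : ∀ u : T, IsUnit u → π u ≠ 0 := by
    intro u hu h0
    obtain ⟨u', rfl⟩ := hu
    have h1 : π ((u' : T) * ((u'⁻¹ : Tˣ) : T)) = 1 := by rw [Units.mul_inv]; exact hπ1
    rw [hπmul, h0, zero_mul] at h1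
    exact zero_ne_one h1
  have hRunit : ∀ u : T, IsUnit u → π u ∈ D → ∃ hu : u ∈ R, IsUnit (⟨u, hu⟩ : ↥R) := by
    intro u hu hd
    have hu0 : π u ≠ 0 := hπu u hu
    obtain ⟨u', rfl⟩ := hu
    obtain ⟨y, hy, hxy⟩ := hD _ hd hu0
    have h2 : π (u' : T) * π ((u'⁻¹ : Tˣ) : T) = 1 := by
      rw [← hπmul, Units.mul_inv]; exact hπ1
    have h3 : π ((u'⁻¹ : Tˣ) : T) = y := mul_left_cancel₀ hu0 (h2.trans hxy.symm)
    have hmemu : (u' : T) ∈ R := (hmemR _).mpr hd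
    have hmemv : ((u'⁻¹ : Tˣ) : T) ∈ R := (hmemR _).mpr (by rw [h3]; exact hy)
    refine ⟨hmemu, ⟨⟨⟨_, hmemu⟩, ⟨_, hmemv⟩, ?_, ?_⟩, rfl⟩⟩
    · exact Subtype.ext (by simpa using u'.mul_inv)
    · exact Subtype.ext (by simpa using u'.inv_mul)
  have hdvdR : ∀ c x : ↥R, π (c : T) ≠ 0 → (c : T) ∣ (x : T) → c ∣ x := by
    intro c x hc hdvd
    obtain ⟨t, ht⟩ := hdvd
    have hcd : π (c : T) ∈ D := (hmemR _).mp c.2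
    obtain ⟨y, hy, hxy⟩ := hD _ hcd hc
    have h1 : π (x : T) = π (c : T) * π t := by rw [ht, hπmul]
    have hπt : π t = π (x : T) * y := by
      calc π t = (π (c:T) * y) * π t := by rw [hxy, one_mul]
      _ = (π (c:T) * π t) * y := by ring
      _ = π (x : T) * y := by rw [← h1]
    have htR : t ∈ R := by
      rw [hmemR, hπt]
      exact D.mul_mem ((hmemR _).mp x.2) hy
    exact ⟨⟨t, htR⟩, Subtype.ext ht⟩
  -- start of main argument
  intro S hSfin hSne
  rcases S.eq_empty_or_nonempty with rfl | ⟨s₁, hs₁⟩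
  · refine Set.Finite.subset (Set.finite_singleton (Associates.mk 0)) ?_
    rintro x ⟨c, hc, rfl⟩
    have h0 : Associated c 0 := hc.2 0 (by simp) (dvd_zero c)
    rw [(associated_zero_iff_eq_zero c).mp h0]
    exact Set.mem_singleton _
  set 𝒞 := {c : ↥R | IsMCD S c} with h𝒞
  have hs₁0 : (s₁ : T) ≠ 0 := fun h => hSne s₁ hs₁ (by exact_mod_cast h)
  have hc0 : ∀ c ∈ 𝒞, (c : T) ≠ 0 := by
    intro c hc h0
    have hcz : c = 0 := by exact_mod_cast h0
    exact hSne s₁ hs₁ (zero_dvd_iff.mp (hcz ▸ hc.1 s₁ hs₁))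
  set S' : Set T := Subtype.val '' S with hST
  have hSTfin : S'.Finite := hSfin.image _
  have hSTne : ∀ t ∈ S', t ≠ 0 := by
    rintro t ⟨s, hs, rfl⟩ h
    exact hSne s hs (by exact_mod_cast h)
  have hA : (Associates.mk '' {c : T | IsMCD S' c}).Finite := hT S' hSTfin hSTne
  set B : Set (Associates T) :=
    Associates.mk '' {p : T | p ∈ M ∧ Irreducible p ∧ p ∣ (s₁ : T)} with hBdef
  have hB : B.Finite := by
    by_cases h : (s₁ : T) ∈ M
    · exact hfin _ h
    · refine Set.Finite.subset Set.finite_empty ?_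
      rintro x ⟨p, ⟨hpM, _, hpd⟩, rfl⟩
      obtain ⟨t, ht⟩ := hpd
      exact absurd (ht ▸ M.mul_mem_right t hpM) h
  -- Part I: finiteness of the set of T-classes of R-MCDs
  have hfT : ((fun c : ↥R => Associates.mk (c : T)) '' 𝒞).Finite := by
    set A : Set (Associates T) := Associates.mk '' {c : T | IsMCD S' c} with hAdef
    have h2fin : {x : Associates T | ∃ a ∈ A, ∃ b ∈ B, x * b = a}.Finite := by
      have hsub : {x : Associates T | ∃ a ∈ A, ∃ b ∈ B, x * b = a} ⊆
          ⋃ a ∈ A, ⋃ b ∈ B, {x | x * b = a} := by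
        rintro x ⟨a, ha, b, hb, h⟩
        exact Set.mem_biUnion ha (Set.mem_biUnion hb h)
      refine Set.Finite.subset (hA.biUnion fun a ha => hB.biUnion fun b hb => ?_) hsub
      refine Set.Subsingleton.finite ?_
      intro x hx y hy
      have hb0 : b ≠ 0 := by
        obtain ⟨p, ⟨hpM, hpirr, _⟩, rfl⟩ := hb
        exact Associates.mk_ne_zero.mpr hpirr.ne_zero
      exact mul_right_cancel₀ hb0 (hx.trans hy.symm)
    refine Set.Finite.subset ((hA.union h2fin).subset ?_) (le_refl _)
    rintro x ⟨c, hc, rfl⟩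
    have hc0' : (c : T) ≠ 0 := hc0 c hc
    obtain ⟨hcdiv, hcmax⟩ := hc
    have hcz : c ≠ 0 := fun h => hc0' (by rw [h]; exact_mod_cast rfl)
    -- (†) : any common R-divisor of the quotients is a unit of R
    have htrick : ∀ w' : ↥R, (∀ s ∈ S, ∃ t : ↥R, s = c * t ∧ w' ∣ t) → IsUnit w' := by
      intro w' hw'
      have hdvd : ∀ s ∈ S, c * w' ∣ s := by
        intro s hs
        obtain ⟨t, ht, r, rfl⟩ := hw' s hs
        exact ⟨r, by rw [ht]; ring⟩
      obtain ⟨u, hu⟩ := hcmax (c * w') hdvd ⟨w', rfl⟩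
      have : (u : ↥R) = w' := mul_left_cancel₀ hcz hu
      exact this ▸ u.isUnit
    -- (‡1) : common T-divisors of the quotients outside M are units of T
    have hout : ∀ w' : T, (∀ s ∈ S, ∃ t : ↥R, (s : T) = (c : T) * t ∧ w' ∣ (t : T)) →
        w' ∉ M → IsUnit w' := by
      intro w' hcom hM
      have hπw : π w' ≠ 0 := fun h => hM ((hπzero w').mpr h)
      obtain ⟨y, hyK, hxy⟩ := hK _ (hπK w') hπw
      have hy0 : y ≠ 0 := by rintro rfl; rw [mul_zero] at hxy; exact zero_ne_one hxy
      have hyu : IsUnit y := by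
        obtain ⟨z, hz, hyz⟩ := hK y hyK hy0
        exact IsUnit.of_mul_eq_one _ hyz
      set w₁ := w' * y with hw₁
      have hassoc : Associated w' w₁ := ⟨hyu.unit, by rw [hyu.unit_spec]⟩
      have hπw₁ : π w₁ = 1 := by rw [hw₁, hπmul, hπmemK y hyK, hxy]
      have hw₁R : w₁ ∈ R := (hmemR _).mpr (by rw [hπw₁]; exact D.one_mem)
      have hdvd1 : ∀ s ∈ S, ∃ t : ↥R, s = c * t ∧ (⟨w₁, hw₁R⟩ : ↥R) ∣ t := by
        intro s hs
        obtain ⟨t, ht, hwt⟩ := hcom s hs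
        refine ⟨t, Subtype.ext (by push_cast; exact ht), ?_⟩
        exact hdvdR ⟨w₁, hw₁R⟩ t (by rw [hπw₁]; exact one_ne_zero)
          (hassoc.symm.dvd.trans hwt)
      have hu₁ : IsUnit w₁ := (htrick _ hdvd1).map R.subtype
      exact (hassoc.symm.isUnit hu₁)
    -- (‡2) : a common T-divisor in M whose cofactors stay in M is impossible
    have hinM : ∀ w' : T, w' ∈ M →
        (∀ s ∈ S, ∃ t : ↥R, (s : T) = (c : T) * t ∧ ∃ v ∈ M, (t : T) = w' * v) → False := by
      intro w' hw'M hcom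
      have hw'R : w' ∈ R := mem_dPlusM_of_mem_ideal D M hw'M
      have hu : IsUnit (⟨w', hw'R⟩ : ↥R) := by
        apply htrick
        intro s hs
        obtain ⟨t, ht, v, hvM, hv⟩ := hcom s hs
        exact ⟨t, Subtype.ext (by push_cast; exact ht),
          ⟨⟨v, mem_dPlusM_of_mem_ideal D M hvM⟩, Subtype.ext (by push_cast; exact hv)⟩⟩
      have hu' : IsUnit w' := hu.map R.subtype
      exact hMmax.ne_top (M.eq_top_of_isUnit_mem hw'M hu')
    -- KEY : any nonunit common T-divisor of the quotients is irreducible and in M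
    have hkey : ∀ w : T, (∀ s ∈ S, ∃ t : ↥R, (s : T) = (c : T) * t ∧ w ∣ (t : T)) →
        ¬IsUnit w → w ∈ M ∧ Irreducible w := by
      intro w hcom hw
      have hwM : w ∈ M := by
        by_contra h
        exact hw (hout w hcom h)
      refine ⟨hwM, ⟨hw, ?_⟩⟩
      intro w₁ w₂ hw12
      by_contra hcon
      push_neg at hcon
      obtain ⟨h1, h2⟩ := hcon
      have hcom1 : ∀ s ∈ S, ∃ t : ↥R, (s : T) = (c : T) * t ∧ w₁ ∣ (t : T) := by
        intro s hs
        obtain ⟨t, ht, hwt⟩ := hcom s hs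
        exact ⟨t, ht, dvd_trans ⟨w₂, hw12⟩ hwt⟩
      have hcom2 : ∀ s ∈ S, ∃ t : ↥R, (s : T) = (c : T) * t ∧ w₂ ∣ (t : T) := by
        intro s hs
        obtain ⟨t, ht, hwt⟩ := hcom s hs
        exact ⟨t, ht, dvd_trans ⟨w₁, by rw [hw12]; ring⟩ hwt⟩
      have hw₁M : w₁ ∈ M := by
        by_contra h; exact h1 (hout w₁ hcom1 h)
      have hw₂M : w₂ ∈ M := by
        by_contra h; exact h2 (hout w₂ hcom2 h)
      apply hinM w₁ hw₁M
      intro s hs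
      obtain ⟨t, ht, v, hv⟩ := hcom s hs
      exact ⟨t, ht, w₂ * v, M.mul_mem_right v hw₂M, by rw [hv, hw12]; ring⟩
    -- classification of the T-class of c
    by_cases hP : ∃ w : T, (∀ s ∈ S, ∃ t : ↥R, (s : T) = (c : T) * t ∧ w ∣ (t : T)) ∧ ¬IsUnit w
    · -- c * w is a T-MCD of S' and w is an irreducible in M dividing s₁
      obtain ⟨w, hcom, hwnu⟩ := hP
      obtain ⟨hwM, hwirr⟩ := hkey w hcom hwnu
      have hMCD : IsMCD S' ((c : T) * w) := by
        constructor
        · rintro t ⟨s, hs, rfl⟩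
          obtain ⟨ts, hts, v, hv⟩ := hcom s hs
          exact ⟨v, by rw [hts, hv]; ring⟩
        · intro d hd hcd
          obtain ⟨u, hu⟩ := hcd
          have hcomu : ∀ s ∈ S, ∃ t : ↥R, (s : T) = (c : T) * t ∧ w * u ∣ (t : T) := by
            intro s hs
            obtain ⟨ts, hts, hwts⟩ := hcom s hs
            obtain ⟨v, hv⟩ := hd (s : T) ⟨s, hs, rfl⟩
            refine ⟨ts, hts, ⟨v, ?_⟩⟩
            apply mul_left_cancel₀ hc0'
            rw [← hts, hv, hu]; ring
          have hUu : IsUnit u := by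
            by_cases hwu : IsUnit (w * u)
            · exact isUnit_of_mul_isUnit_right hwu
            · rcases (hkey _ hcomu hwu).2.isUnit_or_isUnit rfl with h | h
              · exact absurd h hwnu
              · exact h
          exact ⟨hUu.unit, by rw [hUu.unit_spec, ← hu]⟩
      have hwds₁ : w ∣ (s₁ : T) := by
        obtain ⟨ts, hts, v, hv⟩ := hcom s₁ hs₁
        exact ⟨(c : T) * v, by rw [hts, hv]; ring⟩
      refine Or.inr ⟨Associates.mk ((c : T) * w), ⟨_, hMCD, rfl⟩,
        Associates.mk w, ⟨w, ⟨hwM, hwirr, hwds₁⟩, rfl⟩, ?_⟩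
      rw [Associates.mk_mul_mk]
    · -- c itself is a T-MCD of S'
      have hMCD : IsMCD S' (c : T) := by
        constructor
        · rintro t ⟨s, hs, rfl⟩
          obtain ⟨ts, hts⟩ := hcdiv s hs
          exact ⟨(ts : T), by exact_mod_cast congrArg Subtype.val hts⟩
        · intro d hd hcd
          obtain ⟨u, hu⟩ := hcd
          have hcomu : ∀ s ∈ S, ∃ t : ↥R, (s : T) = (c : T) * t ∧ u ∣ (t : T) := by
            intro s hs
            obtain ⟨ts, hts⟩ := hcdiv s hs
            obtain ⟨v, hv⟩ := hd (s : T) ⟨s, hs, rfl⟩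
            have hts' : (s : T) = (c : T) * (ts : T) := by exact_mod_cast congrArg Subtype.val hts
            refine ⟨ts, hts', ⟨v, ?_⟩⟩
            apply mul_left_cancel₀ hc0'
            rw [← hts', hv, hu]; ring
          have hUu : IsUnit u := by
            by_contra h
            exact hP ⟨u, hcomu, h⟩
          exact ⟨hUu.unit, by rw [hUu.unit_spec, ← hu]⟩
      exact Or.inl ⟨_, hMCD, rfl⟩
  -- Part II: from finiteness of T-classes to finiteness of R-classes
  haveI := hfT.to_subtype
  have hcover : Associates.mk '' 𝒞 ⊆
      ⋃ (a : ↑((fun c : ↥R => Associates.mk (c : T)) '' 𝒞)),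
        Associates.mk '' {c : ↥R | c ∈ 𝒞 ∧ Associates.mk (c : T) = (a : Associates T)} := by
    rintro x ⟨c, hc, rfl⟩
    exact Set.mem_iUnion.mpr ⟨⟨_, ⟨c, hc, rfl⟩⟩, ⟨c, ⟨hc, rfl⟩, rfl⟩⟩
  refine Set.Finite.subset (Set.finite_iUnion ?_) hcover
  rintro ⟨a, c₀, hc₀, rfl⟩
  have hc₀0 : (c₀ : T) ≠ 0 := hc0 c₀ hc₀
  have hsub : Associates.mk '' {c : ↥R | c ∈ 𝒞 ∧ Associates.mk (c : T) = Associates.mk (c₀ : T)} ⊆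
      ⋃ cF ∈ F, Associates.mk ''
        {c : ↥R | ∃ u : Tˣ, (c₀ : T) * u = (c : T) ∧ ∃ d ∈ D, π u = cF * d} := by
    rintro x ⟨c, ⟨hc𝒞, hmk⟩, rfl⟩
    have hassoc : Associated (c₀ : T) (c : T) := Associates.mk_eq_mk_iff_associated.mp hmk.symm
    obtain ⟨u, hu⟩ := hassoc
    have hπu0 : π (u : T) ≠ 0 := hπu _ u.isUnit
    obtain ⟨cF, hcF, d, hdD, hrep⟩ := hFrep _ (hπK _) hπu0
    exact Set.mem_biUnion hcF ⟨c, ⟨u, hu, d, hdD, hrep⟩, rfl⟩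
  refine Set.Finite.subset (Set.Finite.biUnion hFfin fun cF hcF => ?_) hsub
  refine Set.Subsingleton.finite ?_
  rintro x ⟨c, ⟨u, hu, d, hdD, hrep⟩, rfl⟩ y ⟨c', ⟨u', hu', d', hdD', hrep'⟩, rfl⟩
  -- show the two R-classes agree
  have hπu0 : π (u : T) ≠ 0 := hπu _ u.isUnit
  obtain ⟨hcFK, hcF0⟩ := hFK cF hcF
  have hd0 : d ≠ 0 := by
    rintro rfl
    rw [mul_zero] at hrep
    exact hπu0 hrep
  obtain ⟨yd, hydD, hdy⟩ := hD d hdD hd0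
  set v : Tˣ := u⁻¹ * u' with hv
  have huv : (u : T) * (v : T) = (u' : T) := by
    rw [hv]
    push_cast
    rw [← mul_assoc, Units.mul_inv, one_mul]
  have hπveq : π (u : T) * π (v : T) = π (u' : T) := by rw [← hπmul, huv]
  have hdveq : d * π (v : T) = d' := by
    apply mul_left_cancel₀ hcF0
    rw [← mul_assoc, ← hrep, hπveq, hrep']
  have hπvD : π (v : T) ∈ D := by
    have : π (v : T) = yd * d' := by
      calc π (v : T) = (d * yd) * π (v : T) := by rw [mul_comm d yd] at hdy ⊢; rw [hdy, one_mul]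
      _ = yd * (d * π (v : T)) := by ring
      _ = yd * d' := by rw [hdveq]
    rw [this]
    exact D.mul_mem hydD hdD'
  obtain ⟨hvR, hvUnit⟩ := hRunit (v : T) v.isUnit hπvD
  have hcc' : c * ⟨(v : T), hvR⟩ = c' := by
    apply Subtype.ext
    push_cast
    rw [← hu, ← hu', mul_assoc, huv]
  have : Associated c c' := ⟨hvUnit.unit, by rw [hvUnit.unit_spec]; exact hcc'⟩
  exact Associates.mk_eq_mk_iff_associated.mpr this
end

section
/- Let T be an integral domain of the form T = K + M, where K is a subfield of T, M is a nonzero maximal ideal of T, and every element of T is uniquely the sum of an element of K and an element of M. Let D be a subfield of K and let R be the subring D + M of T. Then for every m ∈ M, the element m is irreducible in R if and only if m is irreducible in T. -/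
/-- D + M construction: `T = K + M` with `K` a subfield of `T`, `M` a nonzero maximal
ideal, every element of `T` uniquely a sum of an element of `K` and an element of `M`,
`D` a subfield of `K`, and `R = D + M`. Then an element `m ∈ M` is irreducible in `R`
if and only if it is irreducible in `T`. -/
theorem dPlusM_irreducible_iff_of_mem_ideal
    {T : Type*} [CommRing T] [IsDomain T]
    (K : Subring T) (hK : ∀ x ∈ K, x ≠ 0 → ∃ y ∈ K, x * y = 1)
    (M : Ideal T) (hMmax : M.IsMaximal) (hMne : M ≠ ⊥)
    (hsum : ∀ t : T, ∃ k ∈ K, ∃ m ∈ M, t = k + m)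
    (hKM : ∀ x : T, x ∈ K → x ∈ M → x = 0)
    (D : Subring T) (hDK : D ≤ K) (hD : ∀ x ∈ D, x ≠ 0 → ∃ y ∈ D, x * y = 1)
    (m : T) (hm : m ∈ M) :
    Irreducible (⟨m, mem_dPlusM_of_mem_ideal D M hm⟩ : dPlusM D M) ↔ Irreducible m := by

  have key : ∀ x : dPlusM D M, IsUnit (x : T) → IsUnit x := by
    rintro ⟨x, d, hd, m', hm', rfl⟩ hx
    rw [isUnit_iff_exists_inv] at hx ⊢
    obtain ⟨b, hb⟩ := hx
    obtain ⟨k, hk, m'', hm'', rfl⟩ := hsum b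
    have hdk : d * k = 1 := by
      have h1 : d * k - 1 ∈ K := K.sub_mem (K.mul_mem (hDK hd) hk) K.one_mem
      have h2 : d * k - 1 ∈ M := by
        have heq : d * k - 1 = -(d * m'' + m' * k + m' * m'') := by
          linear_combination hb
        rw [heq]
        exact M.neg_mem (M.add_mem (M.add_mem (M.mul_mem_left d hm'')
          (M.mul_mem_right k hm')) (M.mul_mem_left m' hm''))
      exact sub_eq_zero.mp (hKM _ h1 h2)
    have hd0 : d ≠ 0 := by
      rintro rfl
      rw [zero_mul] at hdk
      exact zero_ne_one hdk
    obtain ⟨y, hy, hdy⟩ := hD d hd hd0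
    have hky : k = y := mul_left_cancel₀ hd0 (hdk.trans hdy.symm)
    refine ⟨⟨k + m'', k, hky ▸ hy, m'', hm'', rfl⟩, ?_⟩
    exact Subtype.ext hb
  constructor
  · intro h
    have hmT : m ∉ M → False := fun h' => h' hm
    have hmu : ¬ IsUnit m := fun hu => hMmax.ne_top (M.eq_top_of_isUnit_mem hm hu)
    refine ⟨hmu, ?_⟩
    have claim : ∀ a b : T, m = a * b → a ∈ M → IsUnit a ∨ IsUnit b := by
      intro a b heq ha
      obtain ⟨k, hk, m', hm', rfl⟩ := hsum b
      by_cases hk0 : k = 0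
      · subst hk0
        rw [zero_add] at heq
        have hAB : (⟨m, mem_dPlusM_of_mem_ideal D M hm⟩ : dPlusM D M) =
            ⟨a, mem_dPlusM_of_mem_ideal D M ha⟩ * ⟨m', mem_dPlusM_of_mem_ideal D M hm'⟩ :=
          Subtype.ext heq
        rcases h.isUnit_or_isUnit hAB with hu | hu
        · exact Or.inl (hu.map (dPlusM D M).subtype)
        · rw [zero_add]
          exact Or.inr (hu.map (dPlusM D M).subtype)
      · obtain ⟨y, hy, hky⟩ := hK k hk hk0
        have heq2 : m = (a * k) * (1 + y * m') := by
          linear_combination heq - a * m' * hky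
        have hAB : (⟨m, mem_dPlusM_of_mem_ideal D M hm⟩ : dPlusM D M) =
            ⟨a * k, mem_dPlusM_of_mem_ideal D M (M.mul_mem_right k ha)⟩ *
            ⟨1 + y * m', one_add_mem_dPlusM D M hm' y⟩ := Subtype.ext heq2
        rcases h.isUnit_or_isUnit hAB with hu | hu
        · exact Or.inl (isUnit_of_mul_isUnit_left (hu.map (dPlusM D M).subtype))
        · refine Or.inr ?_
          have hb : IsUnit (1 + y * m') := hu.map (dPlusM D M).subtype
          have hku : IsUnit k := IsUnit.of_mul_eq_one (a := k) y hky
          have : k + m' = k * (1 + y * m') := by linear_combination m' * hky.symm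
          rw [this]
          exact hku.mul hb
    intro a b heq
    have habM : a * b ∈ M := heq ▸ hm
    rcases hMmax.isPrime.mem_or_mem habM with ha | hb
    · exact claim a b heq ha
    · exact (claim b a (heq.trans (mul_comm a b)) hb).symm
  · intro h
    refine ⟨fun hu => h.not_isUnit (hu.map (dPlusM D M).subtype), ?_⟩
    rintro a b hab
    have heq : m = (a : T) * (b : T) := congrArg Subtype.val hab
    rcases h.isUnit_or_isUnit heq with hu | hu
    · exact Or.inl (key a hu)
    · exact Or.inr (key b hu)
end

section
/- Let T be an integral domain of the form T = K + M, where K is a subfield of T, M is a nonzero maximal ideal of T, and every element of T is uniquely the sum of an element of K and an element of M. Let D be a subfield of K and let R be the subring D + M of T. Then for all nonzero c₁, c₂ ∈ K and every nonzero m ∈ M, the elements c₁m and c₂m are associates in R if and only if c₁ and c₂ lie in the same coset of D* in K* (i.e., c₁/c₂ ∈ D). -/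
/-- D + M construction: `T = K + M` with `K` a subfield of `T`, `M` a nonzero maximal
ideal, every element of `T` uniquely a sum of an element of `K` and an element of `M`,
`D` a subfield of `K`, and `R = D + M`. For nonzero `c₁, c₂ ∈ K` and nonzero `m ∈ M`,
the elements `c₁ * m` and `c₂ * m` are associates in `R` if and only if `c₁` and `c₂`
lie in the same coset of `D*` in `K*`, i.e. `c₁ = c₂ * d` for some `d ∈ D`. -/
theorem dPlusM_associated_mul_iff
    {T : Type*} [CommRing T] [IsDomain T]
    (K : Subring T) (hK : ∀ x ∈ K, x ≠ 0 → ∃ y ∈ K, x * y = 1)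
    (M : Ideal T) (hMmax : M.IsMaximal) (hMne : M ≠ ⊥)
    (hsum : ∀ t : T, ∃ k ∈ K, ∃ m ∈ M, t = k + m)
    (hKM : ∀ x : T, x ∈ K → x ∈ M → x = 0)
    (D : Subring T) (hDK : D ≤ K) (hD : ∀ x ∈ D, x ≠ 0 → ∃ y ∈ D, x * y = 1)
    (c₁ c₂ m : T) (hc₁ : c₁ ∈ K) (hc₂ : c₂ ∈ K) (hc₁0 : c₁ ≠ 0) (hc₂0 : c₂ ≠ 0)
    (hm : m ∈ M) (hm0 : m ≠ 0) :
    Associated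
      (⟨c₁ * m, mem_dPlusM_of_mem_ideal D M (M.mul_mem_left c₁ hm)⟩ : dPlusM D M)
      (⟨c₂ * m, mem_dPlusM_of_mem_ideal D M (M.mul_mem_left c₂ hm)⟩ : dPlusM D M) ↔
    ∃ d ∈ D, c₁ = c₂ * d := by
  constructor
  · rintro ⟨u, hu⟩
    obtain ⟨d, hd, m', hm', hval⟩ := u.val.2
    have h1 : (c₁ * m) * (u.val : T) = c₂ * m := congrArg Subtype.val hu
    rw [hval] at h1
    have h2 : m * (c₁ * d + c₁ * m' - c₂) = 0 := by linear_combination h1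
    have h3 : c₁ * d + c₁ * m' - c₂ = 0 := by
      rcases mul_eq_zero.mp h2 with h | h
      · exact absurd h hm0
      · exact h
    have hKmem : c₁ * d - c₂ ∈ K := K.sub_mem (K.mul_mem hc₁ (hDK hd)) hc₂
    have hMmem : c₁ * d - c₂ ∈ M := by
      have hrw : c₁ * d - c₂ = -(c₁ * m') := by linear_combination h3
      rw [hrw]; exact M.neg_mem (M.mul_mem_left _ hm')
    have h0 : c₁ * d - c₂ = 0 := hKM _ hKmem hMmem
    have hd0 : d ≠ 0 := by
      rintro rfl
      exact hc₂0 (by linear_combination -h0)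
    obtain ⟨e, he, hde⟩ := hD d hd hd0
    exact ⟨e, he, by linear_combination e * h0 - c₁ * hde⟩
  · rintro ⟨d, hd, hcd⟩
    have hd0 : d ≠ 0 := by rintro rfl; rw [mul_zero] at hcd; exact hc₁0 hcd
    obtain ⟨e, he, hde⟩ := hD d hd hd0
    have heR : (e : T) ∈ dPlusM D M := ⟨e, he, 0, M.zero_mem, (add_zero e).symm⟩
    have hdR : (d : T) ∈ dPlusM D M := ⟨d, hd, 0, M.zero_mem, (add_zero d).symm⟩
    refine ⟨⟨⟨e, heR⟩, ⟨d, hdR⟩, ?_, ?_⟩, ?_⟩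
    · exact Subtype.ext (by simpa using by linear_combination hde : (e * d : T) = 1)
    · exact Subtype.ext (by simpa using hde : (d * e : T) = 1)
    · exact Subtype.ext (by
        show c₁ * m * e = c₂ * m
        linear_combination m * e * hcd + c₂ * m * hde)
end

section
/- Let T be an integral domain of the form T = K + M, where K is a subfield of T, M is a nonzero maximal ideal of T, and every element of T is uniquely the sum of an element of K and an element of M. Let D be a subfield of K and let R be the subring D + M of T. For x = k + m ∈ T (with k ∈ K, m ∈ M), define x̂ = m if k = 0 and x̂ = 1 + k⁻¹m if k ≠ 0. Then for all x, y ∈ T with x ∉ M, if x divides y in T, then x̂ divides ŷ in R. -/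
/-- D + M construction: `T = K + M` with `K` a subfield of `T`, `M` a nonzero maximal
ideal, every element of `T` uniquely a sum of an element of `K` and an element of `M`,
`D` a subfield of `K`, and `R = D + M`. For `x = kx + mx ∉ M` (so `kx ≠ 0`, with
inverse `kx'`) and `y = ky + my`, write `x̂ = 1 + kx'*mx` and `ŷ = my` if `ky = 0`
(resp. `ŷ = 1 + ky'*my` if `ky` has inverse `ky'`). If `x` divides `y` in `T`, then
`x̂` divides `ŷ` in `R`. -/
theorem dPlusM_hat_dvd_hat_of_dvd
    {T : Type*} [CommRing T] [IsDomain T]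
    (K : Subring T) (hK : ∀ x ∈ K, x ≠ 0 → ∃ y ∈ K, x * y = 1)
    (M : Ideal T) (hMmax : M.IsMaximal) (hMne : M ≠ ⊥)
    (hsum : ∀ t : T, ∃ k ∈ K, ∃ m ∈ M, t = k + m)
    (hKM : ∀ x : T, x ∈ K → x ∈ M → x = 0)
    (D : Subring T) (hDK : D ≤ K) (hD : ∀ x ∈ D, x ≠ 0 → ∃ y ∈ D, x * y = 1)
    (x y kx mx ky my kx' : T)
    (hkx : kx ∈ K) (hmx : mx ∈ M) (hxdec : x = kx + mx)
    (hky : ky ∈ K) (hmy : my ∈ M) (hydec : y = ky + my)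
    (hxM : x ∉ M) (hkx' : kx * kx' = 1) (hdvd : x ∣ y) :
    (ky = 0 →
      (⟨1 + kx' * mx, one_add_mem_dPlusM D M hmx kx'⟩ : dPlusM D M) ∣
        ⟨my, mem_dPlusM_of_mem_ideal D M hmy⟩) ∧
    (∀ ky' : T, ky * ky' = 1 →
      (⟨1 + kx' * mx, one_add_mem_dPlusM D M hmx kx'⟩ : dPlusM D M) ∣
        ⟨1 + ky' * my, one_add_mem_dPlusM D M hmy ky'⟩) := by
  obtain ⟨c, hc⟩ := hdvd
  obtain ⟨kc, hkc, mc, hmc, hcdec⟩ := hsum c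
  have hkxkc : kx * kc = ky := by
    have hmem : ky - kx * kc ∈ M := by
      have h2 : ky - kx * kc = kx * mc + mx * (kc + mc) - my := by
        have hc2 := hc
        rw [hcdec, hxdec] at hc2
        linear_combination hc2 - hydec
      rw [h2]
      exact M.sub_mem (M.add_mem (M.mul_mem_left kx hmc)
        (M.mul_mem_right _ hmx)) hmy
    have := hKM _ (K.sub_mem hky (K.mul_mem hkx hkc)) hmem
    linear_combination -this
  constructor
  · intro hky0
    have hcM : c ∈ M := by
      have hyM : x * c ∈ M := by
        rw [← hc, hydec, hky0, zero_add]; exact hmy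
      rcases hMmax.isPrime.mem_or_mem hyM with h | h
      · exact absurd h hxM
      · exact h
    refine ⟨⟨kx * c, mem_dPlusM_of_mem_ideal D M (M.mul_mem_left kx hcM)⟩, ?_⟩
    ext
    show my = (1 + kx' * mx) * (kx * c)
    have : y = my := by rw [hydec, hky0, zero_add]
    rw [← this, hc, hxdec]
    linear_combination (-(mx * c)) * hkx'
  · intro ky' hky'
    refine ⟨⟨1 + kx * ky' * mc, one_add_mem_dPlusM D M hmc (kx * ky')⟩, ?_⟩
    ext
    show 1 + ky' * my = (1 + kx' * mx) * (1 + kx * ky' * mc)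
    have h1 : kx * ky' * kc = 1 := by
      rw [mul_comm kx ky', mul_assoc, hkxkc, mul_comm]; exact hky'
    rw [hydec] at hc
    rw [hxdec, hcdec] at hc
    linear_combination (-1 : T) * hky' + ky' * hc - (ky' * (kc + mc) * mx) * hkx' + (1 + kx' * mx) * h1
end
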